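/- arXiv:math/0612428 — 8 statements merged into one kernel-verified Lean document; each statement's English description precedes it below -/
import Mathlib

section
/- Let g : V → ℝ satisfy g(ξ) ≥ 1 for all ξ ∈ V, ∫_V 1/g(ξ) dξ < ∞, and suppose there is a constant C₀ such that sup_{y ∈ ξ+F} 1/g(y) ≤ C₀ · inf_{y ∈ ξ+F} 1/g(y) for every ξ ∈ Λ. Then there exists a constant C, independent of f, such that for every continuously differentiable f : V → ℂ one has ∑_{ξ∈Λ} |f(ξ)| ≤ C · ( ∫_V |f(ξ)| dξ + ∑_{i=1}^n sup_{ξ∈V} g(ξ)·‖∇_i f(ξ)‖ ), the inequality being read in [0,∞]. -/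
open MeasureTheory Pointwise
open scoped RealInnerProductSpace ENNReal NNReal

set_option maxHeartbeats 1000000 in
/-- Let `V = V₁ ⊕ … ⊕ V_n` be an orthogonal direct sum of finite-dimensional real inner
product spaces (realized here as pairwise orthogonal subspaces `W i` forming an internal direct
sum of `V`), `Λ` a lattice in `V`, and `F` a bounded measurable fundamental domain for `Λ`
containing `0`.  Let `g : V → ℝ` satisfy `g ≥ 1`, `∫_V 1/g < ∞`, and suppose `1/g` is
multiplicatively bounded on every translate `ξ + F`, `ξ ∈ Λ`, with a uniform constant `C₀`.
Then there is a constant `C`, independent of `f`, such that for every continuously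
differentiable `f : V → ℂ`,
`∑_{ξ∈Λ} |f(ξ)| ≤ C·(∫_V |f| + ∑ᵢ sup_{ξ∈V} g(ξ)·‖∇ᵢ f(ξ)‖)`, the inequality read in `[0,∞]`;
here `∇ᵢ f(ξ)` is the Fréchet derivative of `f` at `ξ` restricted to the summand `W i`. -/
theorem stmt0 {n : ℕ} {V : Type*} [NormedAddCommGroup V] [InnerProductSpace ℝ V]
    [FiniteDimensional ℝ V] [MeasurableSpace V] [BorelSpace V]
    (μ : Measure V) [μ.IsAddHaarMeasure]
    (W : Fin n → Submodule ℝ V)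
    (hW : DirectSum.IsInternal W)
    (hWorth : ∀ i j, i ≠ j → ∀ x ∈ W i, ∀ y ∈ W j, ⟪x, y⟫ = 0)
    (Λ : Submodule ℤ V) (hΛdisc : DiscreteTopology Λ) (hΛ : IsZLattice ℝ Λ)
    (F : Set V) (hFfund : IsAddFundamentalDomain Λ F μ)
    (hFbdd : Bornology.IsBounded F) (hFmeas : MeasurableSet F) (hF0 : (0 : V) ∈ F)
    (g : V → ℝ) (hg1 : ∀ ξ, 1 ≤ g ξ)
    (hgint : ∫⁻ ξ, ENNReal.ofReal (1 / g ξ) ∂μ < ⊤)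
    (C₀ : ℝ)
    (hC₀ : ∀ ξ ∈ Λ, ∀ y ∈ ξ +ᵥ F, ∀ z ∈ ξ +ᵥ F, 1 / g y ≤ C₀ * (1 / g z)) :
    ∃ C : ℝ≥0, ∀ f : V → ℂ, ContDiff ℝ 1 f →
      ∑' ξ : Λ, (‖f (ξ : V)‖₊ : ℝ≥0∞) ≤
        C * (∫⁻ ξ, (‖f ξ‖₊ : ℝ≥0∞) ∂μ +
          ∑ i : Fin n, ⨆ ξ : V,
            ENNReal.ofReal (g ξ * ‖(fderiv ℝ f ξ).comp (W i).subtypeL‖)) := by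
  classical
  haveI := hΛdisc
  haveI : MeasurableVAdd Λ V :=
    { measurable_const_vadd := fun c => (measurable_const_add (c : V)),
      measurable_vadd_const := fun x => (measurable_subtype_coe.add_const x) }
  haveI : VAddInvariantMeasure Λ V μ := ⟨fun c s _ => measure_preimage_add μ (c : V) s⟩
  -- a radius bound for F
  obtain ⟨R₀, hR₀⟩ := hFbdd.subset_closedBall 0
  set R : ℝ := max R₀ 1 with hRdef
  have hR1 : (1 : ℝ) ≤ R := le_max_right _ _
  have hR : (0 : ℝ) < R := lt_of_lt_of_le one_pos hR1
  have hFR : F ⊆ Metric.closedBall 0 R :=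
    hR₀.trans (Metric.closedBall_subset_closedBall (le_max_left _ _))
  have hFnorm : ∀ w ∈ F, ‖w‖ ≤ R := by
    intro w hw
    simpa [Metric.mem_closedBall, dist_zero_right] using hFR hw
  -- the measure of F
  set m : ℝ≥0∞ := μ F with hm
  have hm0 : m ≠ 0 := hFfund.measure_ne_zero (NeZero.ne μ)
  have hmtop : m ≠ ⊤ := by
    have : μ F ≤ μ (Metric.closedBall 0 R) := measure_mono hFR
    exact ne_top_of_le_ne_top (measure_closedBall_lt_top).ne this
  set mR : ℝ := m.toReal with hmRdef
  have hmR : 0 < mR := ENNReal.toReal_pos hm0 hmtop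
  have hmvadd : ∀ ξ : Λ, μ ((ξ : V) +ᵥ F) = m := by
    intro ξ; exact measure_vadd _ _ _
  -- C₀ ≥ 1
  have hg0 : ∀ ξ, (0 : ℝ) < g ξ := fun ξ => lt_of_lt_of_le one_pos (hg1 ξ)
  have h0F : (0 : V) ∈ (0 : V) +ᵥ F := by simpa using hF0
  have hC₀1 : (1 : ℝ) ≤ C₀ := by
    have h := hC₀ 0 (zero_mem Λ) 0 h0F 0 h0F
    have hpos : 0 < 1 / g 0 := by have := hg0 0; positivity
    nlinarith
  have hC₀0 : (0 : ℝ) < C₀ := lt_of_lt_of_le one_pos hC₀1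
  -- the weight integrals
  set h : V → ℝ≥0∞ := fun y => ENNReal.ofReal (1 / g y) with hhdef
  set J : ℝ≥0∞ := ∫⁻ y, h y ∂μ with hJdef
  have hJtop : J ≠ ⊤ := hgint.ne
  set b : Λ → ℝ≥0∞ := fun ξ' => ∫⁻ y in (ξ' : V) +ᵥ F, h y ∂μ with hbdef
  have hbJ : ∀ ξ', b ξ' ≤ J := fun ξ' => setLIntegral_le_lintegral _ _
  have hbsum : ∑' ξ' : Λ, b ξ' = J := (hFfund.lintegral_eq_tsum h).symm
  -- lattice points in balls are finite
  haveI : DiscreteTopology Λ.toAddSubgroup := hΛdisc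
  have hΛclosed : IsClosed (Λ : Set V) :=
    AddSubgroup.isClosed_of_discrete (H := Λ.toAddSubgroup)
  haveI hdiscset : DiscreteTopology ((Λ : Set V) : Type _) := hΛdisc
  have hNfin : (Metric.closedBall (0 : V) (5 * R) ∩ (Λ : Set V)).Finite :=
    Metric.finite_isBounded_inter_isClosed DiscreteTopology.isDiscrete Metric.isBounded_closedBall hΛclosed
  set N : ℕ := hNfin.toFinset.card with hNdef
  have hAfin : ∀ ζ : V, ({ξ' : Λ | ‖(ξ' : V) - ζ‖ ≤ 5 * R}).Finite := by
    intro ζ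
    have hfin : (Metric.closedBall ζ (5 * R) ∩ (Λ : Set V)).Finite :=
      Metric.finite_isBounded_inter_isClosed DiscreteTopology.isDiscrete Metric.isBounded_closedBall hΛclosed
    have heq : {ξ' : Λ | ‖(ξ' : V) - ζ‖ ≤ 5 * R} =
        (fun ξ' : Λ => (ξ' : V)) ⁻¹' (Metric.closedBall ζ (5 * R) ∩ (Λ : Set V)) := by
      ext ξ'
      simp [Metric.mem_closedBall, dist_eq_norm, ξ'.2]
    rw [heq]
    exact hfin.preimage Subtype.coe_injective.injOn
  have hcount : ∀ ζ : V, ζ ∈ Λ →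
      (∑' ξ' : Λ, (if ‖(ξ' : V) - ζ‖ ≤ 5 * R then (1 : ℝ≥0∞) else 0)) ≤ N := by
    intro ζ hζ
    have hA := hAfin ζ
    have h1 : (∑' ξ' : Λ, (if ‖(ξ' : V) - ζ‖ ≤ 5 * R then (1 : ℝ≥0∞) else 0)) =
        ∑ ξ' ∈ hA.toFinset, (if ‖(ξ' : V) - ζ‖ ≤ 5 * R then (1 : ℝ≥0∞) else 0) := by
      refine tsum_eq_sum fun ξ' hξ' => ?_
      rw [Set.Finite.mem_toFinset] at hξ'
      simp only [Set.mem_setOf_eq] at hξ'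
      simp [hξ']
    have h2 : ∑ ξ' ∈ hA.toFinset, (if ‖(ξ' : V) - ζ‖ ≤ 5 * R then (1 : ℝ≥0∞) else 0) =
        (hA.toFinset.card : ℝ≥0∞) := by
      rw [Finset.card_eq_sum_ones, Nat.cast_sum]
      refine Finset.sum_congr rfl fun ξ' hξ' => ?_
      rw [Set.Finite.mem_toFinset] at hξ'
      simp only [Set.mem_setOf_eq] at hξ'
      simp [hξ']
    have h3 : hA.toFinset.card ≤ N := by
      refine Finset.card_le_card_of_injOn (fun ξ' => (ξ' : V) - ζ) ?_ ?_
      · intro ξ' hξ'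
        rw [Finset.mem_coe, Set.Finite.mem_toFinset] at hξ'
        simp only [Set.mem_setOf_eq] at hξ'
        rw [Finset.mem_coe, Set.Finite.mem_toFinset]
        exact ⟨by simpa [Metric.mem_closedBall, dist_eq_norm] using hξ',
          sub_mem ξ'.2 hζ⟩
      · intro x _ y _ hxy
        have : (x : V) = (y : V) := by
          have := sub_left_injective hxy
          exact this
        exact Subtype.coe_injective this
    rw [h1, h2]
    exact_mod_cast h3
  -- the local averages of the weight
  set a : Λ → ℝ≥0∞ :=
    fun ξ => ∑' ξ' : Λ, (if ‖(ξ' : V) - (ξ : V)‖ ≤ 5 * R then b ξ' else 0) with hadef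
  have hba : ∀ ξ ξ' : Λ, ‖(ξ' : V) - (ξ : V)‖ ≤ 5 * R → b ξ' ≤ a ξ := by
    intro ξ ξ' hle
    have := ENNReal.le_tsum (f := fun ξ'' : Λ =>
      (if ‖(ξ'' : V) - (ξ : V)‖ ≤ 5 * R then b ξ'' else 0)) ξ'
    simpa [hle] using this
  have hatop : ∀ ξ : Λ, a ξ ≠ ⊤ := by
    intro ξ
    have h1 : a ξ ≤ J * N := by
      calc a ξ ≤ ∑' ξ' : Λ, J * (if ‖(ξ' : V) - (ξ : V)‖ ≤ 5 * R then (1 : ℝ≥0∞) else 0) := by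
            refine ENNReal.tsum_le_tsum fun ξ' => ?_
            by_cases hc : ‖(ξ' : V) - (ξ : V)‖ ≤ 5 * R <;> simp [hc, hbJ ξ']
        _ = J * ∑' ξ' : Λ, (if ‖(ξ' : V) - (ξ : V)‖ ≤ 5 * R then (1 : ℝ≥0∞) else 0) :=
            ENNReal.tsum_mul_left
        _ ≤ J * N := mul_le_mul_right (hcount (ξ : V) ξ.2) J
    exact ne_top_of_le_ne_top (by finiteness) h1
  have hasum : ∑' ξ : Λ, a ξ ≤ N * J := by
    have hswap : ∑' ξ : Λ, a ξ =
        ∑' ξ' : Λ, ∑' ξ : Λ, (if ‖(ξ' : V) - (ξ : V)‖ ≤ 5 * R then b ξ' else 0) := by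
      rw [hadef]
      exact ENNReal.tsum_comm
    rw [hswap]
    have hinner : ∀ ξ' : Λ, ∑' ξ : Λ, (if ‖(ξ' : V) - (ξ : V)‖ ≤ 5 * R then b ξ' else 0)
        ≤ b ξ' * N := by
      intro ξ'
      have h1 : ∀ ξ : Λ, (if ‖(ξ' : V) - (ξ : V)‖ ≤ 5 * R then b ξ' else 0) =
          b ξ' * (if ‖(ξ : V) - (ξ' : V)‖ ≤ 5 * R then (1 : ℝ≥0∞) else 0) := by
        intro ξ
        rw [norm_sub_rev]
        by_cases hc : ‖(ξ : V) - (ξ' : V)‖ ≤ 5 * R <;> simp [hc]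
      calc ∑' ξ : Λ, (if ‖(ξ' : V) - (ξ : V)‖ ≤ 5 * R then b ξ' else 0)
          = b ξ' * ∑' ξ : Λ, (if ‖(ξ : V) - (ξ' : V)‖ ≤ 5 * R then (1 : ℝ≥0∞) else 0) := by
            rw [← ENNReal.tsum_mul_left]
            exact tsum_congr h1
        _ ≤ b ξ' * N := mul_le_mul_right (hcount (ξ' : V) ξ'.2) _
    calc ∑' ξ' : Λ, ∑' ξ : Λ, (if ‖(ξ' : V) - (ξ : V)‖ ≤ 5 * R then b ξ' else 0)
        ≤ ∑' ξ' : Λ, b ξ' * N := ENNReal.tsum_le_tsum hinner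
      _ = J * N := by rw [ENNReal.tsum_mul_right, hbsum]
      _ = N * J := mul_comm _ _
  -- the covered set is dense
  set U : Set V := ⋃ ξ' : Λ, ((ξ' : V) +ᵥ F) with hUdef
  have hUdense : Dense U := by
    have hae : ∀ᵐ x ∂μ, x ∈ U := by
      filter_upwards [hFfund.ae_covers] with x hx
      obtain ⟨ξ, hξ⟩ := hx
      refine Set.mem_iUnion.2 ⟨-ξ, ?_⟩
      refine Set.mem_vadd_set.2 ⟨ξ +ᵥ x, hξ, ?_⟩
      show ((-ξ : Λ) : V) + ((ξ : V) + x) = x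
      simp
    have := Measure.dense_of_ae (μ := μ) hae
    simpa using this
  -- the constant
  set q : ℝ≥0∞ := ENNReal.ofReal (C₀ / mR * R) with hqdef
  have hqtop : q ≠ ⊤ := ENNReal.ofReal_ne_top
  set c₂ : ℝ≥0∞ := q * N * J with hc₂def
  have hc₂top : c₂ ≠ ⊤ := by finiteness
  have hminvtop : (m⁻¹ : ℝ≥0∞) ≠ ⊤ := ENNReal.inv_ne_top.2 hm0
  refine ⟨1 + (m⁻¹ + c₂).toNNReal, ?_⟩
  set C : ℝ≥0 := 1 + (m⁻¹ + c₂).toNNReal with hCdef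
  have hCcoe : (C : ℝ≥0∞) = 1 + (m⁻¹ + c₂) := by
    rw [hCdef, ENNReal.coe_add, ENNReal.coe_toNNReal (by finiteness), ENNReal.coe_one]
  have hCm : (m⁻¹ : ℝ≥0∞) ≤ C := by
    rw [hCcoe]; exact le_self_add.trans le_add_self
  have hCc₂ : c₂ ≤ (C : ℝ≥0∞) := by
    rw [hCcoe]; exact le_add_self.trans le_add_self
  have hC0 : (C : ℝ≥0∞) ≠ 0 := by
    have h1 : (1 : ℝ≥0∞) ≤ C := by rw [hCcoe]; exact le_self_add
    exact (zero_lt_one.trans_le h1).ne'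
  intro f hf
  set Sup : Fin n → ℝ≥0∞ := fun i => ⨆ z : V,
      ENNReal.ofReal (g z * ‖(fderiv ℝ f z).comp (W i).subtypeL‖) with hSupdef
  set I : ℝ≥0∞ := ∫⁻ ξ, (‖f ξ‖₊ : ℝ≥0∞) ∂μ with hIdef
  show ∑' ξ : Λ, (‖f (ξ : V)‖₊ : ℝ≥0∞) ≤ C * (I + ∑ i, Sup i)
  by_cases hfin : I ≠ ⊤ ∧ ∀ i, Sup i ≠ ⊤
  swap
  · have : I + ∑ i, Sup i = ⊤ := by
      rcases not_and_or.1 hfin with hI | hS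
      · simp [not_not.1 hI]
      · push_neg at hS
        obtain ⟨i, hi⟩ := hS
        have : ∑ i, Sup i = ⊤ := by
          apply ENNReal.sum_eq_top.2 ⟨i, Finset.mem_univ i, hi⟩
        simp [this]
    rw [this, ENNReal.mul_top hC0]
    exact le_top
  obtain ⟨hItop, hSuptop⟩ := hfin
  set S : ℝ := ∑ i, (Sup i).toReal with hSdef
  have hS0 : 0 ≤ S := Finset.sum_nonneg fun i _ => ENNReal.toReal_nonneg
  -- gradient bound
  have hfam : OrthogonalFamily ℝ (fun i => W i) (fun i => (W i).subtypeₗᵢ) := by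
    intro i j hij v w
    exact hWorth i j hij v v.2 w w.2
  have hGrad : ∀ z : V, ‖fderiv ℝ f z‖ ≤ S * (1 / g z) := by
    set e := hW.isometryL2OfOrthogonalFamily hfam with hedef
    intro z
    have hgz := hg0 z
    have hnn : (0 : ℝ) ≤ S * (1 / g z) :=
      mul_nonneg hS0 (one_div_nonneg.2 hgz.le)
    refine ContinuousLinearMap.opNorm_le_bound _ hnn fun v => ?_
    have hv : ∑ i, ((e v i : V)) = v := by
      have h1 := hW.isometryL2OfOrthogonalFamily_symm_apply hfam (e v)
      rw [e.symm_apply_apply] at h1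
      exact h1.symm
    have hnormi : ∀ i, ‖e v i‖ ≤ ‖v‖ := by
      intro i
      have h2 : ‖e v‖ = ‖v‖ := e.norm_map v
      have h3 : ‖e v i‖ ^ 2 ≤ ‖e v‖ ^ 2 := by
        rw [PiLp.norm_sq_eq_of_L2]
        exact Finset.single_le_sum (f := fun i => ‖e v i‖ ^ 2)
          (fun i _ => sq_nonneg _) (Finset.mem_univ i)
      rw [h2] at h3
      nlinarith [norm_nonneg (e v i), norm_nonneg v, h3]
    have hDi : ∀ i, ‖(fderiv ℝ f z).comp (W i).subtypeL‖ ≤ (Sup i).toReal * (1 / g z) := by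
      intro i
      have h4 : ENNReal.ofReal (g z * ‖(fderiv ℝ f z).comp (W i).subtypeL‖) ≤ Sup i :=
        le_iSup (fun z : V =>
          ENNReal.ofReal (g z * ‖(fderiv ℝ f z).comp (W i).subtypeL‖)) z
      have h5 : g z * ‖(fderiv ℝ f z).comp (W i).subtypeL‖ ≤ (Sup i).toReal := by
        have h6 := ENNReal.toReal_mono (hSuptop i) h4
        rwa [ENNReal.toReal_ofReal (mul_nonneg (hg0 z).le
          (norm_nonneg ((fderiv ℝ f z).comp (W i).subtypeL)))] at h6
      rw [mul_one_div]
      rw [le_div_iff₀ hgz]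
      linarith [h5]
    calc ‖(fderiv ℝ f z) v‖ = ‖∑ i, (fderiv ℝ f z) ((e v i : V))‖ := by
          rw [← map_sum, hv]
      _ ≤ ∑ i, ‖(fderiv ℝ f z) ((e v i : V))‖ := norm_sum_le _ _
      _ ≤ ∑ i, (Sup i).toReal * (1 / g z) * ‖v‖ := by
          refine Finset.sum_le_sum fun i _ => ?_
          have happ : (fderiv ℝ f z) ((e v i : V)) =
              ((fderiv ℝ f z).comp (W i).subtypeL) (e v i) := rfl
          rw [happ]
          calc ‖((fderiv ℝ f z).comp (W i).subtypeL) (e v i)‖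
              ≤ ‖(fderiv ℝ f z).comp (W i).subtypeL‖ * ‖e v i‖ :=
                ContinuousLinearMap.le_opNorm _ _
            _ ≤ (Sup i).toReal * (1 / g z) * ‖v‖ := by
                exact mul_le_mul (hDi i) (hnormi i) (norm_nonneg _)
                  (mul_nonneg ENNReal.toReal_nonneg (one_div_nonneg.2 hgz.le))
      _ = S * (1 / g z) * ‖v‖ := by
          rw [hSdef, ← Finset.sum_mul, ← Finset.sum_mul]
  -- bound on the ball around a lattice point
  have hBall : ∀ ξ : Λ, ∀ z ∈ Metric.closedBall (ξ : V) R,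
      ‖fderiv ℝ f z‖ ≤ S * (C₀ * (a ξ).toReal / mR) := by
    intro ξ
    have hcov : ∀ z' ∈ U ∩ Metric.ball (ξ : V) (2 * R),
        ‖fderiv ℝ f z'‖ ≤ S * (C₀ * (a ξ).toReal / mR) := by
      rintro z' ⟨hzU, hzB⟩
      obtain ⟨ξ', hmem⟩ := Set.mem_iUnion.1 hzU
      obtain ⟨w, hwF, hweq⟩ := Set.mem_vadd_set.1 hmem
      have hz'mem : z' ∈ ((ξ' : V)) +ᵥ F := hmem
      have hnear : ‖(ξ' : V) - (ξ : V)‖ ≤ 5 * R := by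
        have h1 : (ξ' : V) - (ξ : V) = (z' - (ξ : V)) - w := by
          rw [← hweq]; show (ξ' : V) - (ξ : V) = ((ξ' : V) + w) - (ξ : V) - w; abel
        have h2 : ‖z' - (ξ : V)‖ < 2 * R := by
          rw [← dist_eq_norm]; exact Metric.mem_ball.1 hzB
        have h3 := hFnorm w hwF
        calc ‖(ξ' : V) - (ξ : V)‖ ≤ ‖z' - (ξ : V)‖ + ‖w‖ := by
              rw [h1]; exact norm_sub_le _ _
          _ ≤ 2 * R + R := by linarith
          _ ≤ 5 * R := by linarith
      have hptwise : ∀ y ∈ ((ξ' : V)) +ᵥ F,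
          ENNReal.ofReal (1 / g z') ≤ ENNReal.ofReal C₀ * h y := by
        intro y hy
        have h2 := hC₀ (ξ' : V) ξ'.2 z' hz'mem y hy
        rw [hhdef]
        rw [← ENNReal.ofReal_mul hC₀0.le]
        exact ENNReal.ofReal_le_ofReal h2
      have hbz : ENNReal.ofReal (1 / g z') * m ≤ ENNReal.ofReal C₀ * a ξ := by
        calc ENNReal.ofReal (1 / g z') * m
            = ∫⁻ _ in ((ξ' : V)) +ᵥ F, ENNReal.ofReal (1 / g z') ∂μ := by
              rw [setLIntegral_const, hmvadd ξ']
          _ ≤ ∫⁻ y in ((ξ' : V)) +ᵥ F, ENNReal.ofReal C₀ * h y ∂μ :=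
              setLIntegral_mono' (hFmeas.const_vadd ((ξ' : V))) hptwise
          _ = ENNReal.ofReal C₀ * b ξ' := lintegral_const_mul' _ _ ENNReal.ofReal_ne_top
          _ ≤ ENNReal.ofReal C₀ * a ξ := mul_le_mul_right (hba ξ ξ' hnear) _
      have hdiv : ENNReal.ofReal (1 / g z') ≤ ENNReal.ofReal C₀ * a ξ / m :=
        (ENNReal.le_div_iff_mul_le (Or.inl hm0) (Or.inl hmtop)).2 hbz
      have hYtop : ENNReal.ofReal C₀ * a ξ / m ≠ ⊤ := by
        exact (ENNReal.div_lt_top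
          (ENNReal.mul_ne_top ENNReal.ofReal_ne_top (hatop ξ)) hm0).ne
      have hreal : 1 / g z' ≤ C₀ * (a ξ).toReal / mR := by
        have h7 := ENNReal.toReal_mono hYtop hdiv
        rwa [ENNReal.toReal_ofReal (one_div_nonneg.2 (hg0 z').le),
          ENNReal.toReal_div, ENNReal.toReal_mul,
          ENNReal.toReal_ofReal hC₀0.le] at h7
      calc ‖fderiv ℝ f z'‖ ≤ S * (1 / g z') := hGrad z'
        _ ≤ S * (C₀ * (a ξ).toReal / mR) := mul_le_mul_of_nonneg_left hreal hS0
    have hclosed : IsClosed {z : V | ‖fderiv ℝ f z‖ ≤ S * (C₀ * (a ξ).toReal / mR)} :=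
      isClosed_le (hf.continuous_fderiv one_ne_zero).norm continuous_const
    have hsub2 : Metric.closedBall ((ξ : V)) R ⊆
        closure (U ∩ Metric.ball ((ξ : V)) (2 * R)) := by
      intro z' hz'
      rw [mem_closure_iff]
      intro o ho hzo
      have hzb : z' ∈ Metric.ball ((ξ : V)) (2 * R) := by
        rw [Metric.mem_ball]
        have := Metric.mem_closedBall.1 hz'
        linarith
      have hop : IsOpen (o ∩ Metric.ball ((ξ : V)) (2 * R)) := ho.inter Metric.isOpen_ball
      have hne : (o ∩ Metric.ball ((ξ : V)) (2 * R)).Nonempty := ⟨z', hzo, hzb⟩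
      obtain ⟨x, ⟨hxo, hxb⟩, hxU⟩ := hUdense.inter_open_nonempty _ hop hne
      exact ⟨x, hxo, hxU, hxb⟩
    intro z hz
    exact closure_minimal hcov hclosed (hsub2 hz)
  -- mean value estimate
  have hMean : ∀ ξ : Λ, ∀ y ∈ (ξ : V) +ᵥ F,
      ‖f (ξ : V)‖ ≤ ‖f y‖ + S * (C₀ * (a ξ).toReal / mR) * R := by
    intro ξ y hy
    obtain ⟨w, hwF, hweq⟩ := Set.mem_vadd_set.1 hy
    have hweq' : y = (ξ : V) + w := hweq.symm
    have hcnn : (0 : ℝ) ≤ S * (C₀ * (a ξ).toReal / mR) :=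
      mul_nonneg hS0 (div_nonneg (mul_nonneg hC₀0.le ENNReal.toReal_nonneg) hmR.le)
    have hyball : y ∈ Metric.closedBall ((ξ : V)) R := by
      rw [Metric.mem_closedBall, dist_eq_norm, hweq']
      simpa using hFnorm w hwF
    have hxball : ((ξ : V)) ∈ Metric.closedBall ((ξ : V)) R :=
      Metric.mem_closedBall_self hR.le
    have hdiff : ∀ x ∈ Metric.closedBall ((ξ : V)) R, DifferentiableAt ℝ f x :=
      fun x _ => (hf.differentiable one_ne_zero) x
    have hmvt := (convex_closedBall ((ξ : V)) R).norm_image_sub_le_of_norm_fderiv_le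
      hdiff (hBall ξ) hyball hxball
    have hsub : ‖(ξ : V) - y‖ ≤ R := by
      rw [hweq']
      simpa using hFnorm w hwF
    calc ‖f (ξ : V)‖ ≤ ‖f y‖ + ‖f (ξ : V) - f y‖ := by
          have := norm_sub_norm_le (f (ξ : V)) (f y)
          linarith [norm_sub_rev (f (ξ : V)) (f y) ▸ this]
      _ ≤ ‖f y‖ + S * (C₀ * (a ξ).toReal / mR) * R := by
          have h8 : ‖f (ξ : V) - f y‖ ≤ S * (C₀ * (a ξ).toReal / mR) * ‖(ξ : V) - y‖ := hmvt
          have h9 : S * (C₀ * (a ξ).toReal / mR) * ‖(ξ : V) - y‖ ≤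
              S * (C₀ * (a ξ).toReal / mR) * R := mul_le_mul_of_nonneg_left hsub hcnn
          linarith
  -- integrated pointwise bound
  set κ : ℝ≥0∞ := ENNReal.ofReal (S * (C₀ / mR * R)) with hκdef
  have hPoint : ∀ ξ : Λ, (‖f (ξ : V)‖₊ : ℝ≥0∞) ≤
      (∫⁻ y in (ξ : V) +ᵥ F, (‖f y‖₊ : ℝ≥0∞) ∂μ) * m⁻¹ + κ * a ξ := by
    intro ξ
    set t : ℝ := S * (C₀ * (a ξ).toReal / mR) * R with htdef
    have ht0 : 0 ≤ t :=
      mul_nonneg (mul_nonneg hS0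
        (div_nonneg (mul_nonneg hC₀0.le ENNReal.toReal_nonneg) hmR.le)) hR.le
    have hptw : ∀ y ∈ (ξ : V) +ᵥ F,
        (‖f (ξ : V)‖₊ : ℝ≥0∞) ≤ (‖f y‖₊ : ℝ≥0∞) + ENNReal.ofReal t := by
      intro y hy
      have h1 := hMean ξ y hy
      calc (‖f (ξ : V)‖₊ : ℝ≥0∞) = ENNReal.ofReal ‖f (ξ : V)‖ :=
            (ofReal_norm _).symm
        _ ≤ ENNReal.ofReal (‖f y‖ + t) := ENNReal.ofReal_le_ofReal h1
        _ = ENNReal.ofReal ‖f y‖ + ENNReal.ofReal t := ENNReal.ofReal_add (norm_nonneg _) ht0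
        _ = (‖f y‖₊ : ℝ≥0∞) + ENNReal.ofReal t := by
            exact congrArg (· + ENNReal.ofReal t) (ofReal_norm (f y))
    have step1 : (‖f (ξ : V)‖₊ : ℝ≥0∞) * m ≤
        (∫⁻ y in (ξ : V) +ᵥ F, (‖f y‖₊ : ℝ≥0∞) ∂μ) + ENNReal.ofReal t * m := by
      calc (‖f (ξ : V)‖₊ : ℝ≥0∞) * m
          = ∫⁻ _ in (ξ : V) +ᵥ F, (‖f (ξ : V)‖₊ : ℝ≥0∞) ∂μ := by
            rw [setLIntegral_const, hmvadd ξ]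
        _ ≤ ∫⁻ y in (ξ : V) +ᵥ F, ((‖f y‖₊ : ℝ≥0∞) + ENNReal.ofReal t) ∂μ :=
            setLIntegral_mono' (hFmeas.const_vadd ((ξ : V))) hptw
        _ = (∫⁻ y in (ξ : V) +ᵥ F, (‖f y‖₊ : ℝ≥0∞) ∂μ) + ENNReal.ofReal t * m := by
            rw [lintegral_add_right _ measurable_const, setLIntegral_const, hmvadd ξ]
    have hofreal : ENNReal.ofReal t = κ * a ξ := by
      have h2 : t = (S * (C₀ / mR * R)) * (a ξ).toReal := by rw [htdef]; ring
      rw [h2, ENNReal.ofReal_mul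
        (mul_nonneg hS0 (mul_nonneg (div_nonneg hC₀0.le hmR.le) hR.le)), hκdef,
        ENNReal.ofReal_toReal (hatop ξ)]
    have step2 := mul_le_mul_left step1 m⁻¹
    rw [mul_assoc, ENNReal.mul_inv_cancel hm0 hmtop, mul_one] at step2
    calc (‖f (ξ : V)‖₊ : ℝ≥0∞)
        ≤ ((∫⁻ y in (ξ : V) +ᵥ F, (‖f y‖₊ : ℝ≥0∞) ∂μ) + ENNReal.ofReal t * m) * m⁻¹ := step2
      _ = (∫⁻ y in (ξ : V) +ᵥ F, (‖f y‖₊ : ℝ≥0∞) ∂μ) * m⁻¹ +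
          ENNReal.ofReal t * (m * m⁻¹) := by rw [add_mul, mul_assoc]
      _ = (∫⁻ y in (ξ : V) +ᵥ F, (‖f y‖₊ : ℝ≥0∞) ∂μ) * m⁻¹ + κ * a ξ := by
          rw [ENNReal.mul_inv_cancel hm0 hmtop, mul_one, hofreal]
  have hsumI : ∑' ξ : Λ, (∫⁻ y in (ξ : V) +ᵥ F, (‖f y‖₊ : ℝ≥0∞) ∂μ) = I :=
    (hFfund.lintegral_eq_tsum (fun y => (‖f y‖₊ : ℝ≥0∞))).symm
  have hκle : κ ≤ (∑ i, Sup i) * q := by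
    have h1 : κ = ENNReal.ofReal S * q := by
      rw [hκdef, hqdef, ENNReal.ofReal_mul hS0]
    have h2 : ENNReal.ofReal S = ∑ i, Sup i := by
      rw [hSdef, ENNReal.ofReal_sum_of_nonneg (fun i _ => ENNReal.toReal_nonneg)]
      exact Finset.sum_congr rfl fun i _ => ENNReal.ofReal_toReal (hSuptop i)
    rw [h1, h2]
  calc ∑' ξ : Λ, (‖f (ξ : V)‖₊ : ℝ≥0∞)
      ≤ ∑' ξ : Λ, ((∫⁻ y in (ξ : V) +ᵥ F, (‖f y‖₊ : ℝ≥0∞) ∂μ) * m⁻¹ + κ * a ξ) :=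
        ENNReal.tsum_le_tsum hPoint
    _ = (∑' ξ : Λ, ∫⁻ y in (ξ : V) +ᵥ F, (‖f y‖₊ : ℝ≥0∞) ∂μ) * m⁻¹ + κ * ∑' ξ : Λ, a ξ := by
        rw [ENNReal.tsum_add, ENNReal.tsum_mul_right, ENNReal.tsum_mul_left]
    _ ≤ I * m⁻¹ + ((∑ i, Sup i) * q) * (N * J) := by
        rw [hsumI]
        exact add_le_add_right (mul_le_mul' hκle hasum) _
    _ ≤ I * C + (∑ i, Sup i) * C := by
        refine add_le_add (mul_le_mul_right hCm I) ?_
        rw [mul_assoc]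
        refine mul_le_mul_right ?_ _
        calc q * (N * J) = c₂ := by rw [hc₂def, mul_assoc]
          _ ≤ (C : ℝ≥0∞) := hCc₂
    _ = C * (I + ∑ i, Sup i) := by ring
end

section
/- Let N be a norm on G and σ > 0 a real number such that ∫_G N(g)^{-σ} dμ(g) < ∞. Then for every discrete subgroup Γ of G, the sum ∑_{γ∈Γ} N(γ)^{-σ} is finite. -/
open MeasureTheory Pointwise

/-- Let `G` be a locally compact Hausdorff second countable unimodular topological group with
Haar measure `μ`, and `N` a norm on `G` (continuous, `N ≥ 1`, symmetric under inversion,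
submultiplicative).  If `σ > 0` is such that `∫_G N(g)^{-σ} dμ(g) < ∞`, then for every discrete
subgroup `Γ` of `G` the sum `∑_{γ∈Γ} N(γ)^{-σ}` is finite. -/
theorem stmt2 {G : Type*} [Group G] [TopologicalSpace G] [IsTopologicalGroup G]
    [LocallyCompactSpace G] [T2Space G] [SecondCountableTopology G]
    [MeasurableSpace G] [BorelSpace G]
    (μ : Measure G) [μ.IsHaarMeasure] [μ.IsMulRightInvariant]
    (N : G → ℝ) (hNcont : Continuous N) (hN1 : ∀ g, 1 ≤ N g)
    (hNinv : ∀ g : G, N g⁻¹ = N g) (hNmul : ∀ g h : G, N (g * h) ≤ N g * N h)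
    (σ : ℝ) (hσ : 0 < σ)
    (hint : ∫⁻ g, ENNReal.ofReal (N g ^ (-σ)) ∂μ < ⊤)
    (Γ : Subgroup G) (hΓ : DiscreteTopology Γ) :
    Summable (fun γ : Γ => N (γ : G) ^ (-σ)) := by
  -- Γ is countable
  have : Countable Γ := TopologicalSpace.separableSpace_iff_countable.mp inferInstance
  -- get open U ⊆ G with U ∩ Γ = {1}
  obtain ⟨U, hUopen, hU⟩ : ∃ U : Set G, IsOpen U ∧ Subtype.val ⁻¹' U = ({1} : Set Γ) := by
    have h1 : IsOpen ({1} : Set Γ) := isOpen_discrete _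
    rwa [isOpen_induced_iff] at h1
  have hU1 : (1 : G) ∈ U := by
    have : (1 : Γ) ∈ Subtype.val ⁻¹' U := by rw [hU]; rfl
    simpa using this
  -- get open V with 1 ∈ V and V * V ⊆ U
  obtain ⟨V, hVopen, hV1, hVU⟩ := exists_open_nhds_one_mul_subset (hUopen.mem_nhds hU1)
  -- compact neighborhood K of 1
  obtain ⟨K, hKcomp, hKnhds⟩ := exists_compact_mem_nhds (1 : G)
  -- the set S
  set S : Set G := V ∩ V⁻¹ ∩ interior K with hS
  have hSopen : IsOpen S := ((hVopen.inter hVopen.inv).inter isOpen_interior)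
  have hS1 : (1 : G) ∈ S :=
    ⟨⟨hV1, by simpa using hV1⟩, mem_interior_iff_mem_nhds.mpr hKnhds⟩
  have hSK : S ⊆ K := fun x hx => interior_subset hx.2
  have hSmeas : MeasurableSet S := hSopen.measurableSet
  have hμSpos : 0 < μ S := hSopen.measure_pos μ ⟨1, hS1⟩
  have hμSlt : μ S < ⊤ := lt_of_le_of_lt (measure_mono hSK) hKcomp.measure_lt_top
  -- bound N on K
  obtain ⟨x₀, _, -, hx₀⟩ := hKcomp.exists_sSup_image_eq_and_ge
    ⟨1, mem_of_mem_nhds hKnhds⟩ hNcont.continuousOn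
  set C : ℝ := N x₀ with hC
  have hCpos : 0 < C := lt_of_lt_of_le one_pos (hN1 x₀)
  -- key pointwise bound
  set F : G → ENNReal := fun g => ENNReal.ofReal (N g ^ (-σ)) with hF
  have key : ∀ γ : Γ, ∀ g ∈ (γ : G) • S,
      ENNReal.ofReal (C ^ (-σ)) * F (γ : G) ≤ F g := by
    rintro γ g hg
    obtain ⟨v, hv, rfl⟩ := hg
    have hNg : N ((γ : G) * v) ≤ N (γ : G) * C := by
      calc N ((γ : G) * v) ≤ N (γ : G) * N v := hNmul _ _
        _ ≤ N (γ : G) * C := by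
            exact mul_le_mul_of_nonneg_left (hx₀ v (hSK hv))
              (le_trans zero_le_one (hN1 _))
    have hpos : (0:ℝ) < N ((γ:G) * v) := lt_of_lt_of_le one_pos (hN1 _)
    have h2 : (N (γ : G) * C) ^ (-σ) ≤ N ((γ:G) * v) ^ (-σ) :=
      Real.rpow_le_rpow_of_nonpos hpos hNg (neg_nonpos.mpr hσ.le)
    have h3 : (N (γ : G) * C) ^ (-σ) = N (γ : G) ^ (-σ) * C ^ (-σ) :=
      Real.mul_rpow (le_trans zero_le_one (hN1 _)) hCpos.le
    simp only [smul_eq_mul, hF]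
    rw [mul_comm]
    calc ENNReal.ofReal (N (γ:G) ^ (-σ)) * ENNReal.ofReal (C ^ (-σ))
        = ENNReal.ofReal (N (γ:G) ^ (-σ) * C ^ (-σ)) :=
          (ENNReal.ofReal_mul (Real.rpow_nonneg (le_trans zero_le_one (hN1 _)) _)).symm
      _ ≤ ENNReal.ofReal (N ((γ:G) * v) ^ (-σ)) := by
          apply ENNReal.ofReal_le_ofReal; rw [← h3]; exact h2
  -- translates are pairwise disjoint
  have hdisj : Pairwise (Function.onFun Disjoint (fun γ : Γ => (γ : G) • S)) := by
    intro γ₁ γ₂ hne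
    rw [Function.onFun, Set.disjoint_left]
    rintro x ⟨v₁, hv₁, rfl⟩ ⟨v₂, hv₂, hx⟩
    apply hne
    have heq : (γ₂ : G) * v₂ = (γ₁ : G) * v₁ := hx
    have hmem : ((γ₂ : G)⁻¹ * (γ₁ : G)) ∈ U := by
      have h2 : (γ₂ : G)⁻¹ * (γ₁ : G) = v₂ * v₁⁻¹ := by
        calc (γ₂ : G)⁻¹ * (γ₁ : G) = (γ₂ : G)⁻¹ * ((γ₁ : G) * v₁) * v₁⁻¹ := by group
          _ = (γ₂ : G)⁻¹ * ((γ₂ : G) * v₂) * v₁⁻¹ := by rw [heq]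
          _ = v₂ * v₁⁻¹ := by group
      rw [h2]
      exact hVU (Set.mul_mem_mul hv₂.1.1 (Set.mem_inv.mp hv₁.1.2))
    have h3 : (γ₂⁻¹ * γ₁ : Γ) ∈ Subtype.val ⁻¹' U := hmem
    rw [hU, Set.mem_singleton_iff] at h3
    exact (inv_mul_eq_one.mp h3).symm
  -- translates are measurable
  have hmeas : ∀ γ : Γ, MeasurableSet ((γ : G) • S) := fun γ =>
    (hSopen.smul (γ : G)).measurableSet
  -- main estimate
  have hsum : (∑' γ : Γ, F (γ : G)) * (ENNReal.ofReal (C ^ (-σ)) * μ S)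
      ≤ ∫⁻ g, F g ∂μ := by
    calc (∑' γ : Γ, F (γ : G)) * (ENNReal.ofReal (C ^ (-σ)) * μ S)
        = ∑' γ : Γ, (F (γ : G) * (ENNReal.ofReal (C ^ (-σ)) * μ S)) :=
          (ENNReal.tsum_mul_right).symm
      _ ≤ ∑' γ : Γ, ∫⁻ g in (γ : G) • S, F g ∂μ := by
          apply ENNReal.tsum_le_tsum
          intro γ
          have : ∫⁻ _ in (γ : G) • S, (ENNReal.ofReal (C ^ (-σ)) * F (γ : G)) ∂μ
              ≤ ∫⁻ g in (γ : G) • S, F g ∂μ :=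
            setLIntegral_mono' (hmeas γ) (fun g hg => key γ g hg)
          rw [setLIntegral_const] at this
          calc F (γ : G) * (ENNReal.ofReal (C ^ (-σ)) * μ S)
              = ENNReal.ofReal (C ^ (-σ)) * F (γ : G) * μ ((γ : G) • S) := by
                rw [measure_smul]; ring
            _ ≤ _ := this
      _ = ∫⁻ g in ⋃ γ : Γ, (γ : G) • S, F g ∂μ :=
          (lintegral_iUnion hmeas hdisj F).symm
      _ ≤ ∫⁻ g, F g ∂μ := setLIntegral_le_lintegral _ _
  -- conclude finiteness
  have hk : ENNReal.ofReal (C ^ (-σ)) * μ S ≠ 0 := by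
    apply mul_ne_zero
    · exact (ENNReal.ofReal_pos.mpr (Real.rpow_pos_of_pos hCpos _)).ne'
    · exact hμSpos.ne'
  have htop : (∑' γ : Γ, F (γ : G)) ≠ ⊤ := by
    intro h
    rw [h, ENNReal.top_mul hk] at hsum
    exact (lt_irrefl ⊤ (lt_of_le_of_lt hsum hint))
  have := ENNReal.summable_toReal htop
  convert this using 2 with γ
  rw [hF, ENNReal.toReal_ofReal (Real.rpow_nonneg (le_trans zero_le_one (hN1 _)) _)]
end

section
/- Let N be a norm on G, σ > 0 with ∫_G N(g)^{-σ} dμ(g) < ∞, Γ a discrete subgroup of G, H a closed subgroup of G, and Δ = H ∩ Γ. Suppose f : G → ℂ satisfies f(δg) = f(g) for all δ ∈ Δ and g ∈ G, and |f(g)| ≤ c·N_Δ(g)^{-σ} for some constant c and all g ∈ G. Then there is a constant C such that for every g ∈ G the family (f(γg))_{γ ∈ Δ\Γ} is absolutely summable, with ∑_{γ∈Δ\Γ} |f(γg)| ≤ C·N(g)^σ. -/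
open MeasureTheory

/-- Let `G` be a locally compact Hausdorff second countable unimodular topological group with
Haar measure `μ`, `N` a norm on `G`, and `σ > 0` with `∫_G N(g)^{-σ} dμ(g) < ∞`.  Let `Γ` be a
discrete subgroup, `H` a closed subgroup, and `Δ = H ∩ Γ`.  If `f : G → ℂ` is left
`Δ`-invariant and `|f(g)| ≤ c·N_Δ(g)^{-σ}` where `N_Δ(g) = inf_{δ∈Δ} N(δg)`, then there is a
constant `C` such that for every `g ∈ G` the family `(f(γg))_{γ∈Δ\Γ}` is absolutely summable,
with `∑_{γ∈Δ\Γ} |f(γg)| ≤ C·N(g)^σ`. -/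
theorem stmt3 {G : Type*} [Group G] [TopologicalSpace G] [IsTopologicalGroup G]
    [LocallyCompactSpace G] [T2Space G] [SecondCountableTopology G]
    [MeasurableSpace G] [BorelSpace G]
    (μ : Measure G) [μ.IsHaarMeasure] [μ.IsMulRightInvariant]
    (N : G → ℝ) (hNcont : Continuous N) (hN1 : ∀ g, 1 ≤ N g)
    (hNinv : ∀ g : G, N g⁻¹ = N g) (hNmul : ∀ g h : G, N (g * h) ≤ N g * N h)
    (σ : ℝ) (hσ : 0 < σ)
    (hint : ∫⁻ g, ENNReal.ofReal (N g ^ (-σ)) ∂μ < ⊤)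
    (Γ H : Subgroup G) (hΓ : DiscreteTopology Γ) (hH : IsClosed (H : Set G))
    (f : G → ℂ)
    (hfinv : ∀ δ ∈ H ⊓ Γ, ∀ g : G, f (δ * g) = f g)
    (c : ℝ)
    (hfbd : ∀ g : G, ‖f g‖ ≤ c * (⨅ δ : ↥(H ⊓ Γ), N ((δ : G) * g)) ^ (-σ)) :
    ∃ C : ℝ, ∀ g : G,
      Summable (fun q : Quotient (QuotientGroup.rightRel ((H ⊓ Γ).subgroupOf Γ)) =>
        ‖f ((q.out : G) * g)‖) ∧
      ∑' q : Quotient (QuotientGroup.rightRel ((H ⊓ Γ).subgroupOf Γ)),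
          ‖f ((q.out : G) * g)‖ ≤ C * N g ^ σ := by
  classical
  haveI := hΓ
  have Npos : ∀ g : G, 0 < N g := fun g => zero_lt_one.trans_le (hN1 g)
  haveI : Nonempty ↥(H ⊓ Γ) := ⟨1⟩
  set Q := Quotient (QuotientGroup.rightRel ((H ⊓ Γ).subgroupOf Γ)) with hQ
  -- bounded below
  have hbdd : ∀ x : G, BddBelow (Set.range fun δ : ↥(H ⊓ Γ) => N ((δ : G) * x)) := by
    intro x
    exact ⟨1, by rintro _ ⟨δ, rfl⟩; exact hN1 _⟩
  set A : Q → ℝ := fun q => ⨅ δ : ↥(H ⊓ Γ), N ((δ : G) * (q.out : G)) with hA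
  have hA1 : ∀ q, 1 ≤ A q := fun q => le_ciInf fun δ => hN1 _
  have hApos : ∀ q, 0 < A q := fun q => zero_lt_one.trans_le (hA1 q)
  -- countability
  haveI : Countable Γ := by
    obtain ⟨s, hsc, hsd⟩ := TopologicalSpace.exists_countable_dense (↥Γ)
    have hclosed : s = Set.univ := by
      have h1 := hsd.closure_eq
      rwa [IsClosed.closure_eq (isClosed_discrete s)] at h1
    rw [hclosed] at hsc
    exact Set.countable_univ_iff.mp hsc
  haveI : Countable Q := Quotient.countable
  -- choose good representatives
  have hchoose : ∀ q : Q, ∃ δ : ↥(H ⊓ Γ), N ((δ : G) * (q.out : G)) < 2 * A q := by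
    intro q
    apply exists_lt_of_ciInf_lt
    have := hA1 q
    show A q < 2 * A q
    linarith
  choose δsel hδsel using hchoose
  set γ : Q → G := fun q => (δsel q : G) * (q.out : G) with hγ
  have hγΓ : ∀ q, γ q ∈ Γ := fun q => Γ.mul_mem (δsel q).2.2 (q.out : Γ).2
  have hγinj : Function.Injective γ := by
    intro q q' h
    have h2 : ((q'.out : Γ) * (q.out : Γ)⁻¹ : Γ) ∈ (H ⊓ Γ).subgroupOf Γ := by
      rw [Subgroup.mem_subgroupOf]
      have key : ((q'.out : G)) * (q.out : G)⁻¹ = (δsel q' : G)⁻¹ * (δsel q : G) := by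
        simp only [hγ] at h
        have h3 : (δsel q' : G)⁻¹ * ((δsel q : G) * (q.out : G)) * (q.out : G)⁻¹
            = (δsel q' : G)⁻¹ * (δsel q : G) := by group
        have h4 : (δsel q' : G)⁻¹ * ((δsel q' : G) * (q'.out : G)) * (q.out : G)⁻¹
            = (q'.out : G) * (q.out : G)⁻¹ := by group
        rw [← h] at h4
        rw [← h4]
        exact h3
      push_cast
      rw [key]
      exact mul_mem (inv_mem (δsel q').2) (δsel q).2
    have : (QuotientGroup.rightRel ((H ⊓ Γ).subgroupOf Γ)) q.out q'.out :=
      QuotientGroup.rightRel_apply.mpr h2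
    exact Quotient.out_equiv_out.mp this
  -- small open set from discreteness
  obtain ⟨V, hVopen, hV⟩ : ∃ V : Set G, IsOpen V ∧ (Subtype.val ⁻¹' V : Set Γ) = {1} := by
    have h1 : IsOpen ({1} : Set Γ) := isOpen_discrete _
    rw [isOpen_induced_iff] at h1
    obtain ⟨V, hVo, hVe⟩ := h1
    exact ⟨V, hVo, hVe⟩
  have h1V : (1 : G) ∈ V := by
    have h1 : (1 : Γ) ∈ ({1} : Set Γ) := rfl
    rw [← hV] at h1
    exact h1
  obtain ⟨W, hWnhds, hWV⟩ := exists_nhds_split_inv (hVopen.mem_nhds h1V)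
  obtain ⟨K, hK, hKnhds⟩ := exists_compact_mem_nhds (1 : G)
  set U : Set G := interior K ∩ interior W with hU
  have hUopen : IsOpen U := (isOpen_interior).inter isOpen_interior
  have h1U : (1 : G) ∈ U :=
    ⟨mem_interior_iff_mem_nhds.mpr hKnhds, mem_interior_iff_mem_nhds.mpr hWnhds⟩
  have hUc : IsCompact (closure U) := by
    apply hK.of_isClosed_subset isClosed_closure
    calc closure U ⊆ closure (interior K) := closure_mono Set.inter_subset_left
    _ ⊆ K := closure_minimal interior_subset hK.isClosed
  -- sup of N on closure U
  obtain ⟨x₀, -, hx₀⟩ := hUc.exists_isMaxOn ⟨1, subset_closure h1U⟩ hNcont.continuousOn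
  set M : ℝ := N x₀ with hMdef
  have hM : ∀ u ∈ closure U, N u ≤ M := fun u hu => hx₀ hu
  have hM1 : (1 : ℝ) ≤ M := le_trans (hN1 1) (hM 1 (subset_closure h1U))
  have hMpos : (0 : ℝ) < M := zero_lt_one.trans_le hM1
  -- translates are disjoint
  set s : Q → Set G := fun q => (fun x => γ q * x) '' U with hs
  have hsopen : ∀ q, IsOpen (s q) := fun q => isOpenMap_mul_left (γ q) U hUopen
  have hdisj : Pairwise (Function.onFun Disjoint s) := by
    intro q q' hne
    rw [Function.onFun, Set.disjoint_left]
    rintro x ⟨u, hu, rfl⟩ ⟨u', hu', heq⟩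
    -- heq : γ q' * u' = γ q * u
    have hdivV : u' / u ∈ V := hWV u' (interior_subset hu'.2) u (interior_subset hu.2)
    have hdivV' : (γ q')⁻¹ * γ q ∈ V := by
      have e1 : (γ q')⁻¹ * (γ q' * u') * u⁻¹ = u' * u⁻¹ := by group
      have e2 : (γ q')⁻¹ * (γ q * u) * u⁻¹ = (γ q')⁻¹ * γ q := by group
      have heq' : γ q' * u' = γ q * u := heq
      rw [heq'] at e1
      rw [e2] at e1
      rw [e1, ← div_eq_mul_inv]
      exact hdivV
    have hmemΓ : (γ q')⁻¹ * γ q ∈ Γ := mul_mem (inv_mem (hγΓ q')) (hγΓ q)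
    have : (⟨(γ q')⁻¹ * γ q, hmemΓ⟩ : Γ) ∈ (Subtype.val ⁻¹' V : Set Γ) := hdivV'
    rw [hV] at this
    have heq1 : (γ q')⁻¹ * γ q = 1 := congrArg Subtype.val this
    have : γ q' = γ q := by
      have := congrArg (fun x => γ q' * x) heq1
      simpa [mul_assoc] using this.symm
    exact hne (hγinj this).symm
  -- measurability of the integrand
  set F : G → ENNReal := fun x => ENNReal.ofReal (N x ^ (-σ)) with hF
  have hNrpow_cont : Continuous fun x : G => N x ^ (-σ) := by
    rw [continuous_iff_continuousAt]
    intro x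
    exact (Real.continuousAt_rpow_const _ _ (Or.inl (Npos x).ne')).comp hNcont.continuousAt
  have hFmeas : Measurable F := ENNReal.measurable_ofReal.comp hNrpow_cont.measurable
  -- measure of U
  have hμU0 : μ U ≠ 0 := hUopen.measure_ne_zero μ ⟨1, h1U⟩
  have hμUtop : μ U ≠ ⊤ :=
    ne_top_of_le_ne_top hUc.measure_lt_top.ne (measure_mono subset_closure)
  -- lower bound on each translate integral
  have hterm : ∀ q : Q,
      ENNReal.ofReal ((2 * M) ^ (-σ)) * ENNReal.ofReal ((A q) ^ (-σ)) * μ U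
        ≤ ∫⁻ x in s q, F x ∂μ := by
    intro q
    have hbound : ∀ x ∈ s q, N x ≤ (2 * M) * A q := by
      rintro x ⟨u, hu, rfl⟩
      calc N (γ q * u) ≤ N (γ q) * N u := hNmul _ _
      _ ≤ (2 * A q) * M := by
          apply mul_le_mul (hδsel q).le (hM u (subset_closure hu)) (Npos u).le
          nlinarith [hApos q]
      _ = (2 * M) * A q := by ring
    have hprod_pos : (0 : ℝ) < (2 * M) * A q := mul_pos (by linarith) (hApos q)
    have hrw : ENNReal.ofReal ((2 * M) ^ (-σ)) * ENNReal.ofReal ((A q) ^ (-σ))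
        = ENNReal.ofReal (((2 * M) * A q) ^ (-σ)) := by
      rw [← ENNReal.ofReal_mul (Real.rpow_nonneg (by linarith) _), ← Real.mul_rpow
        (by linarith) (hApos q).le]
    rw [hrw]
    have hμs : μ (s q) = μ U := by
      have : s q = (fun x => (γ q)⁻¹ * x) ⁻¹' U := Set.image_mul_left
      rw [this, measure_preimage_mul]
    calc ENNReal.ofReal (((2 * M) * A q) ^ (-σ)) * μ U
        = ∫⁻ _ in s q, ENNReal.ofReal (((2 * M) * A q) ^ (-σ)) ∂μ := by
          rw [setLIntegral_const, hμs]
    _ ≤ ∫⁻ x in s q, F x ∂μ := by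
          apply setLIntegral_mono hFmeas
          intro x hx
          apply ENNReal.ofReal_le_ofReal
          exact Real.rpow_le_rpow_of_nonpos (Npos x) (hbound x hx) (by linarith)
  -- summing up
  have hsum_le : ∑' q : Q, ∫⁻ x in s q, F x ∂μ ≤ ∫⁻ x, F x ∂μ := by
    rw [← lintegral_iUnion (fun q => (hsopen q).measurableSet) hdisj F]
    exact setLIntegral_le_lintegral _ _
  set κ : ENNReal := ENNReal.ofReal ((2 * M) ^ (-σ)) * μ U with hκ
  have hκ0 : κ ≠ 0 := by
    apply mul_ne_zero _ hμU0
    simp only [ne_eq, ENNReal.ofReal_eq_zero, not_le]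
    exact Real.rpow_pos_of_pos (by positivity) _
  have hκtop : κ ≠ ⊤ := ENNReal.mul_ne_top ENNReal.ofReal_ne_top hμUtop
  have hκsum : κ * ∑' q : Q, ENNReal.ofReal ((A q) ^ (-σ)) ≤ ∫⁻ x, F x ∂μ := by
    rw [← ENNReal.tsum_mul_left]
    refine le_trans (ENNReal.tsum_le_tsum fun q => ?_) hsum_le
    calc κ * ENNReal.ofReal ((A q) ^ (-σ))
        = ENNReal.ofReal ((2 * M) ^ (-σ)) * ENNReal.ofReal ((A q) ^ (-σ)) * μ U := by
          rw [hκ]; ring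
    _ ≤ ∫⁻ x in s q, F x ∂μ := hterm q
  have htsum_ne_top : ∑' q : Q, ENNReal.ofReal ((A q) ^ (-σ)) ≠ ⊤ := by
    have h1 : ∑' q : Q, ENNReal.ofReal ((A q) ^ (-σ)) ≤ (∫⁻ x, F x ∂μ) / κ := by
      rw [ENNReal.le_div_iff_mul_le (Or.inl hκ0) (Or.inl hκtop), mul_comm]
      exact hκsum
    exact ne_top_of_le_ne_top (ENNReal.div_lt_top hint.ne hκ0).ne h1
  -- real summability
  have hsummable : Summable fun q : Q => (A q) ^ (-σ) := by
    have h1 := ENNReal.summable_toReal htsum_ne_top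
    have h2 : (fun q : Q => (ENNReal.ofReal ((A q) ^ (-σ))).toReal)
        = fun q : Q => (A q) ^ (-σ) :=
      funext fun q => ENNReal.toReal_ofReal (Real.rpow_nonneg (hApos q).le _)
    rwa [h2] at h1
  set S : ℝ := ∑' q : Q, (A q) ^ (-σ) with hS
  -- c is nonnegative
  have hc0 : 0 ≤ c := by
    have h1 := hfbd 1
    have h2 : (0 : ℝ) < (⨅ δ : ↥(H ⊓ Γ), N ((δ : G) * 1)) ^ (-σ) := by
      apply Real.rpow_pos_of_pos
      exact zero_lt_one.trans_le (le_ciInf fun δ => hN1 _)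
    nlinarith [norm_nonneg (f 1)]
  refine ⟨c * S, fun g => ?_⟩
  -- pointwise bound
  have hptb : ∀ q : Q, ‖f ((q.out : G) * g)‖ ≤ (c * (A q) ^ (-σ)) * N g ^ σ := by
    intro q
    have hinf_ge : A q / N g ≤ ⨅ δ : ↥(H ⊓ Γ), N ((δ : G) * ((q.out : G) * g)) := by
      apply le_ciInf
      intro δ
      rw [div_le_iff₀ (Npos g)]
      calc A q ≤ N ((δ : G) * (q.out : G)) := ciInf_le (hbdd _) δ
      _ = N (((δ : G) * ((q.out : G) * g)) * g⁻¹) := by group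
      _ ≤ N ((δ : G) * ((q.out : G) * g)) * N g⁻¹ := hNmul _ _
      _ = N ((δ : G) * ((q.out : G) * g)) * N g := by rw [hNinv]
    have hdivpos : 0 < A q / N g := div_pos (hApos q) (Npos g)
    have h1 : (⨅ δ : ↥(H ⊓ Γ), N ((δ : G) * ((q.out : G) * g))) ^ (-σ)
        ≤ (A q / N g) ^ (-σ) :=
      Real.rpow_le_rpow_of_nonpos hdivpos hinf_ge (by linarith)
    have h2 : (A q / N g) ^ (-σ) = (A q) ^ (-σ) * N g ^ σ := by
      rw [Real.div_rpow (hApos q).le (Npos g).le, Real.rpow_neg (Npos g).le, div_inv_eq_mul]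
    calc ‖f ((q.out : G) * g)‖
        ≤ c * (⨅ δ : ↥(H ⊓ Γ), N ((δ : G) * ((q.out : G) * g))) ^ (-σ) := hfbd _
    _ ≤ c * ((A q) ^ (-σ) * N g ^ σ) := by
        rw [← h2]; exact mul_le_mul_of_nonneg_left h1 hc0
    _ = (c * (A q) ^ (-σ)) * N g ^ σ := by ring
  have hbsummable : Summable fun q : Q => (c * (A q) ^ (-σ)) * N g ^ σ :=
    (hsummable.mul_left c).mul_right _
  have hfsummable : Summable fun q : Q => ‖f ((q.out : G) * g)‖ :=
    Summable.of_nonneg_of_le (fun q => norm_nonneg _) hptb hbsummable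
  refine ⟨hfsummable, ?_⟩
  calc ∑' q : Q, ‖f ((q.out : G) * g)‖
      ≤ ∑' q : Q, (c * (A q) ^ (-σ)) * N g ^ σ := Summable.tsum_le_tsum hptb hfsummable hbsummable
  _ = (∑' q : Q, c * (A q) ^ (-σ)) * N g ^ σ := tsum_mul_right
  _ = (c * S) * N g ^ σ := by rw [tsum_mul_left]
end

section
/- Let N be a norm on G, σ > 0 with ∫_G N(g)^{-σ} dμ(g) < ∞, Γ a discrete subgroup of G, H a closed subgroup of G, and Δ = H ∩ Γ. Suppose f : G → ℂ satisfies f(δg) = f(g) for all δ ∈ Δ and g ∈ G, and |f(g)| ≤ c·N_Δ(g)^{-σ} for some constant c and all g ∈ G. Then there is a constant C such that for every g ∈ G, ∑_{γ∈Δ\Γ} |f(γg)| ≤ C·( inf_{γ₀∈Γ} N(γ₀ g) )^σ; that is, the Poincaré series ∑_{γ∈Δ\Γ} f(γg) is of moderate growth modulo Γ. -/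
open MeasureTheory Pointwise

private lemma stmt4_rpow_aux {σ a b t : ℝ} (ha : 0 < a) (hb : 0 < b) (ht : 0 < t)
    (hσ : 0 ≤ σ) (h : a ≤ b * t) : b ^ (-σ) ≤ t ^ σ * a ^ (-σ) := by
  have h1 : a / t ≤ b := (div_le_iff₀ ht).2 h
  have h2 : b ^ (-σ) ≤ (a / t) ^ (-σ) :=
    Real.rpow_le_rpow_of_nonpos (div_pos ha ht) h1 (neg_nonpos.2 hσ)
  calc b ^ (-σ) ≤ (a / t) ^ (-σ) := h2
    _ = a ^ (-σ) / t ^ (-σ) := Real.div_rpow ha.le ht.le (-σ)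
    _ = t ^ σ * a ^ (-σ) := by
        rw [Real.rpow_neg ht.le, div_eq_mul_inv, inv_inv, mul_comm]

/-- Let `G` be a locally compact Hausdorff second countable unimodular topological group with
Haar measure `μ`, `N` a norm on `G`, and `σ > 0` with `∫_G N(g)^{-σ} dμ(g) < ∞`.  Let `Γ` be a
discrete subgroup, `H` a closed subgroup, and `Δ = H ∩ Γ`.  If `f : G → ℂ` is left
`Δ`-invariant and `|f(g)| ≤ c·N_Δ(g)^{-σ}` where `N_Δ(g) = inf_{δ∈Δ} N(δg)`, then there is a
constant `C` such that for every `g ∈ G` the family `(f(γg))_{γ∈Δ\Γ}` is absolutely summable,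
with `∑_{γ∈Δ\Γ} |f(γg)| ≤ C·(inf_{γ₀∈Γ} N(γ₀g))^σ`; that is, the Poincaré series is of
moderate growth modulo `Γ`. -/
theorem stmt4 {G : Type*} [Group G] [TopologicalSpace G] [IsTopologicalGroup G]
    [LocallyCompactSpace G] [T2Space G] [SecondCountableTopology G]
    [MeasurableSpace G] [BorelSpace G]
    (μ : Measure G) [μ.IsHaarMeasure] [μ.IsMulRightInvariant]
    (N : G → ℝ) (hNcont : Continuous N) (hN1 : ∀ g, 1 ≤ N g)
    (hNinv : ∀ g : G, N g⁻¹ = N g) (hNmul : ∀ g h : G, N (g * h) ≤ N g * N h)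
    (σ : ℝ) (hσ : 0 < σ)
    (hint : ∫⁻ g, ENNReal.ofReal (N g ^ (-σ)) ∂μ < ⊤)
    (Γ H : Subgroup G) (hΓ : DiscreteTopology Γ) (hH : IsClosed (H : Set G))
    (f : G → ℂ)
    (hfinv : ∀ δ ∈ H ⊓ Γ, ∀ g : G, f (δ * g) = f g)
    (c : ℝ)
    (hfbd : ∀ g : G, ‖f g‖ ≤ c * (⨅ δ : ↥(H ⊓ Γ), N ((δ : G) * g)) ^ (-σ)) :
    ∃ C : ℝ, ∀ g : G,
      Summable (fun q : Quotient (QuotientGroup.rightRel ((H ⊓ Γ).subgroupOf Γ)) =>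
        ‖f ((q.out : G) * g)‖) ∧
      ∑' q : Quotient (QuotientGroup.rightRel ((H ⊓ Γ).subgroupOf Γ)),
          ‖f ((q.out : G) * g)‖ ≤ C * (⨅ γ₀ : Γ, N ((γ₀ : G) * g)) ^ σ := by
  classical
  letI : Setoid ↥Γ := QuotientGroup.rightRel ((H ⊓ Γ).subgroupOf Γ)
  haveI : Nonempty ↥(H ⊓ Γ) := ⟨1⟩
  haveI : Nonempty ↥Γ := ⟨1⟩
  set Q := Quotient (QuotientGroup.rightRel ((H ⊓ Γ).subgroupOf Γ)) with hQdef
  set NΔ : G → ℝ := fun y => ⨅ δ : ↥(H ⊓ Γ), N ((δ : G) * y) with hNΔdef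
  have hbdd : ∀ y : G, BddBelow (Set.range fun δ : ↥(H ⊓ Γ) => N ((δ : G) * y)) := by
    intro y
    refine ⟨1, ?_⟩
    rintro r ⟨δ, rfl⟩
    exact hN1 _
  have hNΔ1 : ∀ y, (1 : ℝ) ≤ NΔ y := fun y => le_ciInf fun δ => hN1 _
  have hNΔpos : ∀ y, (0 : ℝ) < NΔ y := fun y => lt_of_lt_of_le one_pos (hNΔ1 y)
  have hNΔle : ∀ (δ : ↥(H ⊓ Γ)) (y : G), NΔ y ≤ N ((δ : G) * y) := fun δ y =>
    ciInf_le (hbdd y) δ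
  -- left invariance of NΔ under Δ
  have hle : ∀ d : G, d ∈ H ⊓ Γ → ∀ y : G, NΔ y ≤ NΔ (d * y) := by
    intro d hd y
    refine le_ciInf fun δ => ?_
    have h := hNΔle ⟨(δ : G) * d, mul_mem δ.2 hd⟩ y
    simpa [mul_assoc] using h
  have hNΔinv : ∀ d : G, d ∈ H ⊓ Γ → ∀ y : G, NΔ (d * y) = NΔ y := by
    intro d hd y
    refine le_antisymm ?_ (hle d hd y)
    have h := hle d⁻¹ (inv_mem hd) (d * y)
    rwa [inv_mul_cancel_left] at h
  -- submultiplicativity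
  have hNΔmul : ∀ a b : G, NΔ a ≤ NΔ (a * b) * N b := by
    intro a b
    have hb : (0 : ℝ) < N b := lt_of_lt_of_le one_pos (hN1 b)
    rw [← div_le_iff₀ hb]
    refine le_ciInf fun δ => ?_
    rw [div_le_iff₀ hb]
    calc NΔ a ≤ N ((δ : G) * a) := hNΔle δ a
      _ = N (((δ : G) * (a * b)) * b⁻¹) := by group
      _ ≤ N ((δ : G) * (a * b)) * N b⁻¹ := hNmul _ _
      _ = N ((δ : G) * (a * b)) * N b := by rw [hNinv]
  -- c is nonnegative
  have hc : 0 ≤ c := by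
    have h1 := hfbd 1
    have hp : (0 : ℝ) < (NΔ 1) ^ (-σ) := Real.rpow_pos_of_pos (hNΔpos 1) _
    nlinarith [norm_nonneg (f 1)]
  -- discreteness: a neighborhood of 1 meeting Γ only in 1
  obtain ⟨V, hVo, hV1, hVΓ⟩ :
      ∃ V : Set G, IsOpen V ∧ (1 : G) ∈ V ∧ ∀ x ∈ V, x ∈ Γ → x = 1 := by
    have h1 : IsOpen ({1} : Set ↥Γ) := isOpen_discrete _
    rw [isOpen_induced_iff] at h1
    obtain ⟨V, hVo, hV⟩ := h1
    refine ⟨V, hVo, ?_, ?_⟩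
    · have : (1 : ↥Γ) ∈ Subtype.val ⁻¹' V := by rw [hV]; rfl
      exact this
    · intro x hxV hxΓ
      have : (⟨x, hxΓ⟩ : ↥Γ) ∈ Subtype.val ⁻¹' V := hxV
      rw [hV] at this
      exact congrArg Subtype.val this
  obtain ⟨W, hWo, hW1, hWW⟩ := exists_open_nhds_one_mul_subset (hVo.mem_nhds hV1)
  obtain ⟨K, hKc, hKmem⟩ := exists_compact_mem_nhds (1 : G)
  obtain ⟨z, hzK, hzmax'⟩ :=
    hKc.exists_isMaxOn ⟨1, mem_of_mem_nhds hKmem⟩ hNcont.continuousOn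
  have hzmax : ∀ y ∈ K, N y ≤ N z := fun y hy => hzmax' hy
  set M : ℝ := N z with hMdef
  have hM1 : (1 : ℝ) ≤ M := le_trans (hN1 1) (hzmax 1 (mem_of_mem_nhds hKmem))
  have hMpos : (0 : ℝ) < M := lt_of_lt_of_le one_pos hM1
  set U : Set G := (W ∩ W⁻¹) ∩ interior K with hUdef
  have hUopen : IsOpen U := ((hWo.inter hWo.inv).inter isOpen_interior)
  have hU1 : (1 : G) ∈ U :=
    ⟨⟨hW1, by simpa using hW1⟩, mem_interior_iff_mem_nhds.2 hKmem⟩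
  have hUK : U ⊆ K := fun x hx => interior_subset hx.2
  have hUsub : ∀ x ∈ U, N x ≤ M := fun x hx => hzmax x (hUK hx)
  have hUU : ∀ {u v : G}, u ∈ U → v ∈ U → u * v⁻¹ ∈ Γ → u = v := by
    intro u v hu hv hΓmem
    have huW : u ∈ W := hu.1.1
    have hvW : v⁻¹ ∈ W := hv.1.2
    have : u * v⁻¹ ∈ V := hWW (Set.mul_mem_mul huW hvW)
    have h1 : u * v⁻¹ = 1 := hVΓ _ this hΓmem
    exact mul_inv_eq_one.mp h1
  have hμU0 : 0 < μ U := hUopen.measure_pos μ ⟨1, hU1⟩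
  have hμUfin : μ U < ⊤ := lt_of_le_of_lt (measure_mono hUK) hKc.measure_lt_top
  -- choice of near-optimal representative
  have hchoice : ∀ ξ : ↥Γ, ∃ δ : ↥(H ⊓ Γ), N ((δ : G) * (ξ : G)) < 2 * NΔ (ξ : G) := by
    intro ξ
    exact exists_lt_of_ciInf_lt (by nlinarith [hNΔpos (ξ : G)])
  choose d hd using hchoice
  set x : ↥Γ → G := fun ξ => ((d ξ : G)) * (ξ : G) with hxdef
  have hxΓ : ∀ ξ, x ξ ∈ Γ := fun ξ => mul_mem ((d ξ).2.2) ξ.2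
  haveI : Countable ↥Γ := by
    rw [← TopologicalSpace.separableSpace_iff_countable]
    infer_instance
  haveI : Countable Q := Quotient.countable
  -- the disjoint translates
  set S : Q → Set G := fun q => (x q.out • U : Set G) with hSdef
  have hSmeas : ∀ q, MeasurableSet (S q) := fun q => (hUopen.smul _).measurableSet
  have hdisj : Pairwise (Function.onFun Disjoint S) := by
    intro q q' hne
    rw [Function.onFun, Set.disjoint_left]
    rintro y hy hy'
    obtain ⟨u, hu, rfl⟩ := hy
    obtain ⟨v, hv, hveq⟩ := hy'
    exfalso
    apply hne
    have hxy : x q.out * u = x q'.out * v := hveq.symm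
    have huv : u * v⁻¹ = (x q.out)⁻¹ * x q'.out := by
      have hu' : u = (x q.out)⁻¹ * (x q'.out * v) := by rw [← hxy]; group
      rw [hu']; group
    have hmem : u * v⁻¹ ∈ Γ := by
      rw [huv]; exact mul_mem (inv_mem (hxΓ _)) (hxΓ _)
    have huveq : u = v := hUU hu hv hmem
    have hxx : x q.out = x q'.out := by
      rw [huveq] at hxy
      exact mul_right_cancel hxy
    -- deduce q = q'
    have hxx' : ((d q.out : G)) * (q.out : G) = ((d q'.out : G)) * (q'.out : G) := hxx
    have hΔmem : ((q'.out : G)) * (q.out : G)⁻¹ ∈ H ⊓ Γ := by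
      have heq2 : ((q'.out : G)) * (q.out : G)⁻¹ = (d q'.out : G)⁻¹ * (d q.out : G) := by
        refine mul_left_cancel (a := (d q'.out : G)) ?_
        rw [← mul_assoc, ← hxx']
        group
      rw [heq2]
      exact mul_mem (inv_mem (d q'.out).2) (d q.out).2
    have hrel : Setoid.r q.out q'.out := by
      rw [QuotientGroup.rightRel_apply]
      exact hΔmem
    calc q = ⟦q.out⟧ := (Quotient.out_eq q).symm
      _ = ⟦q'.out⟧ := Quotient.sound hrel
      _ = q' := Quotient.out_eq q'
  -- key per-class integral bound
  have hkey : ∀ q : Q, μ U * ENNReal.ofReal (NΔ (q.out : G) ^ (-σ)) ≤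
      ∫⁻ y in S q, ENNReal.ofReal ((2 * M) ^ σ * N y ^ (-σ)) ∂μ := by
    intro q
    have hpt : ∀ y ∈ S q,
        ENNReal.ofReal (NΔ (q.out : G) ^ (-σ)) ≤
        ENNReal.ofReal ((2 * M) ^ σ * N y ^ (-σ)) := by
      rintro y ⟨u, hu, rfl⟩
      apply ENNReal.ofReal_le_ofReal
      have hNu : N u ≤ M := hUsub u hu
      have h1 : N (x q.out • u) ≤ NΔ (q.out : G) * (2 * M) := by
        have h2 : N (x q.out * u) ≤ N (x q.out) * N u := hNmul _ _
        have h3 : N (x q.out) < 2 * NΔ (q.out : G) := hd q.out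
        have h4 : (0 : ℝ) < N u := lt_of_lt_of_le one_pos (hN1 u)
        calc N (x q.out • u) = N (x q.out * u) := rfl
          _ ≤ N (x q.out) * N u := h2
          _ ≤ (2 * NΔ (q.out : G)) * M := by nlinarith [hNΔpos (q.out : G)]
          _ = NΔ (q.out : G) * (2 * M) := by ring
      exact stmt4_rpow_aux (lt_of_lt_of_le one_pos (hN1 _)) (hNΔpos _)
        (by positivity) hσ.le h1
    have hmeasF : Measurable fun y => ENNReal.ofReal ((2 * M) ^ σ * N y ^ (-σ)) := by
      apply ENNReal.measurable_ofReal.comp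
      apply Measurable.const_mul
      exact (hNcont.rpow_const fun y => Or.inl (ne_of_gt (lt_of_lt_of_le one_pos (hN1 y)))).measurable
    calc μ U * ENNReal.ofReal (NΔ (q.out : G) ^ (-σ))
        = ENNReal.ofReal (NΔ (q.out : G) ^ (-σ)) * μ (S q) := by
          have hms : μ (S q) = μ U := MeasureTheory.measure_smul (μ := μ) (x q.out) U
          rw [hms, mul_comm]
      _ = ∫⁻ _ in S q, ENNReal.ofReal (NΔ (q.out : G) ^ (-σ)) ∂μ := by
          rw [setLIntegral_const]
      _ ≤ ∫⁻ y in S q, ENNReal.ofReal ((2 * M) ^ σ * N y ^ (-σ)) ∂μ :=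
          setLIntegral_mono hmeasF hpt
  -- summing up
  set T : ENNReal := ∑' q : Q, ENNReal.ofReal (NΔ (q.out : G) ^ (-σ)) with hTdef
  have hTbound : μ U * T ≤
      ENNReal.ofReal ((2 * M) ^ σ) * ∫⁻ y, ENNReal.ofReal (N y ^ (-σ)) ∂μ := by
    calc μ U * T = ∑' q : Q, μ U * ENNReal.ofReal (NΔ (q.out : G) ^ (-σ)) :=
          ENNReal.tsum_mul_left.symm
      _ ≤ ∑' q : Q, ∫⁻ y in S q, ENNReal.ofReal ((2 * M) ^ σ * N y ^ (-σ)) ∂μ :=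
          ENNReal.tsum_le_tsum hkey
      _ = ∫⁻ y in ⋃ q, S q, ENNReal.ofReal ((2 * M) ^ σ * N y ^ (-σ)) ∂μ :=
          (lintegral_iUnion hSmeas hdisj _).symm
      _ ≤ ∫⁻ y, ENNReal.ofReal ((2 * M) ^ σ * N y ^ (-σ)) ∂μ :=
          setLIntegral_le_lintegral _ _
      _ = ENNReal.ofReal ((2 * M) ^ σ) * ∫⁻ y, ENNReal.ofReal (N y ^ (-σ)) ∂μ := by
          rw [← lintegral_const_mul' _ _ ENNReal.ofReal_ne_top]
          congr 1
          funext y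
          rw [← ENNReal.ofReal_mul (by positivity)]
  have hTfin : T ≠ ⊤ := by
    have hfin2 : ENNReal.ofReal ((2 * M) ^ σ) * ∫⁻ y, ENNReal.ofReal (N y ^ (-σ)) ∂μ < ⊤ :=
      ENNReal.mul_lt_top ENNReal.ofReal_lt_top hint
    have hμUT : μ U * T < ⊤ := lt_of_le_of_lt hTbound hfin2
    intro hTtop
    rw [hTtop, ENNReal.mul_top hμU0.ne'] at hμUT
    exact lt_irrefl _ hμUT
  have hsum0 : Summable (fun q : Q => NΔ (q.out : G) ^ (-σ)) := by
    have h := ENNReal.summable_toReal hTfin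
    have heq : (fun q : Q => (ENNReal.ofReal (NΔ (q.out : G) ^ (-σ))).toReal) =
        fun q : Q => NΔ (q.out : G) ^ (-σ) := by
      funext q
      exact ENNReal.toReal_ofReal (Real.rpow_nonneg (hNΔpos _).le _)
    rwa [heq] at h
  set A : ℝ := ∑' q : Q, NΔ (q.out : G) ^ (-σ) with hAdef
  -- final conclusion
  refine ⟨c * 2 ^ σ * A, fun g => ?_⟩
  set Ig : ℝ := ⨅ γ₀ : ↥Γ, N ((γ₀ : G) * g) with hIgdef
  have hIg1 : (1 : ℝ) ≤ Ig := le_ciInf fun γ₀ => hN1 _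
  have hIgpos : (0 : ℝ) < Ig := lt_of_lt_of_le one_pos hIg1
  obtain ⟨γ₁, hγ₁⟩ : ∃ γ₁ : ↥Γ, N ((γ₁ : G) * g) < 2 * Ig :=
    exists_lt_of_ciInf_lt (by nlinarith)
  -- the equivalence of the quotient induced by right multiplication by γ₁⁻¹
  have hcompat : ∀ a b : ↥Γ, Setoid.r a b → Setoid.r (a * γ₁⁻¹) (b * γ₁⁻¹) := by
    intro a b hab
    rw [QuotientGroup.rightRel_apply] at hab ⊢
    simpa [mul_assoc] using hab
  have hcompat' : ∀ a b : ↥Γ, Setoid.r a b → Setoid.r (a * γ₁) (b * γ₁) := by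
    intro a b hab
    rw [QuotientGroup.rightRel_apply] at hab ⊢
    simpa [mul_assoc] using hab
  set e : Q ≃ Q :=
    { toFun := Quotient.map (fun ξ => ξ * γ₁⁻¹) hcompat
      invFun := Quotient.map (fun ξ => ξ * γ₁) hcompat'
      left_inv := by
        intro q
        induction q using Quotient.inductionOn with
        | h a => simp [Quotient.map_mk]
      right_inv := by
        intro q
        induction q using Quotient.inductionOn with
        | h a => simp [Quotient.map_mk] } with hedef
  have hout : ∀ q : Q, NΔ ((q.out : G) * (γ₁ : G)⁻¹) = NΔ (((e q).out : G)) := by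
    intro q
    have heq : e q = ⟦q.out * γ₁⁻¹⟧ := by
      conv_lhs => rw [← Quotient.out_eq q]
      rfl
    have hrel : Setoid.r ((e q).out) (q.out * γ₁⁻¹) := by
      apply Quotient.exact
      rw [Quotient.out_eq, heq]
    rw [QuotientGroup.rightRel_apply] at hrel
    have hmem : ((q.out * γ₁⁻¹) * ((e q).out)⁻¹ : ↥Γ) ∈ (H ⊓ Γ).subgroupOf Γ := hrel
    rw [Subgroup.mem_subgroupOf] at hmem
    have hfact : (q.out : G) * (γ₁ : G)⁻¹ =
        (((q.out * γ₁⁻¹) * ((e q).out)⁻¹ : ↥Γ) : G) * ((e q).out : G) := by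
      push_cast
      group
    rw [hfact, hNΔinv _ hmem]
  have hkey2 : ∀ q : Q, ‖f ((q.out : G) * g)‖ ≤
      (c * (2 * Ig) ^ σ) * NΔ (((e q).out : G)) ^ (-σ) := by
    intro q
    have h1 : ‖f ((q.out : G) * g)‖ ≤ c * NΔ ((q.out : G) * g) ^ (-σ) := hfbd _
    have h2 : NΔ ((q.out : G) * (γ₁ : G)⁻¹) ≤ NΔ ((q.out : G) * g) * (2 * Ig) := by
      have h := hNΔmul ((q.out : G) * (γ₁ : G)⁻¹) ((γ₁ : G) * g)
      rw [show ((q.out : G) * (γ₁ : G)⁻¹) * ((γ₁ : G) * g) = (q.out : G) * g by group] at h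
      calc NΔ ((q.out : G) * (γ₁ : G)⁻¹) ≤ NΔ ((q.out : G) * g) * N ((γ₁ : G) * g) := h
        _ ≤ NΔ ((q.out : G) * g) * (2 * Ig) := by
            nlinarith [hNΔpos ((q.out : G) * g)]
    have h3 : NΔ ((q.out : G) * g) ^ (-σ) ≤
        (2 * Ig) ^ σ * NΔ ((q.out : G) * (γ₁ : G)⁻¹) ^ (-σ) :=
      stmt4_rpow_aux (hNΔpos _) (hNΔpos _) (by positivity) hσ.le h2
    rw [hout q] at h3
    calc ‖f ((q.out : G) * g)‖ ≤ c * NΔ ((q.out : G) * g) ^ (-σ) := h1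
      _ ≤ c * ((2 * Ig) ^ σ * NΔ (((e q).out : G)) ^ (-σ)) :=
          mul_le_mul_of_nonneg_left h3 hc
      _ = (c * (2 * Ig) ^ σ) * NΔ (((e q).out : G)) ^ (-σ) := by ring
  have hsume : Summable (fun q : Q => NΔ (((e q).out : G)) ^ (-σ)) :=
    (e.summable_iff (f := fun q : Q => NΔ ((q.out : G)) ^ (-σ))).2 hsum0
  have hsumbound : Summable (fun q : Q => (c * (2 * Ig) ^ σ) * NΔ (((e q).out : G)) ^ (-σ)) :=
    hsume.mul_left _
  have hsummain : Summable (fun q : Q => ‖f ((q.out : G) * g)‖) :=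
    Summable.of_nonneg_of_le (fun q => norm_nonneg _) hkey2 hsumbound
  refine ⟨hsummain, ?_⟩
  have htsum : ∑' q : Q, ‖f ((q.out : G) * g)‖ ≤
      (c * (2 * Ig) ^ σ) * A := by
    calc ∑' q : Q, ‖f ((q.out : G) * g)‖
        ≤ ∑' q : Q, (c * (2 * Ig) ^ σ) * NΔ (((e q).out : G)) ^ (-σ) :=
          Summable.tsum_le_tsum hkey2 hsummain hsumbound
      _ = (c * (2 * Ig) ^ σ) * ∑' q : Q, NΔ (((e q).out : G)) ^ (-σ) := tsum_mul_left
      _ = (c * (2 * Ig) ^ σ) * A := by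
          rw [e.tsum_eq (f := fun q : Q => NΔ ((q.out : G)) ^ (-σ))]
  have hfinal : (c * (2 * Ig) ^ σ) * A = (c * 2 ^ σ * A) * Ig ^ σ := by
    rw [Real.mul_rpow (by norm_num) hIgpos.le]
    ring
  rw [hfinal] at htsum
  exact htsum
end

section
/- Let N be a norm on G, σ > 0 with ∫_G N(g)^{-σ} dμ(g) < ∞, Γ a discrete subgroup of G, H a closed subgroup of G, and Δ = H ∩ Γ. Suppose f : G → ℂ is continuous, satisfies f(δg) = f(g) for all δ ∈ Δ and g ∈ G, and |f(g)| ≤ c·N_Δ(g)^{-2σ} for some constant c and all g ∈ G. Then the Poincaré series P_f(g) = ∑_{γ∈Δ\Γ} f(γg) converges absolutely for every g ∈ G, and for every measurable fundamental domain D for the left action of Γ on G one has ∫_D |P_f(g)|² dμ(g) < ∞. -/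
open MeasureTheory Pointwise

lemma aux_rpow {a b C s : ℝ} (ha : 0 < a) (hb : 0 < b) (hC : 0 < C) (hs : 0 ≤ s)
    (h : b ≤ C * a) : a ^ (-s) ≤ C ^ s * b ^ (-s) := by
  rw [Real.rpow_neg ha.le, Real.rpow_neg hb.le]
  have h1 : b ^ s ≤ C ^ s * a ^ s := by
    calc b ^ s ≤ (C * a) ^ s := Real.rpow_le_rpow hb.le h hs
    _ = C ^ s * a ^ s := Real.mul_rpow hC.le ha.le
  have hbs : 0 < b ^ s := Real.rpow_pos_of_pos hb s
  have has : 0 < a ^ s := Real.rpow_pos_of_pos ha s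
  rw [← one_div, ← one_div, mul_one_div, div_le_div_iff₀ has hbs, one_mul]
  exact h1

/-- Uniform bound on the full sum over the discrete subgroup `Γ`. -/
lemma aux_unif {G : Type*} [Group G] [TopologicalSpace G] [IsTopologicalGroup G]
    [LocallyCompactSpace G] [T2Space G] [SecondCountableTopology G]
    [MeasurableSpace G] [BorelSpace G]
    (μ : Measure G) [μ.IsHaarMeasure] [μ.IsMulRightInvariant]
    (N : G → ℝ) (hNcont : Continuous N) (hN1 : ∀ g, 1 ≤ N g)
    (hNmul : ∀ g h : G, N (g * h) ≤ N g * N h)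
    (σ : ℝ) (hσ : 0 < σ)
    (hint : ∫⁻ g, ENNReal.ofReal (N g ^ (-σ)) ∂μ < ⊤)
    (Γ : Subgroup G) (hΓ : DiscreteTopology Γ) :
    ∃ K : ENNReal, K < ⊤ ∧ ∀ g : G,
      ∑' γ : Γ, ENNReal.ofReal (N ((γ : G) * g) ^ (-(2 * σ))) ≤ K := by
  haveI : Countable Γ := (TopologicalSpace.separableSpace_iff_countable).mp inferInstance
  obtain ⟨V₀, hV₀open, hV₀mem, hV₀Γ⟩ : ∃ V₀ : Set G, IsOpen V₀ ∧ (1 : G) ∈ V₀ ∧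
      ∀ x : Γ, (x : G) ∈ V₀ → x = 1 := by
    have h1 : IsOpen ({1} : Set Γ) := isOpen_discrete _
    rw [isOpen_induced_iff] at h1
    obtain ⟨t, ht, hts⟩ := h1
    refine ⟨t, ht, ?_, ?_⟩
    · have : (1 : Γ) ∈ (Subtype.val ⁻¹' t : Set Γ) := by rw [hts]; rfl
      exact this
    · intro x hx
      have : x ∈ (Subtype.val ⁻¹' t : Set Γ) := hx
      rw [hts] at this
      exact this
  obtain ⟨Kc, hKcnhds, _, hKccomp⟩ := local_compact_nhds (x := (1 : G)) (Filter.univ_mem)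
  have hKcmem : (1:G) ∈ interior Kc := mem_interior_iff_mem_nhds.mpr hKcnhds
  set V : Set G := V₀ ∩ interior Kc with hV
  have hVopen : IsOpen V := hV₀open.inter isOpen_interior
  have hVmem : (1:G) ∈ V := ⟨hV₀mem, hKcmem⟩
  have hVsub : V ⊆ V₀ := Set.inter_subset_left
  have hVK : V ⊆ Kc := fun x hx => interior_subset hx.2
  obtain ⟨U, hUopen, hUmem, hUU⟩ := exists_open_nhds_one_mul_subset (hVopen.mem_nhds hVmem)
  have hUV : U ⊆ V := by
    intro x hx
    have : x * 1 ∈ U * U := Set.mul_mem_mul hx hUmem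
    rw [mul_one] at this
    exact hUU this
  set W : Set G := U ∩ U⁻¹ with hWdef
  have hWopen : IsOpen W := hUopen.inter (hUopen.inv)
  have hWmem : (1:G) ∈ W := ⟨hUmem, by simpa using hUmem⟩
  have hWinv : ∀ x ∈ W, x⁻¹ ∈ W := fun x hx => ⟨hx.2, by simpa using hx.1⟩
  have hWV₀ : ∀ a ∈ W, ∀ b ∈ W, a⁻¹ * b ∈ V₀ := by
    intro a ha b hb
    exact hVsub (hUU (Set.mul_mem_mul (hWinv a ha).1 hb.1))
  have hWK : W ⊆ Kc := fun x hx => hVK (hUV hx.1)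
  have hclW : IsCompact (closure W) :=
    hKccomp.of_isClosed_subset isClosed_closure
      ((closure_minimal hWK hKccomp.isClosed))
  obtain ⟨x₀, hx₀, hmax⟩ := hclW.exists_isMaxOn ⟨1, subset_closure hWmem⟩ hNcont.continuousOn
  set C : ℝ := N x₀ with hC
  have hC1 : (1:ℝ) ≤ C := hN1 x₀
  have hC0 : (0:ℝ) < C := lt_of_lt_of_le one_pos hC1
  have hNW : ∀ w ∈ W, N w ≤ C := fun w hw => hmax (subset_closure hw)
  have hμW0 : 0 < μ W := hWopen.measure_pos μ ⟨1, hWmem⟩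
  have hμWtop : μ W < ⊤ := lt_of_le_of_lt (measure_mono hWK) hKccomp.measure_lt_top
  set I : ENNReal := ∫⁻ g, ENNReal.ofReal (N g ^ (-σ)) ∂μ with hI
  set K : ENNReal := ENNReal.ofReal (C ^ (2*σ)) * I / μ W with hK
  have hKlt : K < ⊤ := by
    rw [hK]
    exact ENNReal.div_lt_top (ENNReal.mul_ne_top ENNReal.ofReal_ne_top hint.ne) hμW0.ne'
  refine ⟨K, hKlt, ?_⟩
  intro g
  set A : Γ → Set G := fun γ => (fun x => x * ((γ:G) * g)⁻¹) ⁻¹' W with hA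
  have hAmeas : ∀ γ : Γ, MeasurableSet (A γ) :=
    fun γ => (hWopen.preimage (continuous_mul_right _)).measurableSet
  have hAμ : ∀ γ : Γ, μ (A γ) = μ W := fun γ => measure_preimage_mul_right μ _ W
  have hdisj : Pairwise (Function.onFun Disjoint A) := by
    intro γ₁ γ₂ hne
    rw [Function.onFun, Set.disjoint_left]
    intro x hx1 hx2
    apply hne
    have h1 : x * ((γ₁:G) * g)⁻¹ ∈ W := hx1
    have h2 : x * ((γ₂:G) * g)⁻¹ ∈ W := hx2
    have hm : (x * ((γ₁:G) * g)⁻¹)⁻¹ * (x * ((γ₂:G) * g)⁻¹) ∈ V₀ := hWV₀ _ h1 _ h2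
    have he : (x * ((γ₁:G) * g)⁻¹)⁻¹ * (x * ((γ₂:G) * g)⁻¹) = ((γ₁ * γ₂⁻¹ : Γ) : G) := by
      push_cast
      group
    rw [he] at hm
    have h1' := hV₀Γ _ hm
    have h2' : γ₁ * γ₂⁻¹ = 1 := h1'
    exact eq_of_mul_inv_eq_one h2'
  have hNpos : ∀ x : G, (0:ℝ) < N x := fun x => lt_of_lt_of_le one_pos (hN1 x)
  have hmcont : Measurable (fun x => ENNReal.ofReal (N x ^ (-(2*σ)))) := by
    apply ENNReal.measurable_ofReal.comp
    exact (hNcont.rpow_const (fun x => Or.inl (hNpos x).ne')).measurable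
  have hptb : ∀ γ : Γ, ∀ x ∈ A γ, ENNReal.ofReal (N ((γ:G)*g) ^ (-(2*σ))) ≤
      ENNReal.ofReal (C^(2*σ)) * ENNReal.ofReal (N x ^ (-(2*σ))) := by
    intro γ x hx
    have hw : x * ((γ:G)*g)⁻¹ ∈ W := hx
    have hxle : N x ≤ C * N ((γ:G)*g) := by
      have hxe : x = (x * ((γ:G)*g)⁻¹) * ((γ:G)*g) := by group
      calc N x = N ((x * ((γ:G)*g)⁻¹) * ((γ:G)*g)) := by rw [← hxe]
      _ ≤ N (x * ((γ:G)*g)⁻¹) * N ((γ:G)*g) := hNmul _ _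
      _ ≤ C * N ((γ:G)*g) :=
        mul_le_mul_of_nonneg_right (hNW _ hw) (hNpos _).le
    have hr := aux_rpow (s := 2*σ) (hNpos ((γ:G)*g)) (hNpos x) hC0 (by positivity) hxle
    calc ENNReal.ofReal (N ((γ:G)*g) ^ (-(2*σ)))
        ≤ ENNReal.ofReal (C^(2*σ) * N x ^ (-(2*σ))) := ENNReal.ofReal_le_ofReal hr
    _ = _ := ENNReal.ofReal_mul (Real.rpow_nonneg hC0.le _)
  have hintge : ∀ γ : Γ, ENNReal.ofReal (N ((γ:G)*g) ^ (-(2*σ))) * μ W ≤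
      ENNReal.ofReal (C^(2*σ)) * ∫⁻ x in A γ, ENNReal.ofReal (N x ^ (-(2*σ))) ∂μ := by
    intro γ
    calc ENNReal.ofReal (N ((γ:G)*g) ^ (-(2*σ))) * μ W
        = ∫⁻ _ in A γ, ENNReal.ofReal (N ((γ:G)*g) ^ (-(2*σ))) ∂μ := by
          rw [setLIntegral_const, hAμ γ]
    _ ≤ ∫⁻ x in A γ, ENNReal.ofReal (C^(2*σ)) * ENNReal.ofReal (N x ^ (-(2*σ))) ∂μ :=
          setLIntegral_mono (measurable_const.mul hmcont) (hptb γ)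
    _ = ENNReal.ofReal (C^(2*σ)) * ∫⁻ x in A γ, ENNReal.ofReal (N x ^ (-(2*σ))) ∂μ :=
          lintegral_const_mul _ hmcont
  have hsum : ∑' γ : Γ, ∫⁻ x in A γ, ENNReal.ofReal (N x ^ (-(2*σ))) ∂μ ≤ I := by
    rw [← lintegral_iUnion hAmeas hdisj]
    calc ∫⁻ x in ⋃ γ, A γ, ENNReal.ofReal (N x ^ (-(2*σ))) ∂μ
        ≤ ∫⁻ x, ENNReal.ofReal (N x ^ (-(2*σ))) ∂μ := setLIntegral_le_lintegral _ _
    _ ≤ I := by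
        rw [hI]
        refine lintegral_mono fun x => ENNReal.ofReal_le_ofReal ?_
        exact Real.rpow_le_rpow_of_exponent_le (hN1 x) (by linarith)
  calc ∑' γ : Γ, ENNReal.ofReal (N ((γ:G) * g) ^ (-(2*σ)))
      ≤ ∑' γ : Γ, (ENNReal.ofReal (C^(2*σ)) *
          ∫⁻ x in A γ, ENNReal.ofReal (N x ^ (-(2*σ))) ∂μ) / μ W := by
        refine ENNReal.tsum_le_tsum fun γ => ?_
        rw [ENNReal.le_div_iff_mul_le (Or.inl hμW0.ne') (Or.inl hμWtop.ne)]
        exact hintge γ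
  _ = (ENNReal.ofReal (C^(2*σ)) *
        ∑' γ : Γ, ∫⁻ x in A γ, ENNReal.ofReal (N x ^ (-(2*σ))) ∂μ) / μ W := by
        simp_rw [div_eq_mul_inv, ENNReal.tsum_mul_right, ENNReal.tsum_mul_left]
  _ ≤ K := by
        rw [hK]
        exact ENNReal.div_le_div_right (mul_le_mul_right hsum _) _

/-- Unfolding a sum over `Γ` as a double sum over cosets. -/
lemma aux_coset {G : Type*} [Group G] (Γ : Subgroup G) (Δ' : Subgroup Γ)
    (a : Γ → ENNReal) :
    ∑' γ : Γ, a γ =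
      ∑' q : Quotient (QuotientGroup.rightRel Δ'), ∑' δ : Δ', a ((δ : Γ) * q.out) := by
  set e : Δ' × Quotient (QuotientGroup.rightRel Δ') → Γ :=
    fun p => (p.1 : Γ) * p.2.out with he
  have hinj : Function.Injective e := by
    rintro ⟨δ₁, q₁⟩ ⟨δ₂, q₂⟩ h
    simp only [he] at h
    have hq : q₁ = q₂ := by
      have hrel : (QuotientGroup.rightRel Δ') q₂.out q₁.out := by
        rw [QuotientGroup.rightRel_apply]
        have h2 : q₁.out * q₂.out⁻¹ = (δ₁ : Γ)⁻¹ * δ₂ := by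
          rw [eq_inv_mul_iff_mul_eq, ← mul_assoc, h, mul_assoc, mul_inv_cancel, mul_one]
        rw [h2]
        exact mul_mem (inv_mem δ₁.2) δ₂.2
      calc q₁ = ⟦q₁.out⟧ := (Quotient.out_eq q₁).symm
      _ = ⟦q₂.out⟧ := (Quotient.sound hrel).symm
      _ = q₂ := Quotient.out_eq q₂
    subst hq
    have hd : δ₁ = δ₂ := Subtype.ext (mul_right_cancel h)
    rw [hd]
  have hsurj : Function.Surjective e := by
    intro γ
    set q : Quotient (QuotientGroup.rightRel Δ') := ⟦γ⟧ with hqdef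
    have hrel : (QuotientGroup.rightRel Δ') q.out γ := Quotient.exact (Quotient.out_eq q)
    rw [QuotientGroup.rightRel_apply] at hrel
    refine ⟨(⟨γ * q.out⁻¹, hrel⟩, q), ?_⟩
    simp only [he]
    group
  rw [← Equiv.tsum_eq (Equiv.ofBijective e ⟨hinj, hsurj⟩) a]
  have hcongr : ∀ p : Δ' × Quotient (QuotientGroup.rightRel Δ'),
      a (Equiv.ofBijective e ⟨hinj, hsurj⟩ p) = a ((p.1 : Γ) * p.2.out) := fun p => rfl
  simp_rw [hcongr]
  rw [ENNReal.tsum_prod']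
  exact ENNReal.tsum_comm

/-- The infimum over the subgroup is controlled (up to a factor 2) by the sum. -/
lemma aux_inf {G : Type*} [Group G] (N : G → ℝ) (hN1 : ∀ g : G, 1 ≤ N g)
    (σ : ℝ) (hσ : 0 < σ) (Γ H : Subgroup G) (g : G) :
    ENNReal.ofReal ((⨅ δ : ↥(H ⊓ Γ), N ((δ : G) * g)) ^ (-(2*σ))) ≤
      2 * ∑' δ : ((H ⊓ Γ).subgroupOf Γ),
        ENNReal.ofReal (N (((δ : Γ) : G) * g) ^ (-(2*σ))) := by
  haveI : Nonempty ↥(H ⊓ Γ) := ⟨1⟩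
  set m : ℝ := ⨅ δ : ↥(H ⊓ Γ), N ((δ : G) * g) with hm
  have hm1 : 1 ≤ m := le_ciInf fun δ => hN1 _
  have hm0 : 0 < m := lt_of_lt_of_le one_pos hm1
  set t : ℝ := (2:ℝ) ^ (1/(2*σ)) with ht
  have ht1 : 1 < t := by
    rw [ht]
    rw [Real.one_lt_rpow_iff_of_pos two_pos]
    exact Or.inl ⟨one_lt_two, by positivity⟩
  have hlt : m < m * t := by nlinarith
  obtain ⟨δ₀, hδ₀⟩ := exists_lt_of_ciInf_lt (by rw [← hm]; exact hlt)
  have hNpos : (0:ℝ) < N ((δ₀ : G) * g) := lt_of_lt_of_le one_pos (hN1 _)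
  have hkey : m ^ (-(2*σ)) ≤ 2 * N ((δ₀ : G) * g) ^ (-(2*σ)) := by
    have h1 : (m*t) ^ (-(2*σ)) ≤ N ((δ₀ : G) * g) ^ (-(2*σ)) :=
      Real.rpow_le_rpow_of_nonpos hNpos hδ₀.le (by linarith)
    have h2 : (m*t) ^ (-(2*σ)) = m ^ (-(2*σ)) * (1/2) := by
      rw [Real.mul_rpow hm0.le (by positivity)]
      congr 1
      rw [ht, ← Real.rpow_mul (by norm_num : (0:ℝ) ≤ 2)]
      have he : (1/(2*σ)) * (-(2*σ)) = -1 := by field_simp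
      rw [he, Real.rpow_neg_one]
      norm_num
    linarith
  have hδ₀Γ : (δ₀ : G) ∈ Γ := δ₀.2.2
  set δ' : ((H ⊓ Γ).subgroupOf Γ) := ⟨⟨(δ₀ : G), hδ₀Γ⟩, Subgroup.mem_subgroupOf.mpr δ₀.2⟩
    with hδ'
  calc ENNReal.ofReal (m ^ (-(2*σ)))
      ≤ ENNReal.ofReal (2 * N ((δ₀ : G) * g) ^ (-(2*σ))) := ENNReal.ofReal_le_ofReal hkey
  _ = 2 * ENNReal.ofReal (N ((δ₀ : G) * g) ^ (-(2*σ))) := by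
      rw [ENNReal.ofReal_mul (by norm_num : (0:ℝ) ≤ 2)]
      norm_num
  _ ≤ _ := by
      refine mul_le_mul_right ?_ 2
      have h := ENNReal.le_tsum (f := fun δ : ((H ⊓ Γ).subgroupOf Γ) =>
        ENNReal.ofReal (N (((δ : Γ) : G) * g) ^ (-(2*σ)))) δ'
      simpa using h

/-- Let `G` be a locally compact Hausdorff second countable unimodular topological group with
Haar measure `μ`, `N` a norm on `G`, and `σ > 0` with `∫_G N(g)^{-σ} dμ(g) < ∞`.  Let `Γ` be a
discrete subgroup, `H` a closed subgroup, and `Δ = H ∩ Γ`.  If `f : G → ℂ` is continuous, left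
`Δ`-invariant, and `|f(g)| ≤ c·N_Δ(g)^{-2σ}` with `N_Δ(g) = inf_{δ∈Δ} N(δg)`, then the
Poincaré series `P_f(g) = ∑_{γ∈Δ\Γ} f(γg)` converges absolutely for every `g`, and for every
measurable fundamental domain `D` for the left action of `Γ` on `G` one has
`∫_D |P_f(g)|² dμ(g) < ∞`. -/
theorem stmt6 {G : Type*} [Group G] [TopologicalSpace G] [IsTopologicalGroup G]
    [LocallyCompactSpace G] [T2Space G] [SecondCountableTopology G]
    [MeasurableSpace G] [BorelSpace G]
    (μ : Measure G) [μ.IsHaarMeasure] [μ.IsMulRightInvariant]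
    (N : G → ℝ) (hNcont : Continuous N) (hN1 : ∀ g, 1 ≤ N g)
    (hNinv : ∀ g : G, N g⁻¹ = N g) (hNmul : ∀ g h : G, N (g * h) ≤ N g * N h)
    (σ : ℝ) (hσ : 0 < σ)
    (hint : ∫⁻ g, ENNReal.ofReal (N g ^ (-σ)) ∂μ < ⊤)
    (Γ H : Subgroup G) (hΓ : DiscreteTopology Γ) (hH : IsClosed (H : Set G))
    (f : G → ℂ) (hfcont : Continuous f)
    (hfinv : ∀ δ ∈ H ⊓ Γ, ∀ g : G, f (δ * g) = f g)
    (c : ℝ)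
    (hfbd : ∀ g : G, ‖f g‖ ≤ c * (⨅ δ : ↥(H ⊓ Γ), N ((δ : G) * g)) ^ (-(2 * σ))) :
    (∀ g : G,
      Summable (fun q : Quotient (QuotientGroup.rightRel ((H ⊓ Γ).subgroupOf Γ)) =>
        ‖f ((q.out : G) * g)‖)) ∧
    ∀ D : Set G, MeasurableSet D → IsFundamentalDomain Γ D μ →
      ∫⁻ g in D,
          (‖∑' q : Quotient (QuotientGroup.rightRel ((H ⊓ Γ).subgroupOf Γ)),
              f ((q.out : G) * g)‖₊ : ENNReal) ^ 2 ∂μ < ⊤ := by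
  classical
  haveI : Countable Γ := (TopologicalSpace.separableSpace_iff_countable).mp inferInstance
  set Δ' : Subgroup Γ := (H ⊓ Γ).subgroupOf Γ with hΔ'
  obtain ⟨K, hKlt, hK⟩ := aux_unif μ N hNcont hN1 hNmul σ hσ hint Γ hΓ
  set c₂ : ENNReal := ENNReal.ofReal c * 2 with hc₂def
  have hc₂top : c₂ ≠ ⊤ := ENNReal.mul_ne_top ENNReal.ofReal_ne_top (by norm_num)
  set nN2 : G → ENNReal := fun x => ENNReal.ofReal (N x ^ (-(2*σ))) with hnN2
  have hNpos : ∀ x : G, (0:ℝ) < N x := fun x => lt_of_lt_of_le one_pos (hN1 x)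
  -- pointwise bound on the sum of norms
  have hpt : ∀ g : G,
      ∑' q : Quotient (QuotientGroup.rightRel Δ'), ENNReal.ofReal ‖f ((q.out : G) * g)‖
        ≤ c₂ * ∑' γ : Γ, nN2 ((γ:G)*g) := by
    intro g
    have step1 : ∀ q : Quotient (QuotientGroup.rightRel Δ'),
        ENNReal.ofReal ‖f ((q.out : G) * g)‖ ≤
        ENNReal.ofReal c * (2 * ∑' δ : Δ', nN2 (((δ:Γ):G) * ((q.out : G) * g))) := by
      intro q
      have hb := hfbd ((q.out : G) * g)
      calc ENNReal.ofReal ‖f ((q.out : G) * g)‖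
          ≤ ENNReal.ofReal (c *
              (⨅ δ : ↥(H ⊓ Γ), N ((δ:G) * ((q.out : G) * g))) ^ (-(2*σ))) :=
            ENNReal.ofReal_le_ofReal hb
      _ ≤ ENNReal.ofReal c * ENNReal.ofReal
            ((⨅ δ : ↥(H ⊓ Γ), N ((δ:G) * ((q.out : G) * g))) ^ (-(2*σ))) := by
            rcases le_or_gt c 0 with hc | hc
            · have hz : c * (⨅ δ : ↥(H ⊓ Γ), N ((δ:G) * ((q.out : G) * g))) ^ (-(2*σ)) ≤ 0 :=
                mul_nonpos_of_nonpos_of_nonneg hc (Real.rpow_nonneg (by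
                  haveI : Nonempty ↥(H ⊓ Γ) := ⟨1⟩
                  exact le_trans zero_le_one (le_ciInf fun δ => hN1 _)) _)
              rw [ENNReal.ofReal_eq_zero.mpr hz]
              exact zero_le
            · rw [ENNReal.ofReal_mul hc.le]
      _ ≤ ENNReal.ofReal c * (2 * ∑' δ : Δ', nN2 (((δ:Γ):G) * ((q.out : G) * g))) :=
            mul_le_mul_right (aux_inf N hN1 σ hσ Γ H ((q.out : G) * g)) _
    calc ∑' q : Quotient (QuotientGroup.rightRel Δ'), ENNReal.ofReal ‖f ((q.out : G) * g)‖
        ≤ ∑' q : Quotient (QuotientGroup.rightRel Δ'),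
            ENNReal.ofReal c * (2 * ∑' δ : Δ', nN2 (((δ:Γ):G) * ((q.out : G) * g))) :=
          ENNReal.tsum_le_tsum step1
    _ = c₂ * ∑' q : Quotient (QuotientGroup.rightRel Δ'),
            ∑' δ : Δ', nN2 (((δ:Γ):G) * ((q.out : G) * g)) := by
          simp_rw [← mul_assoc]
          rw [ENNReal.tsum_mul_left]
    _ = c₂ * ∑' γ : Γ, nN2 ((γ:G)*g) := by
          congr 1
          rw [aux_coset Γ Δ' (fun γ => nN2 ((γ:G)*g))]
          refine tsum_congr fun q => tsum_congr fun δ => ?_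
          congr 1
          push_cast
          rw [mul_assoc]
  have hptK : ∀ g : G,
      ∑' q : Quotient (QuotientGroup.rightRel Δ'), ENNReal.ofReal ‖f ((q.out : G) * g)‖
        ≤ c₂ * K := fun g => (hpt g).trans (mul_le_mul_right (hK g) _)
  have hsummable : ∀ g : G,
      Summable (fun q : Quotient (QuotientGroup.rightRel Δ') => ‖f ((q.out : G) * g)‖) := by
    intro g
    have hfin : (∑' q : Quotient (QuotientGroup.rightRel Δ'),
        (‖f ((q.out : G) * g)‖₊ : ENNReal)) ≠ ⊤ := by
      have heq : ∀ q : Quotient (QuotientGroup.rightRel Δ'),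
          (‖f ((q.out : G) * g)‖₊ : ENNReal) = ENNReal.ofReal ‖f ((q.out : G) * g)‖ :=
        fun q => (ofReal_norm _).symm
      simp_rw [heq]
      exact ((hptK g).trans_lt (ENNReal.mul_lt_top hc₂top.lt_top hKlt)).ne
    have hs := ENNReal.tsum_coe_ne_top_iff_summable.mp hfin
    have := NNReal.summable_coe.mpr hs
    simpa [coe_nnnorm] using this
  refine ⟨hsummable, ?_⟩
  intro D hDmeas hD
  have hmcont : Measurable nN2 := by
    apply ENNReal.measurable_ofReal.comp
    exact (hNcont.rpow_const (fun x => Or.inl (hNpos x).ne')).measurable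
  have hpw : ∀ g : G,
      ((‖∑' q : Quotient (QuotientGroup.rightRel Δ'), f ((q.out : G) * g)‖₊ : ENNReal))^2 ≤
        (c₂^2 * K) * ∑' γ : Γ, nN2 ((γ:G)*g) := by
    intro g
    have h1 : ((‖∑' q : Quotient (QuotientGroup.rightRel Δ'), f ((q.out : G) * g)‖₊ : ENNReal))
        ≤ ∑' q : Quotient (QuotientGroup.rightRel Δ'), ENNReal.ofReal ‖f ((q.out : G) * g)‖ := by
      rw [← enorm_eq_nnnorm, ← ofReal_norm]
      calc ENNReal.ofReal ‖∑' q : Quotient (QuotientGroup.rightRel Δ'), f ((q.out : G) * g)‖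
          ≤ ENNReal.ofReal (∑' q : Quotient (QuotientGroup.rightRel Δ'), ‖f ((q.out : G) * g)‖) :=
            ENNReal.ofReal_le_ofReal (norm_tsum_le_tsum_norm (hsummable g))
      _ = _ := ENNReal.ofReal_tsum_of_nonneg (fun _ => norm_nonneg _) (hsummable g)
    set S : ENNReal := ∑' γ : Γ, nN2 ((γ:G)*g) with hS
    calc ((‖∑' q : Quotient (QuotientGroup.rightRel Δ'), f ((q.out : G) * g)‖₊ : ENNReal))^2
        ≤ (c₂ * S)^2 := by
          have h2 := (h1.trans (hpt g))
          exact pow_le_pow_left' h2 2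
    _ = c₂^2 * (S * S) := by ring
    _ ≤ c₂^2 * (K * S) := by
          exact mul_le_mul_right (mul_le_mul_left (hK g) S) _
    _ = (c₂^2 * K) * S := by ring
  have hmeas2 : ∀ γ : Γ, AEMeasurable (fun g : G => nN2 ((γ:G)*g)) (μ.restrict D) :=
    fun γ => (hmcont.comp (measurable_const_mul ((γ:G)))).aemeasurable
  calc ∫⁻ g in D,
        (‖∑' q : Quotient (QuotientGroup.rightRel Δ'), f ((q.out : G) * g)‖₊ : ENNReal) ^ 2 ∂μ
      ≤ ∫⁻ g in D, (c₂^2 * K) * ∑' γ : Γ, nN2 ((γ:G)*g) ∂μ := lintegral_mono fun g => hpw g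
  _ = (c₂^2 * K) * ∫⁻ g in D, ∑' γ : Γ, nN2 ((γ:G)*g) ∂μ :=
      lintegral_const_mul' _ _ (ENNReal.mul_ne_top (ENNReal.pow_ne_top hc₂top) hKlt.ne)
  _ = (c₂^2 * K) * ∑' γ : Γ, ∫⁻ g in D, nN2 ((γ:G)*g) ∂μ := by
      rw [lintegral_tsum hmeas2]
  _ = (c₂^2 * K) * ∫⁻ x, nN2 x ∂μ := by
      congr 1
      rw [hD.lintegral_eq_tsum'' nN2]
      rfl
  _ < ⊤ := by
      refine ENNReal.mul_lt_top (ENNReal.mul_lt_top (ENNReal.pow_ne_top hc₂top).lt_top hKlt) ?_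
      calc ∫⁻ x, nN2 x ∂μ ≤ ∫⁻ x, ENNReal.ofReal (N x ^ (-σ)) ∂μ := by
            refine lintegral_mono fun x => ENNReal.ofReal_le_ofReal ?_
            exact Real.rpow_le_rpow_of_exponent_le (hN1 x) (by linarith)
      _ < ⊤ := hint
end

section
/- For every real a ≠ 0 and every complex s with Re(s) > 1/2, the integral ∫_ℝ (1+x²)^{-s} e^{-2πiax} dx and the integral ∫_0^∞ e^{-π(t+1/t)|a|} t^{s-1/2} dt/t both converge absolutely, and ∫_ℝ (1+x²)^{-s} e^{-2πiax} dx = (π^s · |a|^{s-1/2} / Γ(s)) · ∫_0^∞ e^{-π(t+1/t)|a|} t^{s-1/2} dt/t. -/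
open Real MeasureTheory

private lemma aux_int {c σ : ℝ} (hc : 0 < c) (hσ : 1/2 < σ) :
    IntegrableOn (fun u : ℝ => Real.exp (-(c*u)) * u ^ (σ - 3/2)) (Set.Ioi 0) := by
  have h0 : (0:ℝ) < σ - 1/2 := by linarith
  have h := Real.GammaIntegral_convergent h0
  have h2 : IntegrableOn (fun u : ℝ => Real.exp (-(c*u)) * (c*u) ^ (σ - 1/2 - 1)) (Set.Ioi 0) := by
    have := (integrableOn_Ioi_comp_mul_left_iff
      (fun x : ℝ => Real.exp (-x) * x ^ (σ - 1/2 - 1)) 0 hc).mpr (by simpa using h)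
    simpa using this
  have h4 : IntegrableOn
      (fun u : ℝ => (c ^ (σ - 3/2))⁻¹ * (Real.exp (-(c*u)) * (c*u) ^ (σ - 1/2 - 1)))
      (Set.Ioi 0) := h2.const_mul _
  refine IntegrableOn.congr_fun h4 (fun u hu => ?_) measurableSet_Ioi
  rw [Set.mem_Ioi] at hu
  rw [Real.mul_rpow hc.le hu.le, show σ - 1/2 - 1 = σ - 3/2 by ring]
  have : c ^ (σ - 3/2) ≠ 0 := (Real.rpow_pos_of_pos hc _).ne'
  field_simp

private lemma aux_int2 {s : ℂ} (hσ : 1/2 < s.re) {c d : ℝ} (hc : 0 < c) (hd : 0 ≤ d) :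
    IntegrableOn (fun t : ℝ => Complex.exp (-(c*t + d/t : ℝ)) * (t:ℂ)^(s - 3/2))
      (Set.Ioi 0) := by
  have hcont : ContinuousOn
      (fun t : ℝ => Complex.exp (-(c*t + d/t : ℝ)) * (t:ℂ)^(s - 3/2)) (Set.Ioi 0) := by
    simp_rw [← Complex.ofReal_neg]
    apply ContinuousOn.mul
    · apply Continuous.comp_continuousOn Complex.continuous_exp
      apply Continuous.comp_continuousOn Complex.continuous_ofReal
      exact (ContinuousOn.add (continuousOn_const.mul continuousOn_id)
          (continuousOn_const.div continuousOn_id fun t ht => ne_of_gt ht)).neg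
    · apply ContinuousOn.cpow
      · exact Complex.continuous_ofReal.continuousOn
      · exact continuousOn_const
      · intro t ht
        exact Complex.ofReal_mem_slitPlane.mpr ht
  refine Integrable.mono' (aux_int hc hσ)
    (hcont.aestronglyMeasurable measurableSet_Ioi) ?_
  filter_upwards [ae_restrict_mem measurableSet_Ioi] with t ht
  rw [Set.mem_Ioi] at ht
  rw [norm_mul, Complex.norm_exp,
    Complex.norm_cpow_eq_rpow_re_of_pos ht]
  have h0 : (-(c*t + d/t : ℝ) : ℂ).re = -(c*t + d/t) := by
    rw [← Complex.ofReal_neg, Complex.ofReal_re]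
  rw [h0]
  have h1 : Real.exp (-(c*t + d/t)) ≤ Real.exp (-(c*t)) := by
    apply Real.exp_le_exp.mpr
    have : 0 ≤ d / t := div_nonneg hd ht.le
    linarith
  have h2 : (s - 3/2).re = s.re - 3/2 := by simp
  rw [h2]
  exact mul_le_mul_of_nonneg_right h1 (Real.rpow_nonneg ht.le _)

private lemma aux_gauss (a : ℝ) (s : ℂ) (u : ℝ) (hu : 0 < u) :
    ∫ x : ℝ, (u:ℂ)^(s-1) * Complex.exp (-((1+x^2)*u : ℝ)) *
      Complex.exp (-(2*π*a*x:ℝ) * Complex.I)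
    = (Real.sqrt π : ℂ) * (u:ℂ)^(s - 3/2) * Complex.exp (-(u + π^2*a^2/u : ℝ)) := by
  have hπ : (π:ℂ) ≠ 0 := Complex.ofReal_ne_zero.mpr pi_ne_zero
  have hu0 : (u:ℂ) ≠ 0 := Complex.ofReal_ne_zero.mpr hu.ne'
  have hb : (0:ℝ) < ((u:ℂ)/(π:ℂ)).re := by
    rw [← Complex.ofReal_div, Complex.ofReal_re]
    positivity
  have hG := congrFun (fourier_gaussian_pi (b := (u:ℂ)/(π:ℂ)) hb) a
  rw [Real.fourier_real_eq_integral_exp_smul] at hG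
  simp only [smul_eq_mul] at hG
  have key : ∀ x : ℝ, (u:ℂ)^(s-1) * Complex.exp (-((1+x^2)*u : ℝ)) *
      Complex.exp (-(2*π*a*x:ℝ) * Complex.I)
      = ((u:ℂ)^(s-1) * Complex.exp (-(u:ℝ))) *
        (Complex.exp ((-2*π*x*a : ℝ) * Complex.I) *
          Complex.exp (-(π:ℂ) * ((u:ℂ)/(π:ℂ)) * (x:ℂ)^2)) := by
    intro x
    rw [show (-((1+x^2)*u : ℝ) : ℂ) = (-(u:ℝ) : ℂ) + (-(π:ℂ) * ((u:ℂ)/(π:ℂ)) * (x:ℂ)^2) by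
      push_cast; field_simp; ring]
    rw [Complex.exp_add, show ((-(2*π*a*x:ℝ) : ℂ)) = ((-2*π*x*a : ℝ) : ℂ) by push_cast; ring]
    ring
  simp_rw [key]
  rw [MeasureTheory.integral_const_mul, hG]
  have h1 : 1 / ((u:ℂ)/(π:ℂ)) ^ (1/2 : ℂ) = ((Real.sqrt (π/u) : ℝ) : ℂ) := by
    rw [show ((u:ℂ)/(π:ℂ)) = ((u/π : ℝ) : ℂ) by push_cast; ring]
    rw [one_div, ← Complex.cpow_neg]
    rw [show ((u/π : ℝ) : ℂ) = (((π/u)⁻¹ : ℝ) : ℂ) by rw [inv_div]]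
    rw [Complex.ofReal_inv, Complex.inv_cpow, ← Complex.cpow_neg, neg_neg]
    · rw [Real.sqrt_eq_rpow, Complex.ofReal_cpow (by positivity), Complex.ofReal_div]
      norm_num
    · rw [Complex.arg_ofReal_of_nonneg (by positivity)]
      exact pi_ne_zero.symm
  rw [h1]
  have h2 : -(π:ℂ)/((u:ℂ)/(π:ℂ)) * (a:ℂ)^2 = ((-(π^2*a^2/u) : ℝ) : ℂ) := by
    push_cast; rw [div_div_eq_mul_div]; ring
  rw [h2]
  have h3 : ((Real.sqrt (π/u) : ℝ) : ℂ) = (Real.sqrt π : ℂ) * (u:ℂ)^(-(1/2) : ℂ) := by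
    rw [Real.sqrt_div pi_pos.le, Complex.ofReal_div, div_eq_mul_inv]
    congr 1
    rw [Real.sqrt_eq_rpow, Complex.ofReal_cpow hu.le, Complex.cpow_neg]
    norm_num
  rw [h3, show (-(u + π^2*a^2/u : ℝ) : ℂ) = (-(u:ℝ) : ℂ) + ((-(π^2*a^2/u) : ℝ) : ℂ) by
    push_cast; ring, Complex.exp_add]
  rw [show s - 3/2 = (s-1) + (-(1/2)) by ring, Complex.cpow_add _ _ hu0]
  ring

set_option maxHeartbeats 1000000 in
/-- For real `a ≠ 0` and complex `s` with `Re(s) > 1/2`, the integrals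
`∫_ℝ (1+x²)^{-s} e^{-2πiax} dx` and `∫_0^∞ e^{-π(t+1/t)|a|} t^{s-1/2} dt/t` both converge
absolutely, and
`∫_ℝ (1+x²)^{-s} e^{-2πiax} dx = (π^s·|a|^{s-1/2}/Γ(s)) · ∫_0^∞ e^{-π(t+1/t)|a|} t^{s-1/2} dt/t`. -/
theorem stmt9 (a : ℝ) (ha : a ≠ 0) (s : ℂ) (hs : 1 / 2 < s.re) :
    Integrable (fun x : ℝ => ((1 + x ^ 2 : ℝ) : ℂ) ^ (-s) *
        Complex.exp (-(2 * π * a * x : ℝ) * Complex.I)) ∧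
    IntegrableOn (fun t : ℝ =>
        Complex.exp (-(π * (t + 1 / t) * |a| : ℝ)) * (t : ℂ) ^ (s - 1 / 2) / (t : ℂ))
      (Set.Ioi 0) ∧
    ∫ x : ℝ, ((1 + x ^ 2 : ℝ) : ℂ) ^ (-s) * Complex.exp (-(2 * π * a * x : ℝ) * Complex.I)
      = ((π : ℂ) ^ s * ((|a| : ℝ) : ℂ) ^ (s - 1 / 2) / Complex.Gamma s) *
        ∫ t in Set.Ioi (0 : ℝ),
          Complex.exp (-(π * (t + 1 / t) * |a| : ℝ)) * (t : ℂ) ^ (s - 1 / 2) / (t : ℂ) := by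
  have hs0 : 0 < s.re := by linarith
  have hΓ : Complex.Gamma s ≠ 0 := Complex.Gamma_ne_zero_of_re_pos hs0
  set c : ℝ := π * |a| with hc_def
  have hc : 0 < c := mul_pos pi_pos (abs_pos.mpr ha)
  set F : ℝ → ℝ → ℂ := fun u x => (u:ℂ)^(s-1) * Complex.exp (-((1+x^2)*u : ℝ)) *
      Complex.exp (-(2*π*a*x:ℝ) * Complex.I) with hF_def
  -- the exact norm of F
  have hnorm : ∀ u ∈ Set.Ioi (0:ℝ), ∀ x : ℝ,
      ‖F u x‖ = u ^ (s.re - 1) * Real.exp (-((1+x^2)*u)) := by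
    intro u hu x
    rw [Set.mem_Ioi] at hu
    rw [hF_def]
    simp only [norm_mul, Complex.norm_exp,
      Complex.norm_cpow_eq_rpow_re_of_pos hu]
    have h1 : (-((1+x^2)*u : ℝ) : ℂ).re = -((1+x^2)*u) := by
      rw [← Complex.ofReal_neg, Complex.ofReal_re]
    have h2 : ((-(2*π*a*x:ℝ) : ℂ) * Complex.I).re = 0 := by simp
    rw [h1, h2, Real.exp_zero, mul_one, Complex.sub_re, Complex.one_re]
  -- measurability on the product space
  have hmeas : AEStronglyMeasurable (fun p : ℝ × ℝ => F p.1 p.2)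
      ((volume.restrict (Set.Ioi 0)).prod volume) := by
    have heq : (volume.restrict (Set.Ioi (0:ℝ))).prod (volume : Measure ℝ)
        = (volume : Measure (ℝ × ℝ)).restrict (Set.Ioi 0 ×ˢ Set.univ) := by
      rw [Measure.volume_eq_prod, ← Measure.prod_restrict, Measure.restrict_univ]
    rw [heq]
    apply ContinuousOn.aestronglyMeasurable ?_ (measurableSet_Ioi.prod MeasurableSet.univ)
    apply ContinuousOn.mul
    apply ContinuousOn.mul
    · apply ContinuousOn.cpow
      · exact (Complex.continuous_ofReal.comp continuous_fst).continuousOn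
      · exact continuousOn_const
      · rintro ⟨u, x⟩ ⟨hu, -⟩
        exact Complex.ofReal_mem_slitPlane.mpr hu
    · apply Continuous.continuousOn
      apply Complex.continuous_exp.comp
      continuity
    · apply Continuous.continuousOn
      apply Complex.continuous_exp.comp
      continuity
  -- integrability of x-slices
  have hslice : ∀ u ∈ Set.Ioi (0:ℝ), Integrable (fun x => F u x) := by
    intro u hu
    have hu' : (0:ℝ) < u := hu
    apply Integrable.mono'
      (g := fun x : ℝ => (u ^ (s.re - 1) * Real.exp (-u)) * Real.exp (-u * x^2))
    · exact (integrable_exp_neg_mul_sq hu').const_mul _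
    · apply Continuous.aestronglyMeasurable
      rw [hF_def]
      apply Continuous.mul
      apply Continuous.mul
      · exact continuous_const
      · apply Complex.continuous_exp.comp
        continuity
      · apply Complex.continuous_exp.comp
        continuity
    · filter_upwards with x
      rw [hnorm u hu x, show -((1+x^2)*u) = -u + (-u * x^2) by ring, Real.exp_add]
      rw [mul_assoc]
  -- the integral of the norm over x
  have hnormint : ∀ u ∈ Set.Ioi (0:ℝ), ∫ x : ℝ, ‖F u x‖
      = Real.sqrt π * (Real.exp (-(1*u)) * u ^ (s.re - 3/2)) := by
    intro u hu
    have hu' : (0:ℝ) < u := hu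
    calc ∫ x : ℝ, ‖F u x‖
        = ∫ x : ℝ, (u ^ (s.re - 1) * Real.exp (-u)) * Real.exp (-u * x^2) := by
          apply integral_congr_ae
          filter_upwards with x
          rw [hnorm u hu x, show -((1+x^2)*u) = -u + (-u * x^2) by ring, Real.exp_add]
          ring
      _ = (u ^ (s.re - 1) * Real.exp (-u)) * Real.sqrt (π / u) := by
          rw [MeasureTheory.integral_const_mul, integral_gaussian]
      _ = Real.sqrt π * (Real.exp (-(1*u)) * u ^ (s.re - 3/2)) := by
          rw [Real.sqrt_div pi_pos.le, Real.sqrt_eq_rpow u, div_eq_mul_inv,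
            ← Real.rpow_neg hu'.le, one_mul]
          rw [show s.re - 3/2 = (s.re - 1) + -(1/2) by ring, Real.rpow_add hu']
          ring
  -- integrability on the product
  have hprod : Integrable (fun p : ℝ × ℝ => F p.1 p.2)
      ((volume.restrict (Set.Ioi 0)).prod volume) := by
    rw [MeasureTheory.integrable_prod_iff hmeas]
    constructor
    · filter_upwards [ae_restrict_mem measurableSet_Ioi] with u hu
      exact hslice u hu
    · have hI := (aux_int one_pos hs).const_mul (Real.sqrt π)
      apply Integrable.congr hI
      filter_upwards [ae_restrict_mem measurableSet_Ioi] with u hu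
      exact (hnormint u hu).symm
  -- inner integral over u (Gamma integral)
  have key1 : ∀ x : ℝ, (∫ u in Set.Ioi (0:ℝ), F u x)
      = Complex.Gamma s * (((1 + x ^ 2 : ℝ) : ℂ) ^ (-s) *
        Complex.exp (-(2*π*a*x:ℝ) * Complex.I)) := by
    intro x
    have hr : (0:ℝ) < 1 + x^2 := by positivity
    have h := Complex.integral_cpow_mul_exp_neg_mul_Ioi hs0 hr
    have heq : ∀ u ∈ Set.Ioi (0:ℝ), F u x
        = ((u:ℂ)^(s-1) * Complex.exp (-((1+x^2 : ℝ) * (u:ℝ) : ℂ))) *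
          Complex.exp (-(2*π*a*x:ℝ) * Complex.I) := by
      intro u hu
      rw [hF_def]
      norm_cast
    rw [setIntegral_congr_fun measurableSet_Ioi heq, integral_mul_const]
    rw [show (fun u : ℝ => (u:ℂ)^(s-1) * Complex.exp (-((1+x^2 : ℝ) * (u:ℝ) : ℂ)))
      = (fun u : ℝ => (u:ℂ)^(s-1) * Complex.exp (-((1+x^2 : ℝ) * (u:ℝ)))) by
        funext u; push_cast; ring_nf]
    rw [h]
    have : ((1:ℂ) / ((1+x^2 : ℝ) : ℂ)) ^ s = ((1 + x ^ 2 : ℝ) : ℂ) ^ (-s) := by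
      rw [one_div, Complex.inv_cpow, ← Complex.cpow_neg]
      rw [Complex.arg_ofReal_of_nonneg hr.le]
      exact pi_ne_zero.symm
    rw [this]
    ring
  -- first conjunct
  have hInt1 : Integrable (fun x : ℝ => ((1 + x ^ 2 : ℝ) : ℂ) ^ (-s) *
      Complex.exp (-(2 * π * a * x : ℝ) * Complex.I)) := by
    have h := hprod.integral_prod_right
    have h2 := h.const_mul (Complex.Gamma s)⁻¹
    apply Integrable.congr h2
    filter_upwards with x
    rw [key1 x, ← mul_assoc, inv_mul_cancel₀ hΓ, one_mul]
  -- second conjunct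
  have hInt2 : IntegrableOn (fun t : ℝ =>
      Complex.exp (-(π * (t + 1 / t) * |a| : ℝ)) * (t : ℂ) ^ (s - 1 / 2) / (t : ℂ))
      (Set.Ioi 0) := by
    refine IntegrableOn.congr_fun (aux_int2 hs hc hc.le) (fun t ht => ?_) measurableSet_Ioi
    rw [Set.mem_Ioi] at ht
    have ht0 : (t:ℂ) ≠ 0 := Complex.ofReal_ne_zero.mpr ht.ne'
    rw [show (π * (t + 1 / t) * |a| : ℝ) = c * t + c / t by rw [hc_def]; field_simp]
    rw [mul_div_assoc, show (s : ℂ) - 3/2 = (s - 1/2) - 1 by ring,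
      Complex.cpow_sub _ _ ht0, Complex.cpow_one, mul_div_assoc]
  refine ⟨hInt1, hInt2, ?_⟩
  -- the functional equation
  -- Step 1: Fubini
  have hswap : (∫ u in Set.Ioi (0:ℝ), ∫ x : ℝ, F u x) = ∫ x : ℝ, ∫ u in Set.Ioi (0:ℝ), F u x :=
    integral_integral_swap hprod
  -- Step 2: compute inner x-integral
  have hg : (∫ u in Set.Ioi (0:ℝ), ∫ x : ℝ, F u x)
      = ∫ u in Set.Ioi (0:ℝ), (Real.sqrt π : ℂ) * (u:ℂ)^(s - 3/2) *
          Complex.exp (-(u + π^2*a^2/u : ℝ)) := by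
    apply setIntegral_congr_fun measurableSet_Ioi
    intro u hu
    rw [Set.mem_Ioi] at hu
    exact aux_gauss a s u hu
  -- Step 3: scaling u = c * t
  have hscale : (∫ u in Set.Ioi (0:ℝ), (Real.sqrt π : ℂ) * (u:ℂ)^(s - 3/2) *
          Complex.exp (-(u + π^2*a^2/u : ℝ)))
      = ((π : ℂ) ^ s * ((|a| : ℝ) : ℂ) ^ (s - 1 / 2)) *
        ∫ t in Set.Ioi (0:ℝ),
          Complex.exp (-(π * (t + 1 / t) * |a| : ℝ)) * (t : ℂ) ^ (s - 1 / 2) / (t : ℂ) := by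
    set g : ℝ → ℂ := fun u => (Real.sqrt π : ℂ) * (u:ℂ)^(s - 3/2) *
      Complex.exp (-(u + π^2*a^2/u : ℝ)) with hg_def
    have h1 := MeasureTheory.integral_comp_mul_left_Ioi g 0 hc
    rw [mul_zero] at h1
    have h2 : (∫ u in Set.Ioi (0:ℝ), g u) = c • ∫ t in Set.Ioi (0:ℝ), g (c * t) := by
      rw [h1, smul_smul, mul_inv_cancel₀ hc.ne', one_smul]
    rw [h2]
    have h3 : ∀ t ∈ Set.Ioi (0:ℝ), g (c * t)
        = ((Real.sqrt π : ℂ) * (c:ℂ)^(s - 3/2)) *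
          (Complex.exp (-(π * (t + 1 / t) * |a| : ℝ)) * (t : ℂ) ^ (s - 1 / 2) / (t : ℂ)) := by
      intro t ht
      rw [Set.mem_Ioi] at ht
      have ht0 : (t:ℂ) ≠ 0 := Complex.ofReal_ne_zero.mpr ht.ne'
      rw [hg_def]
      simp only []
      rw [show ((c * t : ℝ) : ℂ) = ((c:ℝ):ℂ) * ((t:ℝ):ℂ) by push_cast; ring,
        Complex.mul_cpow_ofReal_nonneg hc.le ht.le]
      rw [show (c * t + π^2*a^2/(c*t) : ℝ) = (π * (t + 1 / t) * |a| : ℝ) by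
        rw [hc_def]; rw [show π^2*a^2 = (π*|a|)*(π*|a|) by rw [show a^2 = |a|^2 from (sq_abs a).symm]; ring]
        field_simp]
      rw [mul_div_assoc, show (s : ℂ) - 3/2 = (s - 1/2) - 1 by ring,
        Complex.cpow_sub _ _ ht0, Complex.cpow_one]
      ring
    rw [setIntegral_congr_fun measurableSet_Ioi h3, MeasureTheory.integral_const_mul]
    rw [Complex.real_smul, ← mul_assoc]
    congr 1
    have hca : (c:ℂ) ≠ 0 := Complex.ofReal_ne_zero.mpr hc.ne'
    calc (c:ℂ) * ((Real.sqrt π : ℂ) * (c:ℂ)^(s - 3/2))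
        = (Real.sqrt π : ℂ) * ((c:ℂ)^(1:ℂ) * (c:ℂ)^(s - 3/2)) := by
          rw [Complex.cpow_one]; ring
      _ = (Real.sqrt π : ℂ) * (c:ℂ)^(s - 1/2) := by
          rw [← Complex.cpow_add _ _ hca, show (1:ℂ) + (s - 3/2) = s - 1/2 by ring]
      _ = (π:ℂ)^((1:ℂ)/2) * ((π:ℂ)^(s - 1/2) * ((|a|:ℝ):ℂ)^(s - 1/2)) := by
          rw [hc_def, show ((π * |a| : ℝ) : ℂ) = ((π:ℝ):ℂ) * ((|a|:ℝ):ℂ) by push_cast; ring,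
            Complex.mul_cpow_ofReal_nonneg pi_pos.le (abs_nonneg a),
            show (Real.sqrt π : ℂ) = (π:ℂ)^((1:ℂ)/2) by
              rw [Real.sqrt_eq_rpow, Complex.ofReal_cpow pi_pos.le]; norm_num]
      _ = ((π:ℂ)^((1:ℂ)/2) * (π:ℂ)^(s - 1/2)) * ((|a|:ℝ):ℂ)^(s - 1/2) := by ring
      _ = (π:ℂ)^s * ((|a|:ℝ):ℂ)^(s - 1/2) := by
          rw [← Complex.cpow_add _ _ (Complex.ofReal_ne_zero.mpr pi_ne_zero),
            show (1:ℂ)/2 + (s - 1/2) = s by ring]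
  -- Step 4: outer integral via key1
  have hmain1 : (∫ x : ℝ, ∫ u in Set.Ioi (0:ℝ), F u x)
      = Complex.Gamma s * ∫ x : ℝ, ((1 + x ^ 2 : ℝ) : ℂ) ^ (-s) *
          Complex.exp (-(2 * π * a * x : ℝ) * Complex.I) := by
    simp_rw [key1]
    rw [MeasureTheory.integral_const_mul]
  -- assemble
  have hfinal : Complex.Gamma s * (∫ x : ℝ, ((1 + x ^ 2 : ℝ) : ℂ) ^ (-s) *
        Complex.exp (-(2 * π * a * x : ℝ) * Complex.I))
      = ((π : ℂ) ^ s * ((|a| : ℝ) : ℂ) ^ (s - 1 / 2)) *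
        ∫ t in Set.Ioi (0:ℝ),
          Complex.exp (-(π * (t + 1 / t) * |a| : ℝ)) * (t : ℂ) ^ (s - 1 / 2) / (t : ℂ) := by
    rw [← hmain1, ← hswap, hg, hscale]
  rw [div_mul_eq_mul_div, eq_div_iff hΓ]
  linear_combination hfinal
end

section
/- For every complex a ≠ 0 and every complex s with Re(s) > 1/2, the integral ∫_ℂ (1+|x|²)^{-2s} e^{-4πi·Re(ax)} dA(x), where dA is Lebesgue measure on ℂ ≅ ℝ², and the integral ∫_0^∞ e^{-2π(t+1/t)|a|} t^{2s-1} dt/t both converge absolutely, and ∫_ℂ (1+|x|²)^{-2s} e^{-4πi·Re(ax)} dA(x) = ((2π)^{2s} · |a|^{2s-1} / (2·Γ(2s))) · ∫_0^∞ e^{-2π(t+1/t)|a|} t^{2s-1} dt/t. -/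
open Real MeasureTheory Set
open scoped RealInnerProductSpace

/-- For complex `a ≠ 0` and complex `s` with `Re(s) > 1/2`, the integrals
`∫_ℂ (1+|x|²)^{-2s} e^{-4πi·Re(ax)} dA(x)` and `∫_0^∞ e^{-2π(t+1/t)|a|} t^{2s-1} dt/t` both
converge absolutely, and
`∫_ℂ (1+|x|²)^{-2s} e^{-4πi·Re(ax)} dA(x)
  = ((2π)^{2s}·|a|^{2s-1}/(2·Γ(2s))) · ∫_0^∞ e^{-2π(t+1/t)|a|} t^{2s-1} dt/t`. -/
theorem stmt10 (a : ℂ) (ha : a ≠ 0) (s : ℂ) (hs : 1 / 2 < s.re) :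
    Integrable (fun x : ℂ => ((1 + ‖x‖ ^ 2 : ℝ) : ℂ) ^ (-(2 * s)) *
        Complex.exp (-(4 * π * (a * x).re : ℝ) * Complex.I)) ∧
    IntegrableOn (fun t : ℝ =>
        Complex.exp (-(2 * π * (t + 1 / t) * ‖a‖ : ℝ)) * (t : ℂ) ^ (2 * s - 1) /
          (t : ℂ)) (Set.Ioi 0) ∧
    ∫ x : ℂ, ((1 + ‖x‖ ^ 2 : ℝ) : ℂ) ^ (-(2 * s)) *
        Complex.exp (-(4 * π * (a * x).re : ℝ) * Complex.I)
      = (((2 * π : ℝ) : ℂ) ^ (2 * s) * ((‖a‖ : ℝ) : ℂ) ^ (2 * s - 1) /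
          (2 * Complex.Gamma (2 * s))) *
        ∫ t in Set.Ioi (0 : ℝ),
          Complex.exp (-(2 * π * (t + 1 / t) * ‖a‖ : ℝ)) * (t : ℂ) ^ (2 * s - 1) /
            (t : ℂ) := by
  have hπ := Real.pi_pos
  have hc : 0 < ‖a‖ := norm_pos_iff.mpr ha
  have h2s : 0 < (2 * s).re := by
    rw [show (2 * s).re = 2 * s.re by simp [Complex.mul_re]]; linarith
  have h2s1 : 0 < (2 * s - 1).re := by
    rw [show (2 * s - 1).re = 2 * s.re - 1 by simp [Complex.mul_re]]; linarith
  set F : ℝ × ℂ → ℂ := fun p =>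
    (p.1 : ℂ) ^ (2 * s - 1) * Complex.exp (-(p.1 * (1 + ‖p.2‖ ^ 2) : ℝ)) *
      Complex.exp (-(4 * π * (a * p.2).re : ℝ) * Complex.I) with hF_def
  have hsplit : ∀ (u : ℝ) (x : ℂ), F (u, x) =
      ((u : ℂ) ^ (2 * s - 1) * Complex.exp (-(u : ℂ))) *
        Complex.exp (-(u : ℂ) * (‖x‖ : ℂ) ^ 2 +
          (-(4 * π) * Complex.I) * ((⟪(starRingEnd ℂ) a, x⟫ : ℝ) : ℂ)) := by
    intro u x
    rw [hF_def]
    simp only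
    simp only [mul_assoc, ← Complex.exp_add]
    congr 2
    have hi : (⟪(starRingEnd ℂ) a, x⟫ : ℝ) = (a * x).re := by
      rw [Complex.inner]; simp; ring
    rw [hi]
    push_cast
    ring
  have hnorm : ∀ (u : ℝ), 0 < u → ∀ (x : ℂ), ‖F (u, x)‖ =
      u ^ ((2 * s - 1).re) * Real.exp (-(u * (1 + ‖x‖ ^ 2))) := by
    intro u hu x
    rw [hF_def]
    simp only [norm_mul,
      Complex.norm_cpow_eq_rpow_re_of_pos hu, Complex.norm_exp_ofReal_mul_I, mul_one,
      Complex.norm_exp, Complex.neg_re, Complex.ofReal_re]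
    simp [Complex.mul_re]
  have hB : Continuous (fun p : ℝ × ℂ =>
      Complex.exp (-(p.1 * (1 + ‖p.2‖ ^ 2) : ℝ))) := by
    apply Complex.continuous_exp.comp
    exact (Complex.continuous_ofReal.comp (continuous_fst.mul (continuous_const.add
      ((continuous_norm.comp continuous_snd).pow 2)))).neg
  have hC : Continuous (fun p : ℝ × ℂ =>
      Complex.exp (-(4 * π * (a * p.2).re : ℝ) * Complex.I)) := by
    apply Complex.continuous_exp.comp
    exact ((Complex.continuous_ofReal.comp (continuous_const.mul (Complex.continuous_re.comp
      (continuous_const.mul continuous_snd)))).neg).mul continuous_const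
  have hA : ContinuousOn (fun p : ℝ × ℂ => (p.1 : ℂ) ^ (2 * s - 1))
      ((Ioi (0:ℝ)) ×ˢ (univ : Set ℂ)) := by
    intro p hp
    apply ContinuousAt.continuousWithinAt
    exact (continuousAt_cpow_const (Complex.mem_slitPlane_iff.mpr
        (Or.inl (by simpa using hp.1)))).comp
      (Complex.continuous_ofReal.continuousAt.comp continuousAt_fst)
  have hFmeas : AEStronglyMeasurable F ((volume.restrict (Ioi (0:ℝ))).prod (volume : Measure ℂ)) := by
    rw [hF_def, ← Measure.restrict_univ (μ := (volume : Measure ℂ)), Measure.prod_restrict]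
    exact ((hA.mul hB.continuousOn).mul hC.continuousOn).aestronglyMeasurable
      (measurableSet_Ioi.prod MeasurableSet.univ)
  have hInt : Integrable F ((volume.restrict (Ioi (0:ℝ))).prod (volume : Measure ℂ)) := by
    rw [integrable_prod_iff hFmeas]
    constructor
    · rw [ae_restrict_iff' measurableSet_Ioi]
      filter_upwards with u hu
      simp only [hsplit]
      exact (GaussianFourier.integrable_cexp_neg_mul_sq_norm_add
        (by simpa using hu) _ _).const_mul _
    · apply IntegrableOn.congr_fun
        (((Real.GammaIntegral_convergent h2s1).const_mul π))
        ?_ measurableSet_Ioi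
      intro u hu
      rw [mem_Ioi] at hu
      show π * (rexp (-u) * u ^ ((2 * s - 1).re - 1)) = ∫ x : ℂ, ‖F (u, x)‖
      have key : ∫ x : ℂ, ‖F (u, x)‖
          = (u ^ ((2 * s - 1).re) * Real.exp (-u)) * ∫ x : ℂ, Real.exp (-u * ‖x‖ ^ 2) := by
        rw [← integral_const_mul]
        congr 1
        ext x
        rw [hnorm u hu x]
        rw [show -(u * (1 + ‖x‖ ^ 2)) = -u + (-u * ‖x‖ ^ 2) by ring,
          Real.exp_add]
        ring
      rw [key, GaussianFourier.integral_rexp_neg_mul_sq_norm hu,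
        Complex.finrank_real_complex,
        show (((2:ℕ):ℝ) / 2 : ℝ) = 1 by norm_num, Real.rpow_one,
        Real.rpow_sub_one (ne_of_gt hu)]
      field_simp
  set c : ℝ := ‖a‖ with hcdef
  set b : ℝ := 2 * π * c with hbdef
  have hb : 0 < b := by positivity
  have hbC : (b : ℂ) ≠ 0 := by exact_mod_cast hb.ne'
  -- the u-integral for fixed x
  have hDx : ∀ x : ℂ, (∫ u in Ioi (0:ℝ), F (u, x)) =
      Complex.Gamma (2 * s) * (((1 + ‖x‖ ^ 2 : ℝ) : ℂ) ^ (-(2 * s)) *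
        Complex.exp (-(4 * π * (a * x).re : ℝ) * Complex.I)) := by
    intro x
    have hA : 0 < 1 + ‖x‖ ^ 2 := by positivity
    have h1 : (∫ u in Ioi (0:ℝ), F (u, x))
        = (∫ t in Ioi (0:ℝ), (t : ℂ) ^ (2 * s - 1) *
            Complex.exp (-(((1 + ‖x‖ ^ 2 : ℝ) : ℂ) * (t : ℂ)))) *
          Complex.exp (-(4 * π * (a * x).re : ℝ) * Complex.I) := by
      rw [← integral_mul_const]
      apply setIntegral_congr_fun measurableSet_Ioi
      intro u hu
      rw [hF_def]
      simp only
      refine congrArg₂ _ (congrArg₂ _ rfl ?_) rfl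
      congr 1
      push_cast
      ring
    rw [h1, Complex.integral_cpow_mul_exp_neg_mul_Ioi h2s hA]
    have hpow : ((1 : ℂ) / ((1 + ‖x‖ ^ 2 : ℝ) : ℂ)) ^ (2 * s)
        = ((1 + ‖x‖ ^ 2 : ℝ) : ℂ) ^ (-(2 * s)) := by
      rw [one_div, Complex.inv_cpow _ _ ?_, ← Complex.cpow_neg]
      rw [Complex.arg_ofReal_of_nonneg hA.le]
      exact Real.pi_ne_zero.symm
    rw [hpow]
    ring
  -- the x-integral for fixed u
  have hCx : ∀ u : ℝ, u ∈ Ioi (0:ℝ) → (∫ x : ℂ, F (u, x)) =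
      π * ((u : ℂ) ^ (2 * s - 1) * ((u : ℂ))⁻¹ *
        Complex.exp (-((u + 4 * π ^ 2 * c ^ 2 / u : ℝ) : ℂ))) := by
    intro u hu
    rw [mem_Ioi] at hu
    have hcne : (u : ℂ) ≠ 0 := by exact_mod_cast hu.ne'
    simp_rw [hsplit]
    rw [MeasureTheory.integral_const_mul,
      GaussianFourier.integral_cexp_neg_mul_sq_norm_add
        (show 0 < ((u : ℂ)).re by simpa using hu) (-(4 * π) * Complex.I) ((starRingEnd ℂ) a),
      Complex.finrank_real_complex,
      show (((2:ℕ):ℂ) / 2 : ℂ) = 1 by norm_num, Complex.cpow_one]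
    have hexp : Complex.exp (-(u:ℂ)) *
        Complex.exp ((-(4 * ↑π) * Complex.I) ^ 2 * (‖(starRingEnd ℂ) a‖ : ℂ) ^ 2 / (4 * (u:ℂ)))
        = Complex.exp (-((u + 4 * π ^ 2 * c ^ 2 / u : ℝ) : ℂ)) := by
      rw [← Complex.exp_add]
      congr 1
      have hna : ‖(starRingEnd ℂ) a‖ = c := by
        rw [hcdef, Complex.norm_conj]
      rw [hna, mul_pow, Complex.I_sq]
      push_cast
      field_simp
      ring
    rw [← hexp]
    field_simp
  -- Fubini
  have hswap : (∫ u in Ioi (0:ℝ), ∫ x : ℂ, F (u, x)) = ∫ x : ℂ, ∫ u in Ioi (0:ℝ), F (u, x) :=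
    MeasureTheory.integral_integral_swap (f := fun u x => F (u, x)) hInt
  have hIntOn : IntegrableOn (fun u : ℝ => ∫ x : ℂ, F (u, x)) (Ioi 0) volume :=
    hInt.integral_prod_left
  set g : ℝ → ℂ := fun u => π * ((u : ℂ) ^ (2 * s - 1) * ((u : ℂ))⁻¹ *
    Complex.exp (-((u + 4 * π ^ 2 * c ^ 2 / u : ℝ) : ℂ))) with hg_def
  have hg_int : IntegrableOn g (Ioi 0) volume :=
    hIntOn.congr_fun (fun u hu => hCx u hu) measurableSet_Ioi
  have hgb_int : IntegrableOn (fun t : ℝ => g (b * t)) (Ioi 0) volume := by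
    refine (integrableOn_Ioi_comp_mul_left_iff g 0 hb).mpr ?_
    rwa [mul_zero]
  set K : ℂ := π * ((b : ℂ) ^ (2 * s - 1) * ((b : ℂ))⁻¹) with hK_def
  have hbpow_ne : ((b:ℝ) : ℂ) ^ (2 * s - 1) ≠ 0 := by
    simp only [ne_eq, Complex.cpow_eq_zero_iff, not_and_or]
    exact Or.inl hbC
  have hKne : K ≠ 0 := by
    refine mul_ne_zero (by exact_mod_cast Real.pi_ne_zero) (mul_ne_zero hbpow_ne (inv_ne_zero hbC))
  have hgt : ∀ t : ℝ, t ∈ Ioi (0:ℝ) → g (b * t) =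
      K * (Complex.exp (-(2 * π * (t + 1 / t) * c : ℝ)) * (t : ℂ) ^ (2 * s - 1) /
        (t : ℂ)) := by
    intro t ht
    rw [mem_Ioi] at ht
    have htne : (t : ℂ) ≠ 0 := by exact_mod_cast ht.ne'
    rw [hg_def, hK_def]
    simp only
    have h1 : ((b * t : ℝ) : ℂ) ^ (2 * s - 1) = ((b:ℝ):ℂ) ^ (2*s-1) * ((t:ℝ):ℂ) ^ (2*s-1) := by
      rw [Complex.ofReal_mul]
      exact Complex.mul_cpow_ofReal_nonneg hb.le ht.le _
    have h3 : Complex.exp (-((b * t + 4 * π ^ 2 * c ^ 2 / (b * t) : ℝ) : ℂ))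
        = Complex.exp (-(2 * π * (t + 1 / t) * c : ℝ)) := by
      congr 1
      norm_cast
      rw [hbdef]
      field_simp
      ring
    rw [h1, h3, show ((b * t : ℝ) : ℂ) = ((b:ℝ):ℂ) * ((t:ℝ):ℂ) by push_cast; ring, mul_inv,
      div_eq_mul_inv]
    ring
  -- assemble
  have hγ : Complex.Gamma (2 * s) ≠ 0 := Complex.Gamma_ne_zero_of_re_pos h2s
  have e1 : ∫ x : ℂ, ∫ u in Ioi (0:ℝ), F (u, x)
      = Complex.Gamma (2 * s) * ∫ x : ℂ, ((1 + ‖x‖ ^ 2 : ℝ) : ℂ) ^ (-(2 * s)) *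
        Complex.exp (-(4 * π * (a * x).re : ℝ) * Complex.I) := by
    simp_rw [hDx]
    exact MeasureTheory.integral_const_mul _ _
  have e2 : ∫ u in Ioi (0:ℝ), ∫ x : ℂ, F (u, x) = ∫ u in Ioi (0:ℝ), g u :=
    setIntegral_congr_fun measurableSet_Ioi hCx
  have e3 : ∫ u in Ioi (0:ℝ), g u = ((b:ℝ) : ℂ) * ∫ t in Ioi (0:ℝ), g (b * t) := by
    have h := MeasureTheory.integral_comp_mul_left_Ioi g 0 hb
    rw [mul_zero] at h
    rw [h, Complex.real_smul]
    push_cast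
    field_simp
  have e4 : ∫ t in Ioi (0:ℝ), g (b * t)
      = K * ∫ t in Ioi (0:ℝ), Complex.exp (-(2 * π * (t + 1 / t) * c : ℝ)) *
          (t : ℂ) ^ (2 * s - 1) / (t : ℂ) := by
    rw [setIntegral_congr_fun measurableSet_Ioi hgt, MeasureTheory.integral_const_mul]
  have hsplitb : ((b:ℝ):ℂ) ^ (2 * s - 1)
      = ((2 * π : ℝ) : ℂ) ^ (2 * s - 1) * ((c:ℝ):ℂ) ^ (2 * s - 1) := by
    rw [hbdef, Complex.ofReal_mul, Complex.mul_cpow_ofReal_nonneg (by positivity) hc.le]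
  have h2π : ((2 * π : ℝ) : ℂ) ^ (2 * s) = ((2 * π : ℝ) : ℂ) ^ (2 * s - 1) * ((2 * π : ℝ) : ℂ) := by
    conv_lhs => rw [show (2 * s) = (2 * s - 1) + 1 by ring]
    rw [Complex.cpow_add _ _ (by exact_mod_cast (by positivity : (0:ℝ) < 2 * π).ne'),
      Complex.cpow_one]
  have main : (∫ x : ℂ, ((1 + ‖x‖ ^ 2 : ℝ) : ℂ) ^ (-(2 * s)) *
        Complex.exp (-(4 * π * (a * x).re : ℝ) * Complex.I))
      = (((2 * π : ℝ) : ℂ) ^ (2 * s) * ((c:ℝ) : ℂ) ^ (2 * s - 1) /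
          (2 * Complex.Gamma (2 * s))) *
        ∫ t in Ioi (0:ℝ), Complex.exp (-(2 * π * (t + 1 / t) * c : ℝ)) *
          (t : ℂ) ^ (2 * s - 1) / (t : ℂ) := by
    apply mul_left_cancel₀ hγ
    rw [← e1, ← hswap, e2, e3, e4, hK_def, hsplitb, h2π]
    generalize (∫ t in Ioi (0:ℝ), Complex.exp (-(2 * π * (t + 1 / t) * c : ℝ)) *
      (t : ℂ) ^ (2 * s - 1) / (t : ℂ)) = I
    field_simp [hbC]
    push_cast
    ring
  refine ⟨?_, ?_, main⟩
  · -- Integrability of the Fourier integrand over ℂ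
    have h4 : (Module.finrank ℝ ℂ : ℝ) < 2 * (2 * s).re := by
      rw [Complex.finrank_real_complex]
      have h5 : (2 * s).re = 2 * s.re := by simp [Complex.mul_re]
      rw [h5]
      push_cast
      linarith
    have hosc : Continuous fun x : ℂ => Complex.exp (-(4 * π * (a * x).re : ℝ) * Complex.I) := by
      apply Complex.continuous_exp.comp
      exact ((Complex.continuous_ofReal.comp (continuous_const.mul (Complex.continuous_re.comp
        (continuous_const.mul continuous_id)))).neg).mul continuous_const
    refine (integrable_rpow_neg_one_add_norm_sq (E := ℂ) (μ := volume) h4).mono' ?_ ?_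
    · apply Continuous.aestronglyMeasurable
      refine Continuous.mul ?_ hosc
      rw [continuous_iff_continuousAt]
      intro x
      exact (continuousAt_cpow_const (Complex.mem_slitPlane_iff.mpr (Or.inl
          (by rw [Complex.ofReal_re]; positivity)))).comp
        (Complex.continuous_ofReal.continuousAt.comp
          ((continuous_const.add (continuous_norm.pow 2)).continuousAt))
    · filter_upwards with x
      rw [norm_mul]
      rw [Complex.norm_cpow_eq_rpow_re_of_pos (by positivity), Complex.norm_exp,
        show (-(4 * π * (a * x).re : ℝ) * Complex.I).re = 0 by simp [Complex.mul_re],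
        Real.exp_zero, mul_one]
      have hexp : (-(2 * s)).re = -(2 * (2 * s).re) / 2 := by
        simp [Complex.neg_re]
        ring
      rw [hexp]
  · -- Integrability of the t-integral
    exact MeasureTheory.IntegrableOn.congr_fun (hgb_int.const_mul K⁻¹)
      (fun t ht => by rw [hgt t ht, inv_mul_cancel_left₀ hKne]) measurableSet_Ioi
end

section
/- Let μ be the Haar measure on the quotient group G = GL₂(ℚ_p)/Z, normalized so that the compact open image of GL₂(ℤ_p) in G has measure 1. Then for every real σ > 1, ∫_G N(g)^{-σ} dμ(g) ≤ (1 + p^{2-σ})/(1 - p^{1-σ}). -/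
open MeasureTheory
open scoped Matrix
open scoped Pointwise

attribute [local instance] Matrix.normedAddCommGroup Matrix.normedSpace

/-- The map `Ad(g) : x ↦ g·x·g⁻¹` on 2×2 matrices over `ℚ_p`, as a continuous linear
operator, where 2×2 matrices carry the supremum norm of the entries. -/
noncomputable def adPadic (p : ℕ) [Fact p.Prime] (g : GL (Fin 2) ℚ_[p]) :
    Matrix (Fin 2) (Fin 2) ℚ_[p] →L[ℚ_[p]] Matrix (Fin 2) (Fin 2) ℚ_[p] :=
  LinearMap.toContinuousLinearMap
    ((LinearMap.mulRight ℚ_[p] (↑(g⁻¹) : Matrix (Fin 2) (Fin 2) ℚ_[p])).comp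
      (LinearMap.mulLeft ℚ_[p] (↑g : Matrix (Fin 2) (Fin 2) ℚ_[p])))

set_option linter.unusedSectionVars false
set_option linter.unnecessarySeqFocus false

namespace Stmt11Aux

variable {p : ℕ} [Fact p.Prime]

/-- all entries have norm at most 1 -/
def IsIntl (A : Matrix (Fin 2) (Fin 2) ℚ_[p]) : Prop := ∀ i j, ‖A i j‖ ≤ 1

theorem IsIntl.mul {A B : Matrix (Fin 2) (Fin 2) ℚ_[p]} (hA : IsIntl A) (hB : IsIntl B) :
    IsIntl (A * B) := by
  intro i j
  rw [Matrix.mul_apply, Fin.sum_univ_two]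
  refine le_trans (Padic.nonarchimedean _ _) (max_le ?_ ?_) <;>
  · rw [norm_mul]
    exact mul_le_one₀ (hA _ _) (norm_nonneg _) (hB _ _)

theorem IsIntl.det {A : Matrix (Fin 2) (Fin 2) ℚ_[p]} (hA : IsIntl A) : ‖A.det‖ ≤ 1 := by
  rw [Matrix.det_fin_two, sub_eq_add_neg]
  refine le_trans (Padic.nonarchimedean _ _) (max_le ?_ ?_)
  · rw [norm_mul]; exact mul_le_one₀ (hA _ _) (norm_nonneg _) (hA _ _)
  · rw [norm_neg, norm_mul]; exact mul_le_one₀ (hA _ _) (norm_nonneg _) (hA _ _)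

theorem IsIntl.adjugate {A : Matrix (Fin 2) (Fin 2) ℚ_[p]} (hA : IsIntl A) :
    IsIntl A.adjugate := by
  intro i j
  rw [Matrix.adjugate_fin_two]
  fin_cases i <;> fin_cases j <;> simp <;> simpa using hA _ _

theorem IsIntl.inv {A : Matrix (Fin 2) (Fin 2) ℚ_[p]} (hA : IsIntl A) (hdet : ‖A.det‖ = 1) :
    IsIntl A⁻¹ := by
  intro i j
  have hd0 : A.det ≠ 0 := by intro h; rw [h] at hdet; simp at hdet
  rw [Matrix.inv_def, Ring.inverse_eq_inv', Matrix.smul_apply, smul_eq_mul, norm_mul,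
    norm_inv, hdet]
  simpa using hA.adjugate i j

theorem norm_p_pow (a : ℕ) : ‖((p : ℚ_[p]) ^ a)‖ = (p : ℝ) ^ (-(a : ℤ)) := by
  rw [norm_pow, Padic.norm_p, ← zpow_natCast, inv_zpow, ← zpow_neg]


-- step 1 of Hermite reduction: clear the first row
theorem step1 (M : Matrix (Fin 2) (Fin 2) ℚ_[p]) (hM : IsIntl M) (hd : M.det ≠ 0) :
    ∃ (α : ℕ) (k : Matrix (Fin 2) (Fin 2) ℚ_[p]) (C' D' : ℚ_[p]),
      IsIntl k ∧ ‖k.det‖ = 1 ∧ M * k = !![(p : ℚ_[p]) ^ α, 0; C', D'] := by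
  have hp0 : (0:ℝ) < p := by exact_mod_cast (Fact.out : p.Prime).pos
  rcases le_or_gt ‖M 0 1‖ ‖M 0 0‖ with hc | hc
  · -- |B| ≤ |A|, A ≠ 0
    set A := M 0 0 with hA
    set B := M 0 1 with hB
    have hA0 : A ≠ 0 := by
      intro h
      rw [h, norm_zero] at hc
      have hB0 : B = 0 := norm_le_zero_iff.mp hc
      rw [Matrix.det_fin_two] at hd
      apply hd; rw [← hA, ← hB, h, hB0]; ring
    have hAle : 0 ≤ A.valuation := (Padic.norm_le_one_iff_val_nonneg A).mp (hM 0 0)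
    set α := A.valuation.toNat with hα
    have hαv : (α : ℤ) = A.valuation := Int.toNat_of_nonneg hAle
    have hAnorm : ‖A‖ = (p : ℝ) ^ (-(α : ℤ)) := by
      rw [Padic.norm_eq_zpow_neg_valuation hA0, hαv]
    have hpdiv : ‖(p : ℚ_[p]) ^ α / A‖ = 1 := by
      rw [norm_div, norm_p_pow, hAnorm, div_self (zpow_ne_zero _ (ne_of_gt hp0))]
    have h2 : ‖-(B / A)‖ ≤ 1 := by
      rw [norm_neg, norm_div]; exact div_le_one_of_le₀ hc (norm_nonneg _)
    refine ⟨α, !![(p : ℚ_[p]) ^ α / A, -(B / A); 0, 1],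
      M 1 0 * ((p : ℚ_[p]) ^ α / A), M 1 1 - M 1 0 * (B / A), ?_, ?_, ?_⟩
    · intro i j
      fin_cases i <;> fin_cases j
      · exact hpdiv.le
      · exact h2
      · show ‖(0:ℚ_[p])‖ ≤ 1; simp
      · show ‖(1:ℚ_[p])‖ ≤ 1; simp
    · rw [Matrix.det_fin_two]
      show ‖(p : ℚ_[p]) ^ α / A * 1 - -(B / A) * 0‖ = 1
      rw [mul_one, mul_zero, sub_zero]; exact hpdiv
    · ext i j
      fin_cases i <;> fin_cases j <;>
        simp [Matrix.mul_apply, Fin.sum_univ_two] <;> field_simp <;> ring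
  · -- |A| < |B|, B ≠ 0
    set A := M 0 0 with hA
    set B := M 0 1 with hB
    have hB0 : B ≠ 0 := by
      intro h
      rw [h, norm_zero] at hc
      exact absurd (norm_nonneg A) (not_le.mpr hc)
    have hBle : 0 ≤ B.valuation := (Padic.norm_le_one_iff_val_nonneg B).mp (hM 0 1)
    set α := B.valuation.toNat with hα
    have hαv : (α : ℤ) = B.valuation := Int.toNat_of_nonneg hBle
    have hBnorm : ‖B‖ = (p : ℝ) ^ (-(α : ℤ)) := by
      rw [Padic.norm_eq_zpow_neg_valuation hB0, hαv]
    have hpdiv : ‖(p : ℚ_[p]) ^ α / B‖ = 1 := by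
      rw [norm_div, norm_p_pow, hBnorm, div_self (zpow_ne_zero _ (ne_of_gt hp0))]
    have h2 : ‖-(A / B)‖ ≤ 1 := by
      rw [norm_neg, norm_div]; exact div_le_one_of_le₀ hc.le (norm_nonneg _)
    refine ⟨α, !![0, 1; (p : ℚ_[p]) ^ α / B, -(A / B)],
      M 1 1 * ((p : ℚ_[p]) ^ α / B), M 1 0 - M 1 1 * (A / B), ?_, ?_, ?_⟩
    · intro i j
      fin_cases i <;> fin_cases j
      · show ‖(0:ℚ_[p])‖ ≤ 1; simp
      · show ‖(1:ℚ_[p])‖ ≤ 1; simp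
      · exact hpdiv.le
      · exact h2
    · rw [Matrix.det_fin_two]
      show ‖0 * -(A / B) - 1 * ((p : ℚ_[p]) ^ α / B)‖ = 1
      rw [zero_mul, one_mul, zero_sub, norm_neg]; exact hpdiv
    · ext i j
      fin_cases i <;> fin_cases j <;>
        simp [Matrix.mul_apply, Fin.sum_univ_two] <;> field_simp <;> ring


theorem hermite (n : ℕ) (M : Matrix (Fin 2) (Fin 2) ℚ_[p]) (hM : IsIntl M)
    (hdet : ‖M.det‖ = (p : ℝ) ^ (-(n : ℤ))) :
    ∃ (a j : ℕ) (k : Matrix (Fin 2) (Fin 2) ℚ_[p]), a ≤ n ∧ j < p ^ (n - a) ∧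
      IsIntl k ∧ ‖k.det‖ = 1 ∧
      M * k = !![(p : ℚ_[p]) ^ a, 0; (j : ℚ_[p]), (p : ℚ_[p]) ^ (n - a)] := by
  have hp1 : (1:ℝ) < p := by exact_mod_cast (Fact.out : p.Prime).one_lt
  have hp0 : (0:ℝ) < p := lt_trans one_pos hp1
  have hpz : (p:ℝ) ≠ 0 := ne_of_gt hp0
  have hd0 : M.det ≠ 0 := by
    intro h
    rw [h, norm_zero] at hdet
    exact absurd hdet.symm (ne_of_gt (zpow_pos hp0 _))
  obtain ⟨α, k₁, C', D', hk₁, hk₁det, hMk₁⟩ := step1 M hM hd0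
  have hint1 : IsIntl (M * k₁) := hM.mul hk₁
  have hC' : ‖C'‖ ≤ 1 := by have h := hint1 1 0; rw [hMk₁] at h; exact h
  have hD'1 : ‖D'‖ ≤ 1 := by have h := hint1 1 1; rw [hMk₁] at h; exact h
  have hdetMk : ‖(M * k₁).det‖ = (p:ℝ) ^ (-(n:ℤ)) := by
    rw [Matrix.det_mul, norm_mul, hk₁det, mul_one, hdet]
  have h2 : (p:ℝ) ^ (-(α:ℤ)) * ‖D'‖ = (p:ℝ) ^ (-(n:ℤ)) := by
    rw [hMk₁, Matrix.det_fin_two] at hdetMk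
    have h3 : ‖(p:ℚ_[p]) ^ α * D' - 0 * C'‖ = (p:ℝ) ^ (-(n:ℤ)) := hdetMk
    rw [zero_mul, sub_zero, norm_mul, norm_p_pow] at h3
    exact h3
  have hD'norm : ‖D'‖ = (p:ℝ) ^ ((α:ℤ) - n) := by
    have : ‖D'‖ = (p:ℝ) ^ (α:ℤ) * ((p:ℝ) ^ (-(α:ℤ)) * ‖D'‖) := by
      rw [← mul_assoc, ← zpow_add₀ hpz]
      simp
    rw [this, h2, ← zpow_add₀ hpz, sub_eq_add_neg]
  have hD'0 : D' ≠ 0 := by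
    intro h
    rw [h, norm_zero] at hD'norm
    exact absurd hD'norm.symm (ne_of_gt (zpow_pos hp0 _))
  have hαn : α ≤ n := by
    by_contra hcon
    have h4 : (0:ℤ) < (α:ℤ) - n := by omega
    have := one_lt_zpow₀ hp1 h4
    rw [← hD'norm] at this
    exact absurd (lt_of_lt_of_le this hD'1) (lt_irrefl 1)
  set β := n - α with hβdef
  have hβ : ((β:ℤ)) = (n:ℤ) - α := by omega
  have hD'β : ‖D'‖ = (p:ℝ) ^ (-(β:ℤ)) := by rw [hD'norm]; congr 1; omega
  set Cz : ℤ_[p] := ⟨C', hC'⟩ with hCz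
  set j := Cz.appr β with hjdef
  have hj : j < p ^ β := PadicInt.appr_lt Cz β
  have hjnorm : ‖(j:ℚ_[p]) - C'‖ ≤ (p:ℝ) ^ (-(β:ℤ)) := by
    have h5 : ‖Cz - (j : ℤ_[p])‖ ≤ (p:ℝ) ^ (-(β:ℤ)) :=
      (PadicInt.norm_le_pow_iff_mem_span_pow _ β).mpr (PadicInt.appr_spec β Cz)
    have h6 : ((Cz - (j : ℤ_[p]) : ℤ_[p]) : ℚ_[p]) = C' - (j:ℚ_[p]) := by
      push_cast
      rfl
    rw [← norm_sub_rev, ← h6, PadicInt.padic_norm_e_of_padicInt]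
    exact h5
  have hD'pos : (0:ℝ) < ‖D'‖ := norm_pos_iff.mpr hD'0
  set k₂ : Matrix (Fin 2) (Fin 2) ℚ_[p] := !![1, 0; ((j:ℚ_[p]) - C')/D', (p:ℚ_[p])^β / D'] with hk₂def
  have hk₂ : IsIntl k₂ := by
    intro i j'
    fin_cases i <;> fin_cases j'
    · show ‖(1:ℚ_[p])‖ ≤ 1; simp
    · show ‖(0:ℚ_[p])‖ ≤ 1; simp
    · show ‖((j:ℚ_[p]) - C')/D'‖ ≤ 1
      rw [norm_div, div_le_one hD'pos, hD'β]
      exact hjnorm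
    · show ‖(p:ℚ_[p])^β / D'‖ ≤ 1
      rw [norm_div, div_le_one hD'pos, hD'β, norm_p_pow]
  have hk₂det : ‖k₂.det‖ = 1 := by
    rw [Matrix.det_fin_two]
    show ‖1 * ((p:ℚ_[p])^β / D') - 0 * (((j:ℚ_[p]) - C')/D')‖ = 1
    rw [one_mul, zero_mul, sub_zero, norm_div, norm_p_pow, hD'β, div_self (zpow_ne_zero _ hpz)]
  refine ⟨α, j, k₁ * k₂, hαn, hj, hk₁.mul hk₂, ?_, ?_⟩
  · rw [Matrix.det_mul, norm_mul, hk₁det, hk₂det, mul_one]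
  · rw [← mul_assoc, hMk₁, hk₂def]
    ext i j'
    fin_cases i <;> fin_cases j' <;>
      simp [Matrix.mul_apply, Fin.sum_univ_two, hβdef] <;>
      try field_simp
      <;> ring

theorem adPadic_apply (g : GL (Fin 2) ℚ_[p]) (x : Matrix (Fin 2) (Fin 2) ℚ_[p]) :
    adPadic p g x = (↑g : Matrix (Fin 2) (Fin 2) ℚ_[p]) * x * (↑(g⁻¹) : Matrix (Fin 2) (Fin 2) ℚ_[p]) := rfl

theorem mulStd (M N : Matrix (Fin 2) (Fin 2) ℚ_[p]) (i a b j : Fin 2) :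
    (M * Matrix.single a b (1:ℚ_[p]) * N) i j = M i a * N b j := by
  fin_cases a <;> fin_cases b <;>
    simp [Matrix.mul_apply, Matrix.single, Fin.sum_univ_two]

theorem gl_det_ne_zero (g : GL (Fin 2) ℚ_[p]) : (↑g : Matrix (Fin 2) (Fin 2) ℚ_[p]).det ≠ 0 := by
  have h : (↑g : Matrix (Fin 2) (Fin 2) ℚ_[p]).det * (↑(g⁻¹) : Matrix (Fin 2) (Fin 2) ℚ_[p]).det = 1 := by
    rw [← Matrix.det_mul]
    have : (↑g : Matrix (Fin 2) (Fin 2) ℚ_[p]) * (↑(g⁻¹) : Matrix (Fin 2) (Fin 2) ℚ_[p]) = 1 := by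
      rw [← Units.val_mul, mul_inv_cancel, Units.val_one]
    rw [this, Matrix.det_one]
  intro h0
  rw [h0, zero_mul] at h
  exact zero_ne_one h

theorem ad_lower (g : GL (Fin 2) ℚ_[p]) (i₀ j₀ : Fin 2)
    (h1 : ‖(↑g : Matrix (Fin 2) (Fin 2) ℚ_[p]) i₀ j₀‖ = 1) (n : ℕ)
    (hdet : ‖(↑g : Matrix (Fin 2) (Fin 2) ℚ_[p]).det‖ = (p : ℝ) ^ (-(n:ℤ))) :
    (p : ℝ) ^ (n:ℤ) ≤ (@Norm.norm _ ContinuousLinearMap.hasOpNorm (adPadic p g)) := by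
  have hp0 : (0:ℝ) < p := by exact_mod_cast (Fact.out : p.Prime).pos
  set M : Matrix (Fin 2) (Fin 2) ℚ_[p] := ↑g with hM
  have hd0 : M.det ≠ 0 := gl_det_ne_zero g
  -- adjugate entry of norm 1
  have hadj : ‖M.adjugate (1 - j₀) (1 - i₀)‖ = 1 := by
    rw [Matrix.adjugate_fin_two]
    fin_cases i₀ <;> fin_cases j₀ <;> simpa using h1
  -- inverse entry of norm p^n
  have hinvc : (↑(g⁻¹) : Matrix (Fin 2) (Fin 2) ℚ_[p]) = M⁻¹ := Matrix.coe_units_inv g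
  have hinv : ‖(↑(g⁻¹) : Matrix (Fin 2) (Fin 2) ℚ_[p]) (1 - j₀) (1 - i₀)‖ = (p : ℝ) ^ (n:ℤ) := by
    rw [hinvc, Matrix.inv_def, Ring.inverse_eq_inv', Matrix.smul_apply, smul_eq_mul, norm_mul,
      norm_inv, hdet, hadj, mul_one, ← zpow_neg, neg_neg]
  -- test matrix
  set x := Matrix.single j₀ (1 - j₀) (1:ℚ_[p]) with hx
  have hxnorm : ‖x‖ ≤ 1 := by
    rw [Matrix.norm_le_iff zero_le_one]
    intro i j
    rw [hx]
    fin_cases i <;> fin_cases j <;> fin_cases j₀ <;>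
      simp [Matrix.single]
  have hkey : ‖(adPadic p g x) i₀ (1 - i₀)‖ = (p : ℝ) ^ (n:ℤ) := by
    rw [adPadic_apply, hx, mulStd, norm_mul, ← hM, h1, one_mul, hinv]
  calc (p : ℝ) ^ (n:ℤ) = ‖(adPadic p g x) i₀ (1 - i₀)‖ := hkey.symm
    _ ≤ ‖adPadic p g x‖ := Matrix.norm_entry_le_entrywise_sup_norm _
    _ ≤ (@Norm.norm _ ContinuousLinearMap.hasOpNorm (adPadic p g)) * ‖x‖ := (adPadic p g).le_opNorm x
    _ ≤ (@Norm.norm _ ContinuousLinearMap.hasOpNorm (adPadic p g)) * 1 := by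
        exact mul_le_mul_of_nonneg_left hxnorm (norm_nonneg _)
    _ = (@Norm.norm _ ContinuousLinearMap.hasOpNorm (adPadic p g)) := mul_one _

/-- scalar matrices as units -/
noncomputable def scalarGL (c : ℚ_[p]) (hc : c ≠ 0) : GL (Fin 2) ℚ_[p] :=
  ⟨c • 1, c⁻¹ • 1, by
      rw [Matrix.smul_mul, Matrix.mul_smul, smul_smul, mul_inv_cancel₀ hc, one_smul, mul_one],
    by
      rw [Matrix.smul_mul, Matrix.mul_smul, smul_smul, inv_mul_cancel₀ hc, one_smul, mul_one]⟩

theorem scalarGL_coe (c : ℚ_[p]) (hc : c ≠ 0) :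
    (↑(scalarGL c hc) : Matrix (Fin 2) (Fin 2) ℚ_[p]) = c • 1 := rfl

theorem scalarGL_mem_center (c : ℚ_[p]) (hc : c ≠ 0) :
    scalarGL c hc ∈ Subgroup.center (GL (Fin 2) ℚ_[p]) := by
  rw [Subgroup.mem_center_iff]
  intro y
  refine Units.ext ?_
  rw [Units.val_mul, Units.val_mul, scalarGL_coe, Matrix.mul_smul, Matrix.smul_mul, mul_one, one_mul]


-- real content starts here
def SK : Set (GL (Fin 2) ℚ_[p]) := {g : GL (Fin 2) ℚ_[p] |
    ∀ i j : Fin 2, ‖(↑g : Matrix (Fin 2) (Fin 2) ℚ_[p]) i j‖ ≤ 1 ∧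
      ‖(↑(g⁻¹) : Matrix (Fin 2) (Fin 2) ℚ_[p]) i j‖ ≤ 1}

noncomputable def repGL (n a j : ℕ) : GL (Fin 2) ℚ_[p] :=
  Matrix.GeneralLinearGroup.mkOfDetNeZero
    !![(p : ℚ_[p]) ^ a, 0; (j : ℚ_[p]), (p : ℚ_[p]) ^ (n - a)]
    (by
      rw [Matrix.det_fin_two]
      show (p : ℚ_[p]) ^ a * (p : ℚ_[p]) ^ (n - a) - 0 * (j : ℚ_[p]) ≠ 0
      rw [zero_mul, sub_zero, ← pow_add]
      refine pow_ne_zero _ ?_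
      exact_mod_cast (Fact.out : p.Prime).ne_zero)

theorem repGL_coe (n a j : ℕ) :
    (↑(repGL n a j : GL (Fin 2) ℚ_[p]) : Matrix (Fin 2) (Fin 2) ℚ_[p]) =
      !![(p : ℚ_[p]) ^ a, 0; (j : ℚ_[p]), (p : ℚ_[p]) ^ (n - a)] := rfl

theorem main (g : GL (Fin 2) ℚ_[p]) :
    ∃ (n a j : ℕ) (h k : GL (Fin 2) ℚ_[p]),
      a ≤ n ∧ j < p ^ (n - a) ∧
      (QuotientGroup.mk h : GL (Fin 2) ℚ_[p] ⧸ Subgroup.center (GL (Fin 2) ℚ_[p])) =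
        QuotientGroup.mk g ∧
      (p : ℝ) ^ (n : ℤ) ≤ (@Norm.norm _ ContinuousLinearMap.hasOpNorm (adPadic p h)) ∧
      k ∈ SK ∧ h = repGL n a j * k := by
  -- entry of maximal norm
  obtain ⟨q, -, hmax⟩ := Finset.exists_max_image (Finset.univ : Finset (Fin 2 × Fin 2))
    (fun q => ‖(↑g : Matrix (Fin 2) (Fin 2) ℚ_[p]) q.1 q.2‖) ⟨(0,0), Finset.mem_univ _⟩
  obtain ⟨i₀, j₀⟩ := q
  have hmax' : ∀ i j, ‖(↑g : Matrix (Fin 2) (Fin 2) ℚ_[p]) i j‖ ≤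
      ‖(↑g : Matrix (Fin 2) (Fin 2) ℚ_[p]) i₀ j₀‖ := fun i j => hmax (i, j) (Finset.mem_univ _)
  have hne : (↑g : Matrix (Fin 2) (Fin 2) ℚ_[p]) i₀ j₀ ≠ 0 := by
    intro h0
    apply gl_det_ne_zero g
    have hz : (↑g : Matrix (Fin 2) (Fin 2) ℚ_[p]) = 0 := by
      ext i j
      have := hmax' i j
      rw [h0, norm_zero] at this
      simpa using norm_le_zero_iff.mp this
    rw [hz, Matrix.det_zero]
  set c := ((↑g : Matrix (Fin 2) (Fin 2) ℚ_[p]) i₀ j₀)⁻¹ with hcdef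
  have hc : c ≠ 0 := inv_ne_zero hne
  set h := scalarGL c hc * g with hhdef
  have hcoe : (↑h : Matrix (Fin 2) (Fin 2) ℚ_[p]) = c • ↑g := by
    rw [hhdef, Units.val_mul, scalarGL_coe, Matrix.smul_mul, one_mul]
  have hIntl : IsIntl (↑h : Matrix (Fin 2) (Fin 2) ℚ_[p]) := by
    intro i j
    rw [hcoe, Matrix.smul_apply, smul_eq_mul, norm_mul, hcdef, norm_inv]
    rw [inv_mul_le_one₀ (norm_pos_iff.mpr hne)] -- tentative name
    exact hmax' i j
  have h1 : ‖(↑h : Matrix (Fin 2) (Fin 2) ℚ_[p]) i₀ j₀‖ = 1 := by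
    rw [hcoe, Matrix.smul_apply, smul_eq_mul, hcdef, inv_mul_cancel₀ hne, norm_one]
  -- determinant valuation
  have hd0 : (↑h : Matrix (Fin 2) (Fin 2) ℚ_[p]).det ≠ 0 := gl_det_ne_zero h
  have hdle : ‖(↑h : Matrix (Fin 2) (Fin 2) ℚ_[p]).det‖ ≤ 1 := hIntl.det
  have hvnn : 0 ≤ ((↑h : Matrix (Fin 2) (Fin 2) ℚ_[p]).det).valuation :=
    (Padic.norm_le_one_iff_val_nonneg _).mp hdle
  set n := ((↑h : Matrix (Fin 2) (Fin 2) ℚ_[p]).det).valuation.toNat with hndef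
  have hdn : ‖(↑h : Matrix (Fin 2) (Fin 2) ℚ_[p]).det‖ = (p : ℝ) ^ (-(n:ℤ)) := by
    rw [Padic.norm_eq_zpow_neg_valuation hd0]
    congr 1
    rw [hndef, Int.toNat_of_nonneg hvnn]
  -- hermite
  obtain ⟨a, j, κ, han, hjlt, hκ, hκdet, hfact⟩ := hermite n _ hIntl hdn
  have hκd0 : κ.det ≠ 0 := by
    intro h0; rw [h0, norm_zero] at hκdet; exact zero_ne_one hκdet
  refine ⟨n, a, j, h, (repGL n a j)⁻¹ * h, han, hjlt, ?_, ?_, ?_, (mul_inv_cancel_left _ _).symm⟩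
  · rw [hhdef, QuotientGroup.mk_mul, (QuotientGroup.eq_one_iff _).mpr (scalarGL_mem_center c hc),
      one_mul]
  · exact ad_lower h i₀ j₀ h1 n hdn
  · -- k ∈ SK
    have hκu : IsUnit κ.det := isUnit_iff_ne_zero.mpr hκd0
    have hhR : (↑h : Matrix (Fin 2) (Fin 2) ℚ_[p]) = ((repGL n a j : GL (Fin 2) ℚ_[p]) : Matrix (Fin 2) (Fin 2) ℚ_[p]) * κ⁻¹ := by
      rw [repGL_coe, ← hfact]
      exact (Matrix.mul_nonsing_inv_cancel_right _ _ hκu).symm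
    have hkcoe : (↑((repGL n a j : GL (Fin 2) ℚ_[p])⁻¹ * h) : Matrix (Fin 2) (Fin 2) ℚ_[p]) = κ⁻¹ := by
      rw [Units.val_mul, Matrix.coe_units_inv, hhR]
      exact Matrix.nonsing_inv_mul_cancel_left _ _ (isUnit_iff_ne_zero.mpr (gl_det_ne_zero _))
    have hkinvcoe : (↑(((repGL n a j : GL (Fin 2) ℚ_[p])⁻¹ * h)⁻¹) : Matrix (Fin 2) (Fin 2) ℚ_[p]) = κ := by
      rw [Matrix.coe_units_inv, hkcoe, Matrix.nonsing_inv_nonsing_inv _ hκu]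
    intro i j'
    constructor
    · rw [hkcoe]
      exact (hκ.inv hκdet) i j'
    · rw [hkinvcoe]
      exact hκ i j'

theorem geom_le (hp2 : 2 ≤ p) : ∀ n, (Finset.range (n+1)).sum (fun a => p ^ a) ≤ 2 * p ^ n := by
  intro n
  induction n with
  | zero => simp
  | succ m ih =>
      rw [Finset.sum_range_succ]
      have h1 : 2 * p ^ m + p ^ (m+1) ≤ 2 * p ^ (m+1) := by
        rw [pow_succ, two_mul, two_mul]
        have : 2 * p ^ m ≤ p ^ m * p := by
          rw [mul_comm]
          exact Nat.mul_le_mul_left _ hp2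
        omega
      omega

theorem count_le (hp2 : 2 ≤ p) (n : ℕ) :
    (Finset.range (n+1)).sum (fun a => p ^ (n - a)) ≤ 2 * p ^ n := by
  have hre : (Finset.range (n+1)).sum (fun a => p ^ (n - a)) =
      (Finset.range (n+1)).sum (fun a => p ^ a) := by
    have := Finset.sum_range_reflect (fun j => p ^ j) (n+1)
    simpa using this
  rw [hre]
  exact geom_le hp2 n


end Stmt11Aux

/-- Let `G = GL₂(ℚ_p)/Z` be the quotient of `GL₂(ℚ_p)` by its center, `μ` the Haar measure on
`G` normalized so that the compact open image of `GL₂(ℤ_p)` in `G` has measure `1`, and let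
`N` be the function on `G` induced by `Ñ(g) = max(‖Ad(g)‖, ‖Ad(g⁻¹)‖)` (operator norms on
`M₂(ℚ_p)` with the supremum norm of the entries).  Then for every real `σ > 1`,
`∫_G N(g)^{-σ} dμ(g) ≤ (1 + p^{2-σ})/(1 - p^{1-σ})`. -/
theorem stmt11 (p : ℕ) [Fact p.Prime]
    [MeasurableSpace (GL (Fin 2) ℚ_[p] ⧸ Subgroup.center (GL (Fin 2) ℚ_[p]))]
    [BorelSpace (GL (Fin 2) ℚ_[p] ⧸ Subgroup.center (GL (Fin 2) ℚ_[p]))]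
    (μ : Measure (GL (Fin 2) ℚ_[p] ⧸ Subgroup.center (GL (Fin 2) ℚ_[p])))
    [μ.IsHaarMeasure]
    (hμnorm : μ (QuotientGroup.mk '' {g : GL (Fin 2) ℚ_[p] |
        ∀ i j : Fin 2, ‖(↑g : Matrix (Fin 2) (Fin 2) ℚ_[p]) i j‖ ≤ 1 ∧
          ‖(↑(g⁻¹) : Matrix (Fin 2) (Fin 2) ℚ_[p]) i j‖ ≤ 1}) = 1)
    (N : (GL (Fin 2) ℚ_[p] ⧸ Subgroup.center (GL (Fin 2) ℚ_[p]))  → ℝ)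
    (hN : ∀ g : GL (Fin 2) ℚ_[p],
      N (QuotientGroup.mk g) = max (@Norm.norm _ ContinuousLinearMap.hasOpNorm (adPadic p g)) (@Norm.norm _ ContinuousLinearMap.hasOpNorm (adPadic p g⁻¹)))
    (σ : ℝ) (hσ : 1 < σ) :
    ∫⁻ x, ENNReal.ofReal (N x ^ (-σ)) ∂μ
      ≤ ENNReal.ofReal ((1 + (p : ℝ) ^ (2 - σ)) / (1 - (p : ℝ) ^ (1 - σ))) := by
  classical
  have hp2 : 2 ≤ p := (Fact.out : p.Prime).two_le
  have hp1 : (1:ℝ) < p := by exact_mod_cast (Fact.out : p.Prime).one_lt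
  have hp0 : (0:ℝ) < p := lt_trans one_pos hp1
  set Kb : Set (GL (Fin 2) ℚ_[p] ⧸ Subgroup.center (GL (Fin 2) ℚ_[p])) :=
    QuotientGroup.mk '' (Stmt11Aux.SK (p := p)) with hKbdef
  have hK1 : μ Kb = 1 := hμnorm
  -- the covering sets
  set C : ℕ → Set (GL (Fin 2) ℚ_[p] ⧸ Subgroup.center (GL (Fin 2) ℚ_[p])) :=
    fun n => ⋃ (a : Fin (n+1)) (j : Fin (p ^ (n - (a:ℕ)))),
      (QuotientGroup.mk (Stmt11Aux.repGL n (a:ℕ) (j:ℕ) : GL (Fin 2) ℚ_[p]) :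
        GL (Fin 2) ℚ_[p] ⧸ Subgroup.center (GL (Fin 2) ℚ_[p])) • Kb
    with hCdef
  set D : ℕ → Set (GL (Fin 2) ℚ_[p] ⧸ Subgroup.center (GL (Fin 2) ℚ_[p])) :=
    fun n => toMeasurable μ (C n) with hDdef
  have hCD : ∀ n, C n ⊆ D n := fun n => subset_toMeasurable μ (C n)
  have hDmeas : ∀ n, MeasurableSet (D n) := fun n => measurableSet_toMeasurable μ (C n)
  -- measure bound
  have hμC : ∀ n, μ (C n) ≤ ((Finset.range (n+1)).sum (fun a => p ^ (n - a)) : ℕ) := by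
    intro n
    refine le_trans (measure_iUnion_le _) ?_
    have hterm : ∀ a : Fin (n+1),
        μ (⋃ (j : Fin (p ^ (n - (a:ℕ)))),
          (QuotientGroup.mk (Stmt11Aux.repGL n (a:ℕ) (j:ℕ) : GL (Fin 2) ℚ_[p]) :
            GL (Fin 2) ℚ_[p] ⧸ Subgroup.center (GL (Fin 2) ℚ_[p])) • Kb)
          ≤ ((p ^ (n - (a:ℕ)) : ℕ) : ENNReal) := by
      intro a
      refine le_trans (measure_iUnion_le _) ?_
      have heq : ∀ j : Fin (p ^ (n - (a:ℕ))),
          μ ((QuotientGroup.mk (Stmt11Aux.repGL n (a:ℕ) (j:ℕ) : GL (Fin 2) ℚ_[p]) :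
            GL (Fin 2) ℚ_[p] ⧸ Subgroup.center (GL (Fin 2) ℚ_[p])) • Kb)
            = 1 := by
        intro j
        rw [measure_smul, hK1]
      rw [tsum_congr heq]
      simp [tsum_fintype]
    refine le_trans (Summable.tsum_le_tsum hterm ENNReal.summable ENNReal.summable) ?_
    rw [tsum_fintype, Nat.cast_sum]
    exact le_of_eq (Fin.sum_univ_eq_sum_range (fun a => ((p ^ (n - a) : ℕ) : ENNReal)) (n+1))
  -- pointwise bound
  have hpoint : ∀ x, ENNReal.ofReal (N x ^ (-σ)) ≤
      ∑' n : ℕ, (D n).indicator (fun _ => ENNReal.ofReal ((p:ℝ) ^ (-(n:ℝ) * σ))) x := by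
    intro x
    obtain ⟨g, rfl⟩ := QuotientGroup.mk_surjective x
    obtain ⟨n, a, j, h, k, han, hjlt, hmk, hlow, hkSK, hfact⟩ := Stmt11Aux.main g
    have hNval : N (QuotientGroup.mk g) = max (@Norm.norm _ ContinuousLinearMap.hasOpNorm (adPadic p h)) (@Norm.norm _ ContinuousLinearMap.hasOpNorm (adPadic p h⁻¹)) := by
      rw [← hmk]; exact hN h
    have hNge : (p:ℝ) ^ (n:ℤ) ≤ N (QuotientGroup.mk g) := by
      rw [hNval]; exact le_trans hlow (le_max_left _ _)
    have hmem : (QuotientGroup.mk g : GL (Fin 2) ℚ_[p] ⧸ Subgroup.center (GL (Fin 2) ℚ_[p]))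
        ∈ D n := by
      refine hCD n ?_
      refine Set.mem_iUnion.mpr ⟨⟨a, by omega⟩, Set.mem_iUnion.mpr ⟨⟨j, hjlt⟩, ?_⟩⟩
      refine Set.mem_smul_set.mpr ⟨QuotientGroup.mk k, ⟨k, hkSK, rfl⟩, ?_⟩
      show (QuotientGroup.mk (Stmt11Aux.repGL n a j : GL (Fin 2) ℚ_[p]) :
          GL (Fin 2) ℚ_[p] ⧸ Subgroup.center (GL (Fin 2) ℚ_[p])) • (QuotientGroup.mk k :
          GL (Fin 2) ℚ_[p] ⧸ Subgroup.center (GL (Fin 2) ℚ_[p])) = QuotientGroup.mk g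
      rw [smul_eq_mul, ← QuotientGroup.mk_mul, ← hfact, hmk]
    have hval : N (QuotientGroup.mk g) ^ (-σ) ≤ (p:ℝ) ^ (-(n:ℝ) * σ) := by
      have h1 : ((p:ℝ) ^ (n:ℤ)) ^ (-σ) = (p:ℝ) ^ (-(n:ℝ) * σ) := by
        rw [zpow_natCast, ← Real.rpow_natCast (p:ℝ) n, ← Real.rpow_mul hp0.le]
        ring_nf
      rw [← h1]
      exact Real.rpow_le_rpow_of_nonpos (zpow_pos hp0 _) hNge (by linarith)
    calc ENNReal.ofReal (N (QuotientGroup.mk g) ^ (-σ))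
        ≤ ENNReal.ofReal ((p:ℝ) ^ (-(n:ℝ) * σ)) := ENNReal.ofReal_le_ofReal hval
      _ = (D n).indicator (fun _ => ENNReal.ofReal ((p:ℝ) ^ (-(n:ℝ) * σ)))
            (QuotientGroup.mk g) :=
          (Set.indicator_of_mem hmem (fun _ => ENNReal.ofReal ((p:ℝ) ^ (-(n:ℝ) * σ)))).symm
      _ ≤ ∑' m : ℕ, (D m).indicator (fun _ => ENNReal.ofReal ((p:ℝ) ^ (-(m:ℝ) * σ)))
            (QuotientGroup.mk g) := ENNReal.le_tsum n
  -- integrate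
  have hint : ∫⁻ x, ENNReal.ofReal (N x ^ (-σ)) ∂μ ≤
      ∑' n : ℕ, ENNReal.ofReal ((p:ℝ) ^ (-(n:ℝ) * σ)) * μ (D n) := by
    calc ∫⁻ x, ENNReal.ofReal (N x ^ (-σ)) ∂μ
        ≤ ∫⁻ x, ∑' n : ℕ, (D n).indicator
            (fun _ => ENNReal.ofReal ((p:ℝ) ^ (-(n:ℝ) * σ))) x ∂μ := lintegral_mono hpoint
      _ = ∑' n : ℕ, ∫⁻ x, (D n).indicator
            (fun _ => ENNReal.ofReal ((p:ℝ) ^ (-(n:ℝ) * σ))) x ∂μ :=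
          lintegral_tsum (fun n => ((measurable_const.indicator (hDmeas n))).aemeasurable)
      _ = ∑' n : ℕ, ENNReal.ofReal ((p:ℝ) ^ (-(n:ℝ) * σ)) * μ (D n) :=
          tsum_congr (fun n => lintegral_indicator_const (hDmeas n) _)
  -- series bound
  set t' : ℝ := (p:ℝ) ^ ((1:ℝ) - σ) with ht'def
  have ht'pos : 0 < t' := Real.rpow_pos_of_pos hp0 _
  have ht'lt : t' < 1 := Real.rpow_lt_one_of_one_lt_of_neg hp1 (by linarith)
  set t : ENNReal := ENNReal.ofReal t' with htdef
  have hreal : ∀ n : ℕ, ((p:ℝ) ^ (n:ℕ)) * (p:ℝ) ^ (-(n:ℝ) * σ) = t' ^ n := by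
    intro n
    rw [← Real.rpow_natCast (p:ℝ) n, ← Real.rpow_add hp0, ← Real.rpow_natCast t' n, ht'def,
      ← Real.rpow_mul hp0.le]
    congr 1
    ring
  have htn : ∀ n : ℕ, ((p ^ n : ℕ) : ENNReal) * ENNReal.ofReal ((p:ℝ) ^ (-(n:ℝ) * σ)) = t ^ n := by
    intro n
    rw [show ((p ^ n : ℕ) : ENNReal) = ENNReal.ofReal ((p:ℝ) ^ (n:ℕ)) by
        rw [← ENNReal.ofReal_natCast (p ^ n)]; push_cast; rfl,
      ← ENNReal.ofReal_mul (by positivity), hreal n, htdef,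
      ← ENNReal.ofReal_pow ht'pos.le]
  have hμD : ∀ n, μ (D n) ≤ ((Finset.range (n+1)).sum (fun a => p ^ (n - a)) : ℕ) := by
    intro n
    rw [hDdef]
    rw [measure_toMeasurable]
    exact hμC n
  have hA0 : ENNReal.ofReal ((p:ℝ) ^ (-((0:ℕ):ℝ) * σ)) * μ (D 0) ≤ 1 := by
    have hμD0 : μ (D 0) ≤ 1 := by
      refine le_trans (hμD 0) ?_
      norm_num
    calc ENNReal.ofReal ((p:ℝ) ^ (-((0:ℕ):ℝ) * σ)) * μ (D 0)
        ≤ ENNReal.ofReal ((p:ℝ) ^ (-((0:ℕ):ℝ) * σ)) * 1 :=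
          mul_le_mul_right hμD0 _
      _ = 1 := by norm_num
  have hAn : ∀ n : ℕ, ENNReal.ofReal ((p:ℝ) ^ (-((n+1:ℕ):ℝ) * σ)) * μ (D (n+1))
      ≤ 2 * t ^ (n+1) := by
    intro n
    calc ENNReal.ofReal ((p:ℝ) ^ (-((n+1:ℕ):ℝ) * σ)) * μ (D (n+1))
        ≤ ENNReal.ofReal ((p:ℝ) ^ (-((n+1:ℕ):ℝ) * σ)) *
            ((2 * p ^ (n+1) : ℕ) : ENNReal) := by
          refine mul_le_mul_right (le_trans (hμD (n+1)) ?_) _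
          exact_mod_cast Nat.cast_le.mpr (Stmt11Aux.count_le hp2 (n+1))
      _ = 2 * (((p ^ (n+1) : ℕ) : ENNReal) *
            ENNReal.ofReal ((p:ℝ) ^ (-((n+1:ℕ):ℝ) * σ))) := by
          push_cast
          ring
      _ = 2 * t ^ (n+1) := by rw [htn (n+1)]
  calc ∫⁻ x, ENNReal.ofReal (N x ^ (-σ)) ∂μ
      ≤ ∑' n : ℕ, ENNReal.ofReal ((p:ℝ) ^ (-(n:ℝ) * σ)) * μ (D n) := hint
    _ = ENNReal.ofReal ((p:ℝ) ^ (-((0:ℕ):ℝ) * σ)) * μ (D 0) +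
        ∑' n : ℕ, ENNReal.ofReal ((p:ℝ) ^ (-((n+1:ℕ):ℝ) * σ)) * μ (D (n+1)) := by
        exact tsum_eq_zero_add' ENNReal.summable
    _ ≤ 1 + ∑' n : ℕ, 2 * t ^ (n+1) := add_le_add hA0 (ENNReal.tsum_le_tsum hAn)
    _ = 1 + (2 * t) * ∑' n : ℕ, t ^ n := by
        rw [← ENNReal.tsum_mul_left]
        congr 1
        refine tsum_congr (fun n => ?_)
        rw [pow_succ]
        ring
    _ = 1 + 2 * t * (1 - t)⁻¹ := by rw [ENNReal.tsum_geometric]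
    _ ≤ ENNReal.ofReal ((1 + (p : ℝ) ^ (2 - σ)) / (1 - (p : ℝ) ^ (1 - σ))) := by
        have h1t : (1:ENNReal) - t = ENNReal.ofReal (1 - t') := by
          rw [ENNReal.ofReal_sub 1 ht'pos.le, ENNReal.ofReal_one]
        have hinv : ((1:ENNReal) - t)⁻¹ = ENNReal.ofReal ((1 - t')⁻¹) := by
          rw [h1t, ← ENNReal.ofReal_inv_of_pos (by linarith)]
        have hinvnn : (0:ℝ) ≤ (1 - t')⁻¹ := inv_nonneg.mpr (by linarith)
        have hlhs : 1 + 2 * t * (1 - t)⁻¹ =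
            ENNReal.ofReal (1 + 2 * t' * (1 - t')⁻¹) := by
          rw [hinv, htdef, ENNReal.ofReal_add (by norm_num)
              (by nlinarith [ht'pos.le]),
            ENNReal.ofReal_one, ENNReal.ofReal_mul (by nlinarith [ht'pos.le]),
            ENNReal.ofReal_mul (by norm_num), ENNReal.ofReal_ofNat]
        rw [hlhs]
        refine ENNReal.ofReal_le_ofReal ?_
        have hpt : (p:ℝ) ^ ((2:ℝ) - σ) = p * t' := by
          rw [ht'def, show (2:ℝ) - σ = 1 + (1-σ) by ring, Real.rpow_add hp0, Real.rpow_one]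
        rw [hpt, le_div_iff₀ (by linarith)]
        have hne : (1:ℝ) - t' ≠ 0 := by linarith
        have hexp : (1 + 2*t'*(1-t')⁻¹) * (1-t') = 1 + t' := by
          field_simp
          ring
        rw [hexp]
        nlinarith [ht'pos.le, hp1]
end
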